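/- arXiv:1411.4951 — 10 statements merged into one kernel-verified Lean document; each statement's English description precedes it below -/
import Mathlib

section
/- Let ψ: ℂ → ℝ be continuous and let 𝔭 = (p₁,…,p_ℓ) and 𝔮 = (q₁,…,q_ℓ) be two ℓ-tuples of distinct points of ℂ. Then 𝓕_ψ(𝔭) = ((z−p₁)⋯(z−p_ℓ))/((z−q₁)⋯(z−q_ℓ)) · 𝓕_ψ(𝔮); precisely, an entire function f belongs to 𝓕_ψ(𝔭) if and only if there exists g ∈ 𝓕_ψ(𝔮) with f(z)·(z−q₁)⋯(z−q_ℓ) = g(z)·(z−p₁)⋯(z−p_ℓ) for all z ∈ ℂ. -/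
open MeasureTheory

/-- Division lemma: entire `f` vanishing at the distinct points `p i` factors as
`f z = h z * ∏ (z - p i)` with `h` entire. -/
lemma factor_out (ℓ : ℕ) : ∀ (p : Fin ℓ → ℂ) (f : ℂ → ℂ), Function.Injective p →
    Differentiable ℂ f → (∀ i, f (p i) = 0) →
    ∃ h : ℂ → ℂ, Differentiable ℂ h ∧ ∀ z, f z = h z * ∏ i, (z - p i) := by
  induction ℓ with
  | zero => intro p f _ hf _; exact ⟨f, hf, fun z => by simp⟩
  | succ n ih =>
    intro p f hp hf hz
    set a := p (Fin.last n)
    have hd : Differentiable ℂ (dslope f a) := by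
      rw [← differentiableOn_univ] at hf ⊢
      exact (Complex.differentiableOn_dslope (Filter.univ_mem)).2 hf
    have hzero : ∀ i : Fin n, dslope f a (p i.castSucc) = 0 := by
      intro i
      have hne : p i.castSucc ≠ a := fun h => by
        have := hp h
        exact absurd this (Fin.castSucc_lt_last i).ne
      rw [dslope_of_ne f hne, slope_def_field, hz, hz, sub_zero, zero_div]
    obtain ⟨h, hh, heq⟩ := ih (fun i => p i.castSucc) (dslope f a)
      (fun i j hij => Fin.castSucc_injective n (hp hij)) hd hzero
    refine ⟨h, hh, fun z => ?_⟩
    have key : (z - a) • dslope f a z = f z - f a := sub_smul_dslope f a z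
    rw [smul_eq_mul] at key
    have : f z = (z - a) * dslope f a z := by
      rw [key, hz (Fin.last n), sub_zero]
    rw [this, heq z, Fin.prod_univ_castSucc]
    ring

/-- Integral transfer lemma. -/
lemma integral_transfer (ψ : ℂ → ℝ) (hψ : Continuous ψ) (ℓ : ℕ) (p q : Fin ℓ → ℂ)
    (h : ℂ → ℂ) (hh : Differentiable ℂ h)
    (hfin : (∫⁻ z : ℂ, ENNReal.ofReal
      (‖h z * ∏ i, (z - p i)‖ ^ 2 * Real.exp (-2 * ψ z))) < ⊤) :
    (∫⁻ z : ℂ, ENNReal.ofReal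
      (‖h z * ∏ i, (z - q i)‖ ^ 2 * Real.exp (-2 * ψ z))) < ⊤ := by
  set R : ℝ := 1 + ∑ i, (2 * ‖p i‖ + ‖q i‖) with hR
  have hR0 : 0 ≤ R := by positivity
  -- continuity of the integrand for q
  have hG : Continuous fun z => ‖h z * ∏ i, (z - q i)‖ ^ 2 * Real.exp (-2 * ψ z) := by
    apply Continuous.mul
    · exact ((continuous_norm.comp (hh.continuous.mul (by continuity))).pow 2)
    · exact Real.continuous_exp.comp (by continuity)
  -- bound on the closed ball
  obtain ⟨C, hC⟩ := (isCompact_closedBall (0:ℂ) R).exists_bound_of_continuousOn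
    hG.continuousOn
  -- pointwise estimate
  have key : ∀ z : ℂ,
      ENNReal.ofReal (‖h z * ∏ i, (z - q i)‖ ^ 2 * Real.exp (-2 * ψ z)) ≤
      (Metric.closedBall (0:ℂ) R).indicator (fun _ => ENNReal.ofReal C) z +
        ENNReal.ofReal (4 ^ ℓ) *
          ENNReal.ofReal (‖h z * ∏ i, (z - p i)‖ ^ 2 * Real.exp (-2 * ψ z)) := by
    intro z
    by_cases hzR : z ∈ Metric.closedBall (0:ℂ) R
    · rw [Set.indicator_of_mem hzR]
      refine le_add_of_le_of_nonneg ?_ (by positivity)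
      exact ENNReal.ofReal_le_ofReal (by simpa using hC z hzR)
    · rw [Set.indicator_of_notMem hzR]
      rw [zero_add, ← ENNReal.ofReal_mul (by positivity)]
      apply ENNReal.ofReal_le_ofReal
      have hz : R ≤ ‖z‖ := by
        simp only [Metric.mem_closedBall, Complex.dist_eq, sub_zero, not_le] at hzR
        exact hzR.le
      have hterm : ∀ i, ‖z - q i‖ ≤ 2 * ‖z - p i‖ := by
        intro i
        have h1 : ‖z - q i‖ ≤ ‖z‖ + ‖q i‖ := by
          simpa [sub_eq_add_neg] using norm_add_le z (-(q i))
        have h2 : ‖z‖ - ‖p i‖ ≤ ‖z - p i‖ := by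
          have := norm_add_le (z - p i) (p i)
          simp only [sub_add_cancel] at this
          linarith
        have hi : 2 * ‖p i‖ + ‖q i‖ ≤
            ∑ j, (2 * ‖p j‖ + ‖q j‖) :=
          Finset.single_le_sum (f := fun j => 2 * ‖p j‖ + ‖q j‖)
            (fun j _ => by positivity) (Finset.mem_univ i)
        nlinarith [hz, hR]
      have hprod : ‖∏ i, (z - q i)‖ ≤ 2 ^ ℓ * ‖∏ i, (z - p i)‖ := by
        rw [norm_prod, norm_prod]
        calc (∏ i, ‖z - q i‖) ≤ ∏ i, (2 * ‖z - p i‖) :=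
              Finset.prod_le_prod (fun i _ => by positivity) (fun i _ => hterm i)
          _ = 2 ^ ℓ * ∏ i, ‖z - p i‖ := by
              rw [Finset.prod_mul_distrib]; simp
      have habs : ‖h z * ∏ i, (z - q i)‖ ^ 2 ≤
          4 ^ ℓ * ‖h z * ∏ i, (z - p i)‖ ^ 2 := by
        rw [norm_mul, norm_mul, mul_pow, mul_pow]
        have : ‖∏ i, (z - q i)‖ ^ 2 ≤ 4 ^ ℓ * ‖∏ i, (z - p i)‖ ^ 2 := by
          have h4 : (4:ℝ) ^ ℓ = (2 ^ ℓ) ^ 2 := by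
            rw [show (4:ℝ) = 2 ^ 2 by norm_num, ← pow_mul, ← pow_mul, Nat.mul_comm]
          rw [h4, ← mul_pow]
          exact pow_le_pow_left₀ (norm_nonneg _) hprod 2
        nlinarith [norm_nonneg (h z), sq_nonneg (‖h z‖)]
      nlinarith [Real.exp_pos (-2 * ψ z), habs]
  calc (∫⁻ z : ℂ, ENNReal.ofReal
        (‖h z * ∏ i, (z - q i)‖ ^ 2 * Real.exp (-2 * ψ z)))
      ≤ ∫⁻ z : ℂ, ((Metric.closedBall (0:ℂ) R).indicator (fun _ => ENNReal.ofReal C) z +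
        ENNReal.ofReal (4 ^ ℓ) *
          ENNReal.ofReal (‖h z * ∏ i, (z - p i)‖ ^ 2 * Real.exp (-2 * ψ z))) :=
        lintegral_mono key
    _ = (∫⁻ z : ℂ, (Metric.closedBall (0:ℂ) R).indicator (fun _ => ENNReal.ofReal C) z) +
        ∫⁻ z : ℂ, ENNReal.ofReal (4 ^ ℓ) *
          ENNReal.ofReal (‖h z * ∏ i, (z - p i)‖ ^ 2 * Real.exp (-2 * ψ z)) :=
        lintegral_add_left (measurable_const.indicator measurableSet_closedBall) _
    _ < ⊤ := by
        rw [lintegral_indicator measurableSet_closedBall, lintegral_const_mul'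
          _ _ ENNReal.ofReal_ne_top]
        apply ENNReal.add_lt_top.2
        constructor
        · rw [lintegral_const, Measure.restrict_apply_univ]
          exact ENNReal.mul_lt_top ENNReal.ofReal_lt_top measure_closedBall_lt_top
        · exact ENNReal.mul_lt_top ENNReal.ofReal_lt_top hfin

/-- For continuous `ψ : ℂ → ℝ` and two `ℓ`-tuples `p`, `q` of distinct points
of `ℂ`, an entire function `f` belongs to the Palm subspace `𝓕_ψ(p)` of the generalized
Fock space if and only if there is `g ∈ 𝓕_ψ(q)` with
`f z * ∏ (z - q i) = g z * ∏ (z - p i)` for all `z`. -/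
theorem stmt0 (ψ : ℂ → ℝ) (hψ : Continuous ψ) (ℓ : ℕ) (p q : Fin ℓ → ℂ)
    (hp : Function.Injective p) (hq : Function.Injective q)
    (f : ℂ → ℂ) (hf : Differentiable ℂ f) :
    ((∫⁻ z : ℂ, ENNReal.ofReal (‖f z‖ ^ 2 * Real.exp (-2 * ψ z))) < ⊤ ∧
      ∀ i, f (p i) = 0) ↔
    (∃ g : ℂ → ℂ, Differentiable ℂ g ∧
      (∫⁻ z : ℂ, ENNReal.ofReal (‖g z‖ ^ 2 * Real.exp (-2 * ψ z))) < ⊤ ∧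
      (∀ i, g (q i) = 0) ∧
      ∀ z : ℂ, f z * ∏ i, (z - q i) = g z * ∏ i, (z - p i)) := by
  constructor
  · rintro ⟨hfin, hzero⟩
    obtain ⟨h, hh, heq⟩ := factor_out ℓ p f hp hf hzero
    refine ⟨fun z => h z * ∏ i, (z - q i), hh.mul (by
      apply Differentiable.fun_finsetProd
      intro i _; exact differentiable_id.sub_const _), ?_, ?_, ?_⟩
    · apply integral_transfer ψ hψ ℓ p q h hh
      have : ∀ z : ℂ, ‖h z * ∏ i, (z - p i)‖ = ‖f z‖ := fun z => by
        rw [← heq z]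
      simpa only [this] using hfin
    · intro i; simp [Finset.prod_eq_zero (Finset.mem_univ i)]
    · intro z; rw [heq z]; ring
  · rintro ⟨g, hg, hgfin, hgzero, hfg⟩
    obtain ⟨h, hh, heq⟩ := factor_out ℓ q g hq hg hgzero
    -- f = h * ∏ (z - p i) off the zero set of ∏(z - q i), hence everywhere
    have hkey : f = fun z => h z * ∏ i, (z - p i) := by
      apply Continuous.ext_on ((Set.finite_range q).countable.dense_compl ℂ) hf.continuous
        (hh.continuous.mul (by continuity))
      intro z hz
      have hq0 : (∏ i, (z - q i)) ≠ 0 := by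
        rw [Finset.prod_ne_zero_iff]
        intro i _
        intro hcon
        exact hz ⟨i, by linear_combination -hcon⟩
      have hthis := hfg z
      rw [heq z] at hthis
      exact mul_right_cancel₀ hq0 (by simp only [Pi.mul_apply]; linear_combination hthis)
    constructor
    · rw [hkey]
      apply integral_transfer ψ hψ ℓ q p h hh
      have : ∀ z : ℂ, ‖h z * ∏ i, (z - q i)‖ = ‖g z‖ := fun z => by
        rw [← heq z]
      simpa only [this] using hgfin
    · intro i
      rw [hkey]
      simp [Finset.prod_eq_zero (Finset.mem_univ i)]
end

section
/- Let ω: 𝔻 → (0,∞) be a Lebesgue-integrable weight, let ℓ, k ≥ 0, and let 𝔭 = (p₁,…,p_ℓ) ∈ 𝔻^ℓ and 𝔮 = (q₁,…,q_k) ∈ 𝔻^k be tuples of distinct points of 𝔻. Then 𝓑_ω(𝔭) = b_𝔭 · b_𝔮^{−1} · 𝓑_ω(𝔮); precisely, a holomorphic function f on 𝔻 belongs to 𝓑_ω(𝔭) if and only if there exists g ∈ 𝓑_ω(𝔮) with f(z)·b_𝔮(z) = g(z)·b_𝔭(z) for all z ∈ 𝔻. In particular (taking k = 0), 𝓑_ω(𝔭)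 = b_𝔭 · 𝓑_ω. -/
open MeasureTheory


private lemma mem_disc_abs {z : ℂ} (hz : z ∈ Metric.ball (0:ℂ) 1) : ‖z‖ < 1 := by
  simpa [Complex.dist_eq] using hz

private lemma denom_ne {a z : ℂ} (ha : a ∈ Metric.ball (0:ℂ) 1) (hz : z ∈ Metric.ball (0:ℂ) 1) :
    1 - (starRingEnd ℂ) a * z ≠ 0 := by
  intro h
  have h1 : (starRingEnd ℂ) a * z = 1 := by linear_combination -h
  have h2 : ‖(starRingEnd ℂ) a * z‖ = ‖(1:ℂ)‖ := by rw [h1]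
  rw [norm_mul, norm_one, Complex.norm_conj] at h2
  nlinarith [mem_disc_abs ha, mem_disc_abs hz, norm_nonneg a, norm_nonneg z]

private lemma key_identity (a z : ℂ) :
    Complex.normSq (1 - (starRingEnd ℂ) a * z) - Complex.normSq (z - a)
      = (1 - Complex.normSq a) * (1 - Complex.normSq z) := by
  simp only [Complex.normSq_apply, Complex.sub_re, Complex.sub_im, Complex.mul_re,
    Complex.mul_im, Complex.conj_re, Complex.conj_im, Complex.one_re, Complex.one_im]
  ring

private lemma blaschke_factor_abs_le {a z : ℂ} (ha : a ∈ Metric.ball (0:ℂ) 1)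
    (hz : z ∈ Metric.ball (0:ℂ) 1) :
    ‖(z - a) / (1 - (starRingEnd ℂ) a * z)‖ ≤ 1 := by
  rw [norm_div]
  have hne := denom_ne ha hz
  have hpos : 0 < ‖1 - (starRingEnd ℂ) a * z‖ := by
    simpa [norm_pos_iff] using hne
  rw [div_le_one hpos]
  have ha1 : Complex.normSq a < 1 := by
    have := mem_disc_abs ha
    nlinarith [Complex.sq_norm a, norm_nonneg a]
  have hz1 : Complex.normSq z < 1 := by
    have := mem_disc_abs hz
    nlinarith [Complex.sq_norm z, norm_nonneg z]
  have key := key_identity a z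
  nlinarith [Complex.sq_norm (z - a), Complex.sq_norm (1 - (starRingEnd ℂ) a * z),
    norm_nonneg (z - a), hpos]

private lemma blaschke_prod_abs_le {n : ℕ} {p : Fin n → ℂ} (hpD : ∀ i, p i ∈ Metric.ball (0:ℂ) 1)
    {z : ℂ} (hz : z ∈ Metric.ball (0:ℂ) 1) :
    ‖∏ j, ((z - p j) / (1 - (starRingEnd ℂ) (p j) * z))‖ ≤ 1 := by
  rw [norm_prod]
  refine Finset.prod_le_one (fun i _ => norm_nonneg _)
    (fun i _ => blaschke_factor_abs_le (hpD i) hz)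

private lemma blaschke_diff {n : ℕ} {p : Fin n → ℂ} (hpD : ∀ i, p i ∈ Metric.ball (0:ℂ) 1) :
    DifferentiableOn ℂ (fun z => ∏ j, ((z - p j) / (1 - (starRingEnd ℂ) (p j) * z)))
      (Metric.ball (0:ℂ) 1) := by
  apply DifferentiableOn.fun_finsetProd
  intro i _
  apply DifferentiableOn.div
  · exact (differentiable_id.sub_const _).differentiableOn
  · exact ((differentiable_const _).sub (differentiable_id.const_mul _)).differentiableOn
  · exact fun z hz => denom_ne (hpD i) hz

private lemma blaschke_prod_ne_zero {n : ℕ} {p : Fin n → ℂ} (hpD : ∀ i, p i ∈ Metric.ball (0:ℂ) 1)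
    {z : ℂ} (hz : z ∈ Metric.ball (0:ℂ) 1) (hzp : ∀ j, z ≠ p j) :
    ∏ j, ((z - p j) / (1 - (starRingEnd ℂ) (p j) * z)) ≠ 0 := by
  rw [Finset.prod_ne_zero_iff]
  intro i _
  exact div_ne_zero (sub_ne_zero.2 (hzp i)) (denom_ne (hpD i) hz)

private lemma omega_lint_lt_top {ω : ℂ → ℝ}
    (hω_int : IntegrableOn ω (Metric.ball (0:ℂ) 1)) :
    ∫⁻ z in Metric.ball (0:ℂ) 1, ENNReal.ofReal (ω z) < ⊤ := by
  refine lt_of_le_of_lt (lintegral_mono fun z => Real.ofReal_le_enorm _) hω_int.2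

private lemma L2_mul_le (ω : ℂ → ℝ) (hω_pos : ∀ z ∈ Metric.ball (0:ℂ) 1, 0 < ω z)
    {h b : ℂ → ℂ} (hb : ∀ z ∈ Metric.ball (0:ℂ) 1, ‖b z‖ ≤ 1)
    (hL2 : (∫⁻ z in Metric.ball (0:ℂ) 1, ENNReal.ofReal (‖h z‖ ^ 2 * ω z)) < ⊤) :
    (∫⁻ z in Metric.ball (0:ℂ) 1, ENNReal.ofReal (‖h z * b z‖ ^ 2 * ω z)) < ⊤ := by
  refine lt_of_le_of_lt ?_ hL2
  apply lintegral_mono_ae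
  rw [ae_restrict_iff' measurableSet_ball]
  filter_upwards with z
  intro hz
  apply ENNReal.ofReal_le_ofReal
  have h1 := hb z hz
  have h2 := (hω_pos z hz).le
  rw [norm_mul]
  have h3 : ‖b z‖ ^ 2 ≤ 1 := by nlinarith [norm_nonneg (b z)]
  rw [mul_pow]
  nlinarith [sq_nonneg (‖h z‖), mul_nonneg (sq_nonneg (‖h z‖)) h2,
    mul_le_mul_of_nonneg_left h3 (sq_nonneg (‖h z‖))]

private lemma divide_one (ω : ℂ → ℝ) (hω_pos : ∀ z ∈ Metric.ball (0:ℂ) 1, 0 < ω z)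
    (hω_int : IntegrableOn ω (Metric.ball (0:ℂ) 1))
    {a : ℂ} (ha : a ∈ Metric.ball (0:ℂ) 1) {f : ℂ → ℂ}
    (hf : DifferentiableOn ℂ f (Metric.ball 0 1)) (hfa : f a = 0)
    (hL2 : (∫⁻ z in Metric.ball (0:ℂ) 1, ENNReal.ofReal (‖f z‖ ^ 2 * ω z)) < ⊤) :
    ∃ h : ℂ → ℂ, DifferentiableOn ℂ h (Metric.ball 0 1) ∧
      (∫⁻ z in Metric.ball (0:ℂ) 1, ENNReal.ofReal (‖h z‖ ^ 2 * ω z)) < ⊤ ∧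
      ∀ z ∈ Metric.ball (0:ℂ) 1, f z = h z * ((z - a) / (1 - (starRingEnd ℂ) a * z)) := by
  have hball : Metric.ball (0:ℂ) 1 ∈ nhds a := Metric.isOpen_ball.mem_nhds ha
  set h : ℂ → ℂ := fun z => dslope f a z * (1 - (starRingEnd ℂ) a * z) with hh
  have hds : DifferentiableOn ℂ (dslope f a) (Metric.ball 0 1) :=
    (Complex.differentiableOn_dslope hball).2 hf
  have hdiff : DifferentiableOn ℂ h (Metric.ball 0 1) :=
    hds.mul ((differentiable_const _).sub (differentiable_id.const_mul _)).differentiableOn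
  have hrel : ∀ z ∈ Metric.ball (0:ℂ) 1, f z = h z * ((z - a) / (1 - (starRingEnd ℂ) a * z)) := by
    intro z hz
    rcases eq_or_ne z a with rfl | hne
    · simp [hh, hfa]
    · rw [hh]
      simp only []
      rw [dslope_of_ne f hne, slope_def_field]
      have h1 : z - a ≠ 0 := sub_ne_zero.2 hne
      have h2 := denom_ne ha hz
      field_simp [hfa]
      rw [hfa, sub_zero, mul_div_assoc, div_self (by rwa [mul_comm]), mul_one]
  -- integrability
  have habs : ‖a‖ < 1 := mem_disc_abs ha
  set r : ℝ := (1 - ‖a‖) / 2 with hr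
  have hr0 : 0 < r := by rw [hr]; linarith
  have hsub : Metric.closedBall a r ⊆ Metric.ball (0:ℂ) 1 := by
    intro z hz
    rw [Metric.mem_closedBall, Complex.dist_eq] at hz
    rw [mem_ball_zero_iff]
    calc ‖z‖ = ‖(z - a) + a‖ := by norm_num
    _ ≤ ‖z - a‖ + ‖a‖ := norm_add_le _ _
    _ ≤ r + ‖a‖ := by linarith
    _ < 1 := by rw [hr]; linarith
  obtain ⟨M, hM⟩ := (isCompact_closedBall a r).exists_bound_of_continuousOn
    ((hdiff.continuousOn).mono hsub)
  -- pointwise bound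
  have hpt : ∀ z ∈ Metric.ball (0:ℂ) 1,
      ‖h z‖ ^ 2 * ω z
        ≤ M ^ 2 * ω z + (2 / r) ^ 2 * (‖f z‖ ^ 2 * ω z) := by
    intro z hz
    have hω := (hω_pos z hz).le
    by_cases hcb : z ∈ Metric.closedBall a r
    · have h1 : ‖h z‖ ≤ M := by simpa using hM z hcb
      have h2 : 0 ≤ (2 / r) ^ 2 * (‖f z‖ ^ 2 * ω z) := by positivity
      nlinarith [norm_nonneg (h z), mul_le_mul_of_nonneg_right
        (mul_le_mul h1 h1 (norm_nonneg _) ((norm_nonneg _).trans h1)) hω]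
    · rw [Metric.mem_closedBall, Complex.dist_eq, not_le] at hcb
      -- |h z| ≤ (2/r) |f z|
      have hzne : z ≠ a := by
        intro hzz; rw [hzz] at hcb; simp at hcb; linarith
      have hfac : ‖f z‖
          = ‖h z‖ * (‖z - a‖ / ‖1 - (starRingEnd ℂ) a * z‖) := by
        rw [hrel z hz]; rw [norm_mul, norm_div]
      have hden : ‖1 - (starRingEnd ℂ) a * z‖ ≤ 2 := by
        calc ‖1 - (starRingEnd ℂ) a * z‖
            ≤ ‖(1:ℂ)‖ + ‖(starRingEnd ℂ) a * z‖ := by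
              rw [sub_eq_add_neg]
              exact le_trans (norm_add_le _ _) (by rw [norm_neg])
        _ ≤ 2 := by
            rw [norm_one, norm_mul, Complex.norm_conj]
            nlinarith [mem_disc_abs hz, norm_nonneg a, norm_nonneg z]
      have hdpos : 0 < ‖1 - (starRingEnd ℂ) a * z‖ := by
        simpa [norm_pos_iff] using denom_ne ha hz
      have hQ : r / 2 ≤ ‖z - a‖ / ‖1 - (starRingEnd ℂ) a * z‖ := by
        rw [div_le_div_iff₀ (by norm_num) hdpos]
        nlinarith [norm_nonneg (z - a)]
      have hhb : ‖h z‖ ≤ (2 / r) * ‖f z‖ := by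
        rw [hfac, div_mul_eq_mul_div, le_div_iff₀ hr0]
        nlinarith [mul_le_mul_of_nonneg_left hQ (norm_nonneg (h z))]
      have hM0 : 0 ≤ M := le_trans (norm_nonneg _) (hM a (Metric.mem_closedBall_self hr0.le))
      have hsq : ‖h z‖ ^ 2 ≤ (2 / r) ^ 2 * ‖f z‖ ^ 2 := by
        nlinarith [mul_le_mul hhb hhb (norm_nonneg _)
          (by positivity : (0:ℝ) ≤ 2 / r * ‖f z‖)]
      nlinarith [mul_le_mul_of_nonneg_right hsq hω, mul_nonneg (mul_nonneg hM0 hM0) hω]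
  -- assemble the integral bound
  refine ⟨h, hdiff, ?_, hrel⟩
  have hωmeas : AEMeasurable ω (volume.restrict (Metric.ball (0:ℂ) 1)) := hω_int.aemeasurable
  have step1 : (∫⁻ z in Metric.ball (0:ℂ) 1, ENNReal.ofReal (‖h z‖ ^ 2 * ω z))
      ≤ ∫⁻ z in Metric.ball (0:ℂ) 1,
        (ENNReal.ofReal (M ^ 2 * ω z)
          + ENNReal.ofReal ((2 / r) ^ 2 * (‖f z‖ ^ 2 * ω z))) := by
    apply lintegral_mono_ae
    rw [ae_restrict_iff' measurableSet_ball]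
    filter_upwards with z
    intro hz
    exact le_trans (ENNReal.ofReal_le_ofReal (hpt z hz)) ENNReal.ofReal_add_le
  have step2 : (∫⁻ z in Metric.ball (0:ℂ) 1,
        (ENNReal.ofReal (M ^ 2 * ω z)
          + ENNReal.ofReal ((2 / r) ^ 2 * (‖f z‖ ^ 2 * ω z))))
      = (∫⁻ z in Metric.ball (0:ℂ) 1, ENNReal.ofReal (M ^ 2 * ω z))
        + ∫⁻ z in Metric.ball (0:ℂ) 1, ENNReal.ofReal ((2 / r) ^ 2 * (‖f z‖ ^ 2 * ω z)) :=
    lintegral_add_left' ((hωmeas.const_mul _).ennreal_ofReal) _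
  have fin1 : (∫⁻ z in Metric.ball (0:ℂ) 1, ENNReal.ofReal (M ^ 2 * ω z)) < ⊤ := by
    have : ∀ z : ℂ, ENNReal.ofReal (M ^ 2 * ω z) = ENNReal.ofReal (M ^ 2) * ENNReal.ofReal (ω z) :=
      fun z => ENNReal.ofReal_mul (by positivity)
    simp only [this]
    rw [lintegral_const_mul' _ _ ENNReal.ofReal_ne_top]
    exact ENNReal.mul_lt_top ENNReal.ofReal_lt_top (omega_lint_lt_top hω_int)
  have fin2 : (∫⁻ z in Metric.ball (0:ℂ) 1,
      ENNReal.ofReal ((2 / r) ^ 2 * (‖f z‖ ^ 2 * ω z))) < ⊤ := by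
    have : ∀ z : ℂ, ENNReal.ofReal ((2 / r) ^ 2 * (‖f z‖ ^ 2 * ω z))
        = ENNReal.ofReal ((2 / r) ^ 2) * ENNReal.ofReal (‖f z‖ ^ 2 * ω z) :=
      fun z => ENNReal.ofReal_mul (by positivity)
    simp only [this]
    rw [lintegral_const_mul' _ _ ENNReal.ofReal_ne_top]
    exact ENNReal.mul_lt_top ENNReal.ofReal_lt_top hL2
  exact lt_of_le_of_lt step1 (by rw [step2]; exact ENNReal.add_lt_top.2 ⟨fin1, fin2⟩)

private lemma divide_many (ω : ℂ → ℝ) (hω_pos : ∀ z ∈ Metric.ball (0:ℂ) 1, 0 < ω z)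
    (hω_int : IntegrableOn ω (Metric.ball (0:ℂ) 1)) :
    ∀ (n : ℕ) (p : Fin n → ℂ), (∀ i, p i ∈ Metric.ball (0:ℂ) 1) → Function.Injective p →
    ∀ f : ℂ → ℂ, DifferentiableOn ℂ f (Metric.ball 0 1) →
    (∫⁻ z in Metric.ball (0:ℂ) 1, ENNReal.ofReal (‖f z‖ ^ 2 * ω z)) < ⊤ →
    (∀ i, f (p i) = 0) →
    ∃ h : ℂ → ℂ, DifferentiableOn ℂ h (Metric.ball 0 1) ∧
      (∫⁻ z in Metric.ball (0:ℂ) 1, ENNReal.ofReal (‖h z‖ ^ 2 * ω z)) < ⊤ ∧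
      ∀ z ∈ Metric.ball (0:ℂ) 1,
        f z = h z * ∏ j, ((z - p j) / (1 - (starRingEnd ℂ) (p j) * z)) := by
  intro n
  induction n with
  | zero =>
    intro p _ _ f hf hL2 _
    exact ⟨f, hf, hL2, fun z _ => by simp⟩
  | succ m ih =>
    intro p hpD hpinj f hf hL2 hz0
    obtain ⟨h₁, hd₁, hL₁, hrel₁⟩ :=
      divide_one ω hω_pos hω_int (hpD 0) hf (hz0 0) hL2
    have hzero₁ : ∀ i : Fin m, h₁ (p i.succ) = 0 := by
      intro i
      have hmem := hpD i.succ
      have := hrel₁ (p i.succ) hmem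
      rw [hz0 i.succ] at this
      have hfac : (p i.succ - p 0) / (1 - (starRingEnd ℂ) (p 0) * p i.succ) ≠ 0 :=
        div_ne_zero (sub_ne_zero.2 fun hh => (Fin.succ_ne_zero i) (hpinj hh))
          (denom_ne (hpD 0) hmem)
      exact (mul_eq_zero.1 this.symm).resolve_right hfac
    obtain ⟨h, hd, hL, hrel⟩ := ih (fun i => p i.succ)
      (fun i => hpD i.succ) (fun i j hij => Fin.succ_injective m (hpinj hij)) h₁ hd₁ hL₁ hzero₁
    refine ⟨h, hd, hL, fun z hz => ?_⟩
    rw [Fin.prod_univ_succ, hrel₁ z hz, hrel z hz]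
    ring


/-- For an integrable positive weight `ω` on the unit disc and tuples `p ∈ 𝔻^ℓ`,
`q ∈ 𝔻^k` of distinct points, a holomorphic function `f` on `𝔻` belongs to the Palm subspace
`𝓑_ω(p)` of the generalized Bergman space iff there exists `g ∈ 𝓑_ω(q)` with
`f z * b_q z = g z * b_p z` on `𝔻`, where `b_p(z) = ∏ (z - pⱼ)/(1 - conj(pⱼ) z)`. -/
theorem stmt1 (ω : ℂ → ℝ) (hω_pos : ∀ z ∈ Metric.ball (0 : ℂ) 1, 0 < ω z)
    (hω_int : IntegrableOn ω (Metric.ball (0 : ℂ) 1))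
    (ℓ k : ℕ) (p : Fin ℓ → ℂ) (q : Fin k → ℂ)
    (hpD : ∀ i, p i ∈ Metric.ball (0 : ℂ) 1) (hqD : ∀ i, q i ∈ Metric.ball (0 : ℂ) 1)
    (hp : Function.Injective p) (hq : Function.Injective q)
    (f : ℂ → ℂ) (hf : DifferentiableOn ℂ f (Metric.ball 0 1)) :
    ((∫⁻ z in Metric.ball (0 : ℂ) 1, ENNReal.ofReal (‖f z‖ ^ 2 * ω z)) < ⊤ ∧
      ∀ i, f (p i) = 0) ↔
    (∃ g : ℂ → ℂ, DifferentiableOn ℂ g (Metric.ball 0 1) ∧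
      (∫⁻ z in Metric.ball (0 : ℂ) 1, ENNReal.ofReal (‖g z‖ ^ 2 * ω z)) < ⊤ ∧
      (∀ i, g (q i) = 0) ∧
      ∀ z ∈ Metric.ball (0 : ℂ) 1,
        f z * ∏ j, ((z - q j) / (1 - (starRingEnd ℂ) (q j) * z)) =
        g z * ∏ j, ((z - p j) / (1 - (starRingEnd ℂ) (p j) * z))) := by
  constructor
  · rintro ⟨hL2, hzeros⟩
    obtain ⟨h, hd, hL, hrel⟩ := divide_many ω hω_pos hω_int ℓ p hpD hp f hf hL2 hzeros
    refine ⟨fun z => h z * ∏ j, ((z - q j) / (1 - (starRingEnd ℂ) (q j) * z)),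
      hd.mul (blaschke_diff hqD),
      L2_mul_le ω hω_pos (fun z hz => blaschke_prod_abs_le hqD hz) hL,
      fun i => ?_, fun z hz => ?_⟩
    · simp only
      rw [Finset.prod_eq_zero (Finset.mem_univ i) (by simp), mul_zero]
    · simp only
      rw [hrel z hz]
      ring
  · rintro ⟨g, hgd, hgL2, hgz, hrel⟩
    obtain ⟨h, hd, hL, hrelq⟩ := divide_many ω hω_pos hω_int k q hqD hq g hgd hgL2 hgz
    set F : ℂ → ℂ := fun z => h z * ∏ j, ((z - p j) / (1 - (starRingEnd ℂ) (p j) * z)) with hF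
    have hFd : DifferentiableOn ℂ F (Metric.ball 0 1) := hd.mul (blaschke_diff hpD)
    have hFf : ∀ z ∈ Metric.ball (0 : ℂ) 1, f z = F z := by
      intro z hz
      set S : Set ℂ := Set.range q \ {z} with hS
      have hSfin : S.Finite := (Set.finite_range q).subset Set.diff_subset
      have hUopen : IsOpen (Metric.ball (0 : ℂ) 1 \ S) := Metric.isOpen_ball.sdiff hSfin.isClosed
      have hzU : z ∈ Metric.ball (0 : ℂ) 1 \ S := ⟨hz, fun hzS => hzS.2 rfl⟩
      have heq : ∀ w ∈ Metric.ball (0 : ℂ) 1 \ S, w ≠ z → f w = F w := by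
        intro w hw hwz
        have hwq : ∀ j, w ≠ q j := by
          intro j hwj
          exact hw.2 ⟨⟨j, hwj.symm⟩, hwz⟩
        have hBq : (∏ j, ((w - q j) / (1 - (starRingEnd ℂ) (q j) * w))) ≠ 0 :=
          blaschke_prod_ne_zero hqD hw.1 hwq
        have h1 := hrel w hw.1
        rw [hrelq w hw.1] at h1
        have h2 : f w * ∏ j, ((w - q j) / (1 - (starRingEnd ℂ) (q j) * w))
            = F w * ∏ j, ((w - q j) / (1 - (starRingEnd ℂ) (q j) * w)) := by
          rw [h1, hF]; ring
        exact mul_right_cancel₀ hBq h2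
      have hfc : ContinuousAt f z :=
        hf.continuousOn.continuousAt (Metric.isOpen_ball.mem_nhds hz)
      have hFc : ContinuousAt F z :=
        hFd.continuousOn.continuousAt (Metric.isOpen_ball.mem_nhds hz)
      have hev : f =ᶠ[nhdsWithin z {z}ᶜ] F := by
        filter_upwards [mem_nhdsWithin_of_mem_nhds (hUopen.mem_nhds hzU),
          self_mem_nhdsWithin] with w hw hw'
        exact heq w hw hw'
      exact tendsto_nhds_unique (hfc.tendsto.mono_left nhdsWithin_le_nhds)
        ((hFc.tendsto.mono_left nhdsWithin_le_nhds).congr' hev.symm)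
    constructor
    · rw [setLIntegral_congr_fun measurableSet_ball
        (show Set.EqOn (fun z => ENNReal.ofReal (‖f z‖ ^ 2 * ω z))
          (fun z => ENNReal.ofReal (‖F z‖ ^ 2 * ω z)) _ from fun z hz => by simp only [hFf z hz])]
      exact L2_mul_le ω hω_pos (fun z hz => blaschke_prod_abs_le hpD hz) hL
    · intro i
      rw [hFf (p i) (hpD i), hF]
      simp only
      rw [Finset.prod_eq_zero (Finset.mem_univ i) (by simp), mul_zero]
end

section
/- For α > 0, the series ∑_{n=1}^∞ (∫_ℂ |z|^{2(n−1)} e^{−|z|^α} dλ(z)) / (∫_ℂ |z|^{2n} e^{−|z|^α} dλ(z)) converges if and only if 0 < α < 2; equivalently, ∑_{n=1}^∞ Γ(2n/α)/Γ((2n+2)/α) < ∞ if and only if α < 2. -/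
open MeasureTheory Real Set Filter

private theorem my_cint {p : ℝ} (hp : 0 < p) {q : ℝ} (hq : - 2 < q) :
    ∫ x : ℂ, ‖x‖ ^ q * rexp (- ‖x‖ ^ p) = (2 * π / p) * Real.Gamma ((q + 2) / p) := by
  calc
    _ = ∫ x in Ioi (0 : ℝ) ×ˢ Ioo (-π) π, x.1 * (|x.1| ^ q * rexp (-|x.1| ^ p)) := by
      rw [← Complex.integral_comp_polarCoord_symm, polarCoord_target]
      simp_rw [Complex.norm_polarCoord_symm, smul_eq_mul]
    _ = (∫ x in Ioi (0 : ℝ), x * |x| ^ q * rexp (-|x| ^ p)) * ∫ _ in Ioo (-π) π, 1 := by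
      rw [← setIntegral_prod_mul, Measure.volume_eq_prod]
      simp_rw [mul_one]
      congr! 2; ring
    _ = 2 * π * ∫ x in Ioi (0 : ℝ), x * |x| ^ q * rexp (-|x| ^ p) := by
      simp_rw [integral_const, measureReal_restrict_apply_univ,
        Real.volume_real_Ioo, sub_neg_eq_add, ← two_mul, max_eq_left (by positivity : 0 ≤ 2 * π),
        smul_eq_mul, mul_one, mul_comm]
    _ = 2 * π * ∫ x in Ioi (0 : ℝ), x ^ (q + 1) * rexp (-x ^ p) := by
      congr 1
      refine setIntegral_congr_fun measurableSet_Ioi (fun x hx => ?_)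
      rw [mem_Ioi] at hx
      rw [abs_eq_self.mpr hx.le, rpow_add hx, rpow_one]
      ring
    _ = (2 * Real.pi / p) * Real.Gamma ((q + 2) / p) := by
      rw [_root_.integral_rpow_mul_exp_neg_rpow hp (by linarith), add_assoc,
        one_add_one_eq_two]
      ring

private theorem my_int_eq {α : ℝ} (hα : 0 < α) (m : ℕ) :
    ∫ z : ℂ, ‖z‖ ^ m * Real.exp (-(‖z‖ ^ α)) =
      (2 * π / α) * Real.Gamma (((m : ℝ) + 2) / α) := by
  rw [← my_cint hα (by have : (0:ℝ) ≤ m := Nat.cast_nonneg m; linarith)]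
  congr 1 with z
  rw [← Real.rpow_natCast ‖z‖ m]

/-- Log-convexity upper bound: for `0 < c ≤ 1`, `Γ(x+c) ≤ Γ(x) x^c`. -/
private theorem gamma_ub {x c : ℝ} (hx : 0 < x) (hc0 : 0 < c) (hc1 : c ≤ 1) :
    Real.Gamma (x + c) ≤ Real.Gamma x * x ^ c := by
  rcases eq_or_lt_of_le hc1 with h1 | h1
  · rw [h1, Real.rpow_one, Real.Gamma_add_one hx.ne', mul_comm]
  · have key := Real.Gamma_mul_add_mul_le_rpow_Gamma_mul_rpow_Gamma hx
      (by linarith : (0:ℝ) < x + 1) (by linarith : 0 < 1 - c) hc0 (by ring)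
    have harg : (1 - c) * x + c * (x + 1) = x + c := by ring
    rw [harg] at key
    have hΓ : 0 < Real.Gamma x := Real.Gamma_pos_of_pos hx
    calc Real.Gamma (x + c) ≤ Real.Gamma x ^ (1 - c) * Real.Gamma (x + 1) ^ c := key
      _ = (Real.Gamma x ^ (1 - c) * Real.Gamma x ^ c) * x ^ c := by
          rw [Real.Gamma_add_one hx.ne', Real.mul_rpow hx.le hΓ.le]; ring
      _ = Real.Gamma x * x ^ c := by
          rw [← Real.rpow_add hΓ, sub_add_cancel, Real.rpow_one]

/-- Log-convexity lower bound: for `0 < s < 1`, `Γ(x) x^(1+s) ≤ Γ(x+(1+s))`. -/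
private theorem gamma_lb {x s : ℝ} (hx : 0 < x) (hs0 : 0 < s) (hs1 : s < 1) :
    Real.Gamma x * x ^ (1 + s) ≤ Real.Gamma (x + (1 + s)) := by
  have hxs : 0 < x + s := by linarith
  have hΓxs : 0 < Real.Gamma (x + s) := Real.Gamma_pos_of_pos hxs
  -- Γ(x+1) ≤ Γ(x+s) * (x+s)^(1-s)
  have key := Real.Gamma_mul_add_mul_le_rpow_Gamma_mul_rpow_Gamma hxs
    (by linarith : (0:ℝ) < x + s + 1) hs0 (by linarith : 0 < 1 - s) (by ring)
  have harg : s * (x + s) + (1 - s) * (x + s + 1) = x + 1 := by ring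
  rw [harg] at key
  have hB : Real.Gamma (x + 1) ≤ Real.Gamma (x + s) * (x + s) ^ (1 - s) := by
    calc Real.Gamma (x + 1) ≤ Real.Gamma (x + s) ^ s * Real.Gamma (x + s + 1) ^ (1 - s) := key
      _ = (Real.Gamma (x + s) ^ s * Real.Gamma (x + s) ^ (1 - s)) * (x + s) ^ (1 - s) := by
          rw [Real.Gamma_add_one hxs.ne', Real.mul_rpow hxs.le hΓxs.le]; ring
      _ = Real.Gamma (x + s) * (x + s) ^ (1 - s) := by
          rw [← Real.rpow_add hΓxs, add_sub_cancel, Real.rpow_one]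
  -- Γ(x+(1+s)) = (x+s) Γ(x+s) ≥ (x+s)^s Γ(x+1) ≥ x^s · x Γ(x)
  have h1 : Real.Gamma (x + (1 + s)) = (x + s) * Real.Gamma (x + s) := by
    rw [show x + (1 + s) = (x + s) + 1 by ring, Real.Gamma_add_one hxs.ne']
  have h2 : (x + s) ^ s * Real.Gamma (x + 1) ≤ (x + s) * Real.Gamma (x + s) := by
    have := mul_le_mul_of_nonneg_left hB (by positivity : (0:ℝ) ≤ (x + s) ^ s)
    calc (x + s) ^ s * Real.Gamma (x + 1) ≤ (x + s) ^ s * (Real.Gamma (x + s) * (x + s) ^ (1 - s)) := this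
      _ = (x + s) ^ s * (x + s) ^ (1 - s) * Real.Gamma (x + s) := by ring
      _ = (x + s) * Real.Gamma (x + s) := by
          rw [← Real.rpow_add hxs, add_sub_cancel, Real.rpow_one]
  have h3 : Real.Gamma x * x ^ (1 + s) ≤ (x + s) ^ s * Real.Gamma (x + 1) := by
    rw [Real.Gamma_add_one hx.ne']
    have hx' : x ^ s ≤ (x + s) ^ s :=
      Real.rpow_le_rpow hx.le (by linarith) hs0.le
    calc Real.Gamma x * x ^ (1 + s) = x ^ s * (x * Real.Gamma x) := by
          rw [Real.rpow_add hx, Real.rpow_one]; ring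
      _ ≤ (x + s) ^ s * (x * Real.Gamma x) := by
          apply mul_le_mul_of_nonneg_right hx'
          positivity
  linarith

private theorem main_summable {α : ℝ} (hα : 0 < α) :
    (Summable fun n : ℕ =>
      Real.Gamma ((2 * (n : ℝ) + 2) / α) / Real.Gamma ((2 * (n : ℝ) + 4) / α)) ↔ α < 2 := by
  set c : ℝ := 2 / α with hc
  have hc0 : 0 < c := by positivity
  have hx : ∀ n : ℕ, (2 * (n : ℝ) + 2) / α = c * (n + 1) := by
    intro n; rw [hc]; field_simp
  have hxc : ∀ n : ℕ, (2 * (n : ℝ) + 4) / α = c * (n + 1) + c := by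
    intro n; rw [hc]; field_simp; ring
  have hxpos : ∀ n : ℕ, (0:ℝ) < c * (n + 1) := by
    intro n; positivity
  constructor
  · -- summable → α < 2, by contraposition
    intro hsum
    by_contra hge
    push_neg at hge
    have hc1 : c ≤ 1 := by
      rw [hc, div_le_one hα]; linarith
    -- terms ≥ 1/(n+1)
    have hbd : ∀ n : ℕ, 1 / ((n : ℝ) + 1) ≤
        Real.Gamma ((2 * (n : ℝ) + 2) / α) / Real.Gamma ((2 * (n : ℝ) + 4) / α) := by
      intro n
      rw [hx n, hxc n]
      set x : ℝ := c * (n + 1) with hxdef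
      have hx0 : 0 < x := hxpos n
      have hΓx : 0 < Real.Gamma x := Real.Gamma_pos_of_pos hx0
      have hΓxc : 0 < Real.Gamma (x + c) := Real.Gamma_pos_of_pos (by linarith)
      rw [div_le_div_iff₀ (by positivity) hΓxc]
      have hub : Real.Gamma (x + c) ≤ Real.Gamma x * x ^ c := gamma_ub hx0 hc0 hc1
      have hxle : x ≤ (n : ℝ) + 1 := by
        rw [hxdef]
        nlinarith [Nat.cast_nonneg (α := ℝ) n]
      have h1 : x ^ c ≤ ((n : ℝ) + 1) ^ c :=
        Real.rpow_le_rpow hx0.le hxle hc0.le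
      have h2 : ((n : ℝ) + 1) ^ c ≤ ((n : ℝ) + 1) ^ (1:ℝ) :=
        Real.rpow_le_rpow_of_exponent_le (by simp) hc1
      rw [Real.rpow_one] at h2
      nlinarith
    have hsum2 : Summable (fun n : ℕ => 1 / ((n : ℝ) + 1)) :=
      Summable.of_nonneg_of_le (fun n => by positivity) hbd hsum
    have hsum3 : Summable (fun n : ℕ => 1 / (((n + 1 : ℕ)) : ℝ)) :=
      hsum2.congr (fun n => by push_cast; ring)
    exact Real.not_summable_one_div_natCast
      ((summable_nat_add_iff (f := fun n : ℕ => 1 / (n : ℝ)) 1).mp hsum3)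
  · -- α < 2 → summable
    intro hlt
    have hc1 : 1 < c := by
      rw [hc, lt_div_iff₀ hα]; linarith
    set γ : ℝ := min c (3/2) with hγ
    have hγ1 : 1 < γ := lt_min hc1 (by norm_num)
    have hγ2 : γ < 2 := lt_of_le_of_lt (min_le_right _ _) (by norm_num)
    have hγc : γ ≤ c := min_le_left _ _
    set s : ℝ := γ - 1 with hs
    have hs0 : 0 < s := by simp [hs]; linarith
    have hs1 : s < 1 := by simp [hs]; linarith
    have hbd : ∀ n : ℕ,
        Real.Gamma ((2 * (n : ℝ) + 2) / α) / Real.Gamma ((2 * (n : ℝ) + 4) / α) ≤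
        1 / ((n : ℝ) + 1) ^ γ := by
      intro n
      rw [hx n, hxc n]
      set x : ℝ := c * (n + 1) with hxdef
      have hx0 : 0 < x := hxpos n
      have hx1 : 1 < x := by
        rw [hxdef]
        nlinarith [Nat.cast_nonneg (α := ℝ) n]
      have hΓx : 0 < Real.Gamma x := Real.Gamma_pos_of_pos hx0
      have hΓxc : 0 < Real.Gamma (x + c) := Real.Gamma_pos_of_pos (by linarith)
      -- Γ(x+γ) ≤ Γ(x+c)
      have hmono : Real.Gamma (x + γ) ≤ Real.Gamma (x + c) := by
        apply Real.Gamma_strictMonoOn_Ici.monotoneOn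
        · simp only [Set.mem_Ici]; linarith
        · simp only [Set.mem_Ici]; linarith
        · linarith
      -- Γ(x) x^γ ≤ Γ(x+γ)
      have hlow : Real.Gamma x * x ^ γ ≤ Real.Gamma (x + γ) := by
        have := gamma_lb hx0 hs0 hs1
        rwa [show (1 : ℝ) + s = γ by rw [hs]; ring] at this
      have hxγpos : (0:ℝ) < x ^ γ := Real.rpow_pos_of_pos hx0 _
      rw [div_le_div_iff₀ hΓxc (by positivity)]
      have hge : ((n : ℝ) + 1) ≤ x := by
        rw [hxdef]; nlinarith [Nat.cast_nonneg (α := ℝ) n]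
      have h1 : ((n : ℝ) + 1) ^ γ ≤ x ^ γ :=
        Real.rpow_le_rpow (by positivity) hge (by linarith)
      have h2 : Real.Gamma x * ((n : ℝ) + 1) ^ γ ≤ Real.Gamma x * x ^ γ :=
        mul_le_mul_of_nonneg_left h1 hΓx.le
      nlinarith
    apply Summable.of_nonneg_of_le
      (fun n => by positivity) hbd
    have h := (Real.summable_one_div_nat_rpow (p := γ)).mpr hγ1
    have h2 := (summable_nat_add_iff (f := fun n : ℕ => 1 / (n : ℝ) ^ γ) 1).mpr h
    exact h2.congr (fun n => by push_cast; ring)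

/-- For `α > 0`, the series (over `n ≥ 1`, here reindexed by `n ↦ n+1`) of ratios
`∫_ℂ |z|^(2(n−1)) e^(−|z|^α) dλ / ∫_ℂ |z|^(2n) e^(−|z|^α) dλ` converges iff `0 < α < 2`;
equivalently `∑_{n≥1} Γ(2n/α)/Γ((2n+2)/α) < ∞` iff `α < 2`. -/
theorem stmt4 (α : ℝ) (hα : 0 < α) :
    (Summable (fun n : ℕ =>
        (∫ z : ℂ, ‖z‖ ^ (2 * n) * Real.exp (-(‖z‖ ^ α))) /
        (∫ z : ℂ, ‖z‖ ^ (2 * (n + 1)) * Real.exp (-(‖z‖ ^ α)))) ↔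
      α < 2) ∧
    (Summable (fun n : ℕ =>
        Real.Gamma ((2 * (n + 1 : ℝ)) / α) / Real.Gamma ((2 * (n + 1 : ℝ) + 2) / α)) ↔
      α < 2) := by
  have hπ : (0:ℝ) < 2 * π / α := by positivity
  constructor
  · rw [show (fun n : ℕ =>
        (∫ z : ℂ, ‖z‖ ^ (2 * n) * Real.exp (-(‖z‖ ^ α))) /
        (∫ z : ℂ, ‖z‖ ^ (2 * (n + 1)) * Real.exp (-(‖z‖ ^ α)))) =
        (fun n : ℕ =>
          Real.Gamma ((2 * (n : ℝ) + 2) / α) / Real.Gamma ((2 * (n : ℝ) + 4) / α)) from ?_]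
    · exact main_summable hα
    · funext n
      rw [my_int_eq hα (2 * n), my_int_eq hα (2 * (n + 1)),
        mul_div_mul_left _ _ hπ.ne']
      norm_num
      congr 2 <;> push_cast <;> ring
  · rw [show (fun n : ℕ =>
        Real.Gamma ((2 * (n + 1 : ℝ)) / α) / Real.Gamma ((2 * (n + 1 : ℝ) + 2) / α)) =
        (fun n : ℕ =>
          Real.Gamma ((2 * (n : ℝ) + 2) / α) / Real.Gamma ((2 * (n : ℝ) + 4) / α)) from ?_]
    · exact main_summable hα
    · funext n
      congr 2 <;> push_cast <;> ring
end

section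
/- For every δ > 0 and every R > 0, the double integral ∬_{|z| ≥ R, |w| ≥ R} |1/z − 1/w|² e^{−δ|z−w|} dλ(z) dλ(w) is finite. -/
open MeasureTheory

lemma aux_pow_exp (δ : ℝ) (hδ : 0 < δ) (t : ℝ) (ht : 0 ≤ t) :
    t ^ 2 * Real.exp (-δ * t) ≤ ((min 1 (δ/6)) ^ 6)⁻¹ * ((1 + t) ^ 4)⁻¹ := by
  set m : ℝ := min 1 (δ/6) with hm
  have hm0 : 0 < m := lt_min one_pos (by linarith)
  have hm1 : m ≤ 1 := min_le_left _ _
  have hm2 : m ≤ δ/6 := min_le_right _ _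
  have h1 : 1 + δ * t / 6 ≤ Real.exp (δ * t / 6) := by
    have := Real.add_one_le_exp (δ * t / 6); linarith
  have h3 : m * (1 + t) ≤ Real.exp (δ * t / 6) := by
    nlinarith [mul_nonneg (sub_nonneg.2 hm2) ht]
  have h4 : (m * (1 + t)) ^ 6 ≤ Real.exp (δ * t) := by
    calc (m * (1 + t)) ^ 6 ≤ Real.exp (δ * t / 6) ^ 6 :=
          pow_le_pow_left₀ (by positivity) h3 6
      _ = Real.exp (6 * (δ * t / 6)) := by rw [← Real.exp_nat_mul]; norm_num
      _ = Real.exp (δ * t) := by ring_nf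
  have hkey : t ^ 2 * (1 + t) ^ 4 ≤ (m ^ 6)⁻¹ * Real.exp (δ * t) := by
    have h5 : t ^ 2 * (1 + t) ^ 4 ≤ (1 + t) ^ 6 := by nlinarith [pow_nonneg (by linarith : (0:ℝ) ≤ 1 + t) 4]
    have h6 : (1 + t) ^ 6 = (m ^ 6)⁻¹ * (m * (1 + t)) ^ 6 := by
      field_simp [mul_pow]
    have h7 : (m ^ 6)⁻¹ * (m * (1 + t)) ^ 6 ≤ (m ^ 6)⁻¹ * Real.exp (δ * t) := by
      apply mul_le_mul_of_nonneg_left h4 (by positivity)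
    linarith
  rw [show -δ * t = -(δ * t) by ring, Real.exp_neg, ← div_eq_mul_inv, ← div_eq_mul_inv,
    div_le_div_iff₀ (Real.exp_pos _) (by positivity)]
  linarith [hkey]

/-- For every `δ > 0` and `R > 0`,
`∬_{|z|≥R, |w|≥R} |1/z − 1/w|² e^(−δ|z−w|) dλ(z) dλ(w) < ∞`. -/
theorem stmt7 (δ R : ℝ) (hδ : 0 < δ) (hR : 0 < R) :
    (∫⁻ p : ℂ × ℂ in {p : ℂ × ℂ | R ≤ ‖p.1‖ ∧ R ≤ ‖p.2‖},
      ENNReal.ofReal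
        (‖1 / p.1 - 1 / p.2‖ ^ 2 *
          Real.exp (-δ * ‖p.1 - p.2‖))) < ⊤ := by
  classical
  have hm0 : 0 < min 1 (δ/6) := lt_min one_pos (by linarith)
  set K : ℝ := ((min 1 (δ/6)) ^ 6)⁻¹ with hKdef
  have hK0 : 0 ≤ K := by positivity
  set T : Set ℂ := {z : ℂ | R ≤ ‖z‖} with hT
  have hTm : MeasurableSet T :=
    measurableSet_le measurable_const continuous_norm.measurable
  set F : ℂ × ℂ → ENNReal := fun p => ENNReal.ofReal
      (‖1 / p.1 - 1 / p.2‖ ^ 2 *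
        Real.exp (-δ * ‖p.1 - p.2‖)) with hF
  set A : ℂ → ENNReal :=
    fun z => T.indicator (fun z => ENNReal.ofReal ((‖z‖ ^ 4)⁻¹)) z with hA
  set g : ℂ → ℝ := fun u => K * ((1 + ‖u‖) ^ 4)⁻¹ with hg
  set h : ℂ → ENNReal := fun u => ENNReal.ofReal (g u) with hh
  have hAmeas : Measurable A :=
    (Measurable.ennreal_ofReal
      ((continuous_norm.measurable.pow_const 4).inv)).indicator hTm
  have hgmeas : Measurable g := by fun_prop
  have hhmeas : Measurable h := hgmeas.ennreal_ofReal
  have hfin : ((Module.finrank ℝ ℂ : ℝ)) < 4 := by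
    rw [Complex.finrank_real_complex]; norm_num
  have hrpow : ∀ x : ℂ, ((1 : ℝ) + ‖x‖) ^ (-(4:ℝ)) = (((1:ℝ) + ‖x‖) ^ (4:ℕ))⁻¹ := by
    intro x
    rw [← Real.rpow_natCast (1 + ‖x‖) 4, ← Real.rpow_neg (by positivity)]
    norm_num
  have hgint : Integrable g := by
    have h0 := (integrable_one_add_norm (E := ℂ) (μ := volume) (r := 4) hfin).const_mul K
    refine h0.congr (Filter.Eventually.of_forall fun x => ?_)
    simp only [hg, hrpow x]
  have hCh : (∫⁻ u : ℂ, h u) < ⊤ := hgint.lintegral_lt_top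
  -- finiteness of ∫ A
  have hIA : (∫⁻ z : ℂ, A z) < ⊤ := by
    have hgint2 : Integrable (fun z : ℂ => ((R+1)/R) ^ 4 * (((1:ℝ) + ‖z‖) ^ 4)⁻¹) := by
      have h0 := (integrable_one_add_norm (E := ℂ) (μ := volume) (r := 4) hfin).const_mul
        (((R+1)/R) ^ 4)
      refine h0.congr (Filter.Eventually.of_forall fun x => ?_)
      simp only [hrpow x]
    refine lt_of_le_of_lt (lintegral_mono fun z => ?_) hgint2.lintegral_lt_top
    by_cases hz : z ∈ T
    · show T.indicator _ z ≤ _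
      rw [Set.indicator_of_mem hz]
      apply ENNReal.ofReal_le_ofReal
      have hzR : R ≤ ‖z‖ := hz
      have ha : 0 < ‖z‖ := lt_of_lt_of_le hR hzR
      set a := ‖z‖ with hadef
      have hnorm : ‖z‖ = a := rfl
      have key : (1 + a) ≤ ((R+1)/R) * a := by
        rw [div_mul_eq_mul_div, le_div_iff₀ hR]; nlinarith
      have h4 : (1 + a) ^ 4 ≤ ((R+1)/R) ^ 4 * a ^ 4 := by
        rw [← mul_pow]; exact pow_le_pow_left₀ (by positivity) key 4
      rw [inv_eq_one_div, show ((R+1)/R) ^ 4 * ((1 + a) ^ 4)⁻¹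
          = ((R+1)/R) ^ 4 / (1 + a) ^ 4 from (div_eq_mul_inv _ _).symm,
        div_le_div_iff₀ (by positivity) (by positivity)]
      nlinarith
    · show T.indicator _ z ≤ _
      rw [Set.indicator_of_notMem hz]
      exact zero_le
  set S : Set (ℂ × ℂ) := {p : ℂ × ℂ | R ≤ ‖p.1‖ ∧ R ≤ ‖p.2‖} with hS
  have hSm : MeasurableSet S := (measurable_fst hTm).inter (measurable_snd hTm)
  -- pointwise bound
  have pointwise : ∀ p : ℂ × ℂ,
      S.indicator F p ≤ (A p.1 + A p.2) * h (p.1 - p.2) := by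
    intro p
    by_cases hp : p ∈ S
    · rw [Set.indicator_of_mem hp]
      obtain ⟨h1, h2⟩ := hp
      have hz0 : p.1 ≠ 0 := by
        intro hzz
        rw [hzz] at h1; simp at h1; linarith
      have hw0 : p.2 ≠ 0 := by
        intro hzz
        rw [hzz] at h2; simp at h2; linarith
      have e1 : A p.1 = ENNReal.ofReal ((‖p.1‖ ^ 4)⁻¹) :=
        Set.indicator_of_mem (show p.1 ∈ T from h1) _
      have e2 : A p.2 = ENNReal.ofReal ((‖p.2‖ ^ 4)⁻¹) :=
        Set.indicator_of_mem (show p.2 ∈ T from h2) _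
      rw [hF, e1, e2, ← ENNReal.ofReal_add (by positivity) (by positivity),
        ← ENNReal.ofReal_mul (by positivity)]
      apply ENNReal.ofReal_le_ofReal
      set az := ‖p.1‖ with hazd
      set aw := ‖p.2‖ with hawd
      set t := ‖p.1 - p.2‖ with htd
      have haz : 0 < az := lt_of_lt_of_le hR h1
      have haw : 0 < aw := lt_of_lt_of_le hR h2
      have ht : 0 ≤ t := norm_nonneg _
      have habs : ‖1 / p.1 - 1 / p.2‖ = t / (az * aw) := by
        rw [div_sub_div _ _ hz0 hw0, norm_div, norm_mul, one_mul, mul_one,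
          norm_sub_rev]
      have hnorm : ‖p.1 - p.2‖ = t := rfl
      rw [habs, hg]
      simp only [hnorm]
      have amgm : ((az * aw) ^ 2)⁻¹ ≤ (az ^ 4)⁻¹ + (aw ^ 4)⁻¹ := by
        rw [inv_eq_one_div, inv_eq_one_div, inv_eq_one_div, div_add_div _ _
          (by positivity) (by positivity), div_le_div_iff₀ (by positivity) (by positivity)]
        nlinarith [sq_nonneg (az^2 - aw^2), sq_nonneg az, sq_nonneg aw,
          mul_pos haz haw, mul_pos (mul_pos haz haz) (mul_pos haw haw)]
      calc (t / (az * aw)) ^ 2 * Real.exp (-δ * t)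
          = ((az * aw) ^ 2)⁻¹ * (t ^ 2 * Real.exp (-δ * t)) := by
            rw [div_pow]; ring
        _ ≤ ((az ^ 4)⁻¹ + (aw ^ 4)⁻¹) * (K * ((1 + t) ^ 4)⁻¹) := by
            apply mul_le_mul amgm (aux_pow_exp δ hδ t ht) (by positivity) (by positivity)
    · rw [Set.indicator_of_notMem hp]
      exact zero_le
  have meas1 : Measurable fun p : ℂ × ℂ => A p.1 * h (p.1 - p.2) :=
    (hAmeas.comp measurable_fst).mul (hhmeas.comp (measurable_fst.sub measurable_snd))
  have meas2 : Measurable fun p : ℂ × ℂ => A p.2 * h (p.1 - p.2) :=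
    (hAmeas.comp measurable_snd).mul (hhmeas.comp (measurable_fst.sub measurable_snd))
  have t1 : (∫⁻ p : ℂ × ℂ, A p.1 * h (p.1 - p.2)) = (∫⁻ z : ℂ, A z) * ∫⁻ u : ℂ, h u := by
    rw [Measure.volume_eq_prod, lintegral_prod _ meas1.aemeasurable]
    have inner : ∀ z : ℂ, (∫⁻ w : ℂ, A z * h (z - w)) = A z * ∫⁻ u : ℂ, h u := by
      intro z
      rw [lintegral_const_mul (A z) (show Measurable fun w : ℂ => h (z - w) from hhmeas.comp (measurable_const.sub measurable_id))]
      congr 1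
      have hsymm : ∀ w : ℂ, h (z - w) = h (w - z) := by
        intro w
        simp only [hh, hg, norm_sub_rev]
      simp only [hsymm]
      exact lintegral_sub_right_eq_self h z
    rw [lintegral_congr inner, lintegral_mul_const _ hAmeas]
  have t2 : (∫⁻ p : ℂ × ℂ, A p.2 * h (p.1 - p.2)) = (∫⁻ z : ℂ, A z) * ∫⁻ u : ℂ, h u := by
    rw [Measure.volume_eq_prod, lintegral_prod_symm _ meas2.aemeasurable]
    have inner : ∀ w : ℂ, (∫⁻ z : ℂ, A w * h (z - w)) = A w * ∫⁻ u : ℂ, h u := by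
      intro w
      rw [lintegral_const_mul (A w) (show Measurable fun z : ℂ => h (z - w) from hhmeas.comp (measurable_id.sub measurable_const))]
      congr 1
      exact lintegral_sub_right_eq_self h w
    rw [lintegral_congr inner, lintegral_mul_const _ hAmeas]
  calc (∫⁻ p : ℂ × ℂ in S, F p) = ∫⁻ p : ℂ × ℂ, S.indicator F p :=
        (lintegral_indicator hSm F).symm
    _ ≤ ∫⁻ p : ℂ × ℂ, (A p.1 + A p.2) * h (p.1 - p.2) := lintegral_mono pointwise
    _ = ∫⁻ p : ℂ × ℂ, (A p.1 * h (p.1 - p.2) + A p.2 * h (p.1 - p.2)) := by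
        simp only [add_mul]
    _ = (∫⁻ p : ℂ × ℂ, A p.1 * h (p.1 - p.2)) + ∫⁻ p : ℂ × ℂ, A p.2 * h (p.1 - p.2) :=
        lintegral_add_left meas1 _
    _ < ⊤ := by
        rw [t1, t2]
        have hmul : (∫⁻ z : ℂ, A z) * (∫⁻ u : ℂ, h u) < ⊤ :=
          ENNReal.mul_lt_top hIA hCh
        exact ENNReal.add_lt_top.2 ⟨hmul, hmul⟩
end

section
/- Let ℓ ≥ 1, let (p₁,…,p_ℓ) and (q₁,…,q_ℓ) be ℓ-tuples of distinct points of ℂ, and set g(z) = |(z−p₁)⋯(z−p_ℓ)|² / |(z−q₁)⋯(z−q_ℓ)|². Then for every δ > 0 and every R > max_j max(|p_j|, |q_j|), the double integral ∬_{|z| ≥ R, |w| ≥ R} |g(z) − g(w)|² e^{−δ|z−w|} dλ(z) dλ(w) is finite. -/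
open MeasureTheory

open Polynomial Finset in

lemma pf_eval {ℓ : ℕ} (p q : Fin ℓ → ℂ) (hq : Function.Injective q) (ζ : ℂ)
    (hζ : ∀ j, ζ ≠ q j) :
    (∏ i, (ζ - p i)) / (∏ i, (ζ - q i)) =
      1 + ∑ j, ((∏ i, (q j - p i)) / ∏ i ∈ Finset.univ.erase j, (q j - q i)) / (ζ - q j) := by
  classical
  have hζq : ∀ j, ζ - q j ≠ 0 := fun j => sub_ne_zero.mpr (hζ j)
  have hQζ : (∏ i, (ζ - q i)) ≠ 0 := Finset.prod_ne_zero_iff.mpr fun i _ => hζq i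
  have hqq : ∀ j, ∀ i ∈ Finset.univ.erase j, q j - q i ≠ 0 := by
    intro j i hi
    exact sub_ne_zero.mpr fun h => (Finset.mem_erase.mp hi).1 (hq h.symm)
  set P : ℂ[X] := ∏ i, (X - C (p i)) with hP
  set Q : ℂ[X] := ∏ i, (X - C (q i)) with hQdef
  have hPm : P.Monic := monic_prod_of_monic _ _ fun i _ => monic_X_sub_C _
  have hQm : Q.Monic := monic_prod_of_monic _ _ fun i _ => monic_X_sub_C _
  have hdegP : P.degree = ℓ := by
    rw [hP, degree_prod]; simp [degree_X_sub_C]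
  have hdegQ : Q.degree = ℓ := by
    rw [hQdef, degree_prod]; simp [degree_X_sub_C]
  have hdeg : (P - Q).degree < ((Finset.univ : Finset (Fin ℓ)).card : ℕ) := by
    by_cases hPQ : P = Q
    · simp only [hPQ, sub_self, degree_zero, Finset.card_univ, Fintype.card_fin]
      exact WithBot.bot_lt_coe _
    · have h := degree_sub_lt (hdegP.trans hdegQ.symm) hPm.ne_zero
        (by rw [hPm.leadingCoeff, hQm.leadingCoeff])
      rw [hdegP] at h
      simpa [Finset.card_univ] using h
  have hinterp := Lagrange.eq_interpolate (v := q) (s := Finset.univ) hq.injOn hdeg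
  have hev := congrArg (Polynomial.eval ζ) hinterp
  rw [Lagrange.interpolate_apply] at hev
  simp only [eval_sub, eval_finset_sum, eval_mul, eval_C] at hev
  have hevP : ∀ ξ : ℂ, P.eval ξ = ∏ i, (ξ - p i) := by
    intro ξ; rw [hP, eval_prod]; simp
  have hevQ : ∀ ξ : ℂ, Q.eval ξ = ∏ i, (ξ - q i) := by
    intro ξ; rw [hQdef, eval_prod]; simp
  have hQq : ∀ j, (∏ i, (q j - q i)) = 0 := fun j =>
    Finset.prod_eq_zero (Finset.mem_univ j) (sub_self (q j))
  have hevE : ∀ j, P.eval (q j) - Q.eval (q j) = ∏ i, (q j - p i) := by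
    intro j
    rw [hevP, hevQ, hQq, sub_zero]
  have hbasis : ∀ j, (Lagrange.basis Finset.univ q j).eval ζ
      = ∏ i ∈ Finset.univ.erase j, ((q j - q i)⁻¹ * (ζ - q i)) := by
    intro j
    rw [Lagrange.basis, eval_prod]
    refine Finset.prod_congr rfl fun i hi => ?_
    simp [Lagrange.basisDivisor]
  simp only [hevP, hevQ, hQq, sub_zero, hbasis] at hev
  -- hev : ∏ (ζ-p) - ∏(ζ-q) = ∑ j, (∏ (q j - p)) * ∏_{erase j} ((q j - q i)⁻¹ * (ζ - q i))
  rw [div_eq_iff hQζ, add_mul, one_mul, Finset.sum_mul]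
  rw [← sub_eq_iff_eq_add', hev]
  refine Finset.sum_congr rfl fun j _ => ?_
  have herase : (∏ i, (ζ - q i)) = (ζ - q j) * ∏ i ∈ Finset.univ.erase j, (ζ - q i) :=
    (Finset.mul_prod_erase _ _ (Finset.mem_univ j)).symm
  have hprodqq : (∏ i ∈ Finset.univ.erase j, (q j - q i)) ≠ 0 :=
    Finset.prod_ne_zero_iff.mpr (hqq j)
  have habs : ∀ (A B C d : ℂ), B ≠ 0 → d ≠ 0 → A / B / d * (d * C) = A * (B⁻¹ * C) := by
    intro A B C d hB hd
    field_simp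
  rw [Finset.prod_mul_distrib, Finset.prod_inv_distrib, herase]
  exact (habs _ _ _ _ hprodqq (hζq j)).symm


lemma inv_le_K_inv {x y K : ℝ} (hx : 0 < x) (hy : 0 < y) (h : y ≤ K * x) : x⁻¹ ≤ K * y⁻¹ := by
  have hK : 0 < K := by nlinarith
  have h1 : (K * x)⁻¹ ≤ y⁻¹ := by
    apply inv_anti₀ hy h
  calc x⁻¹ = K * (K * x)⁻¹ := by field_simp
    _ ≤ K * y⁻¹ := by exact mul_le_mul_of_nonneg_left h1 hK.le

lemma one_add_pow_le (c t : ℝ) (hc : 0 < c) (ht : 0 ≤ t) :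
    (1 + t) ^ 4 ≤ (1 + 4 / c) ^ 4 * Real.exp (c * t) := by
  have h1 : 1 + t ≤ (1 + 4 / c) * Real.exp (c * t / 4) := by
    have e1 : c * t / 4 + 1 ≤ Real.exp (c * t / 4) := Real.add_one_le_exp _
    have e2 : (1:ℝ) ≤ Real.exp (c * t / 4) := Real.one_le_exp (by positivity)
    have e3 : t ≤ 4 / c * Real.exp (c * t / 4) := by
      have e4 : c * t / 4 ≤ Real.exp (c * t / 4) := by linarith
      calc t = 4 / c * (c * t / 4) := by field_simp
        _ ≤ 4 / c * Real.exp (c * t / 4) := mul_le_mul_of_nonneg_left e4 (by positivity)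
    nlinarith
  calc (1 + t) ^ 4 ≤ ((1 + 4 / c) * Real.exp (c * t / 4)) ^ 4 :=
        pow_le_pow_left₀ (by positivity) h1 4
    _ = (1 + 4 / c) ^ 4 * Real.exp (c * t / 4) ^ 4 := by ring
    _ = (1 + 4 / c) ^ 4 * Real.exp (c * t) := by
        congr 1
        rw [← Real.exp_nat_mul]
        congr 1
        push_cast; ring

lemma exp_le_K_inv (c t : ℝ) (hc : 0 < c) (ht : 0 ≤ t) :
    Real.exp (-(c * t)) ≤ (1 + 4 / c) ^ 4 * ((1 + t) ^ 4)⁻¹ := by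
  have := one_add_pow_le c t hc ht
  rw [Real.exp_neg]
  exact inv_le_K_inv (Real.exp_pos _) (by positivity) this

lemma int_one_add : ∫⁻ z : ℂ, ENNReal.ofReal (((1 + ‖z‖) ^ 4)⁻¹) < ⊤ := by
  have h : Integrable (fun x : ℂ => (1 + ‖x‖) ^ (-4 : ℝ)) := by
    apply integrable_one_add_norm (E := ℂ)
    rw [Complex.finrank_real_complex]; norm_num
  have h2 : (fun x : ℂ => (1 + ‖x‖) ^ (-4 : ℝ))
      = fun x : ℂ => ((1 + ‖x‖) ^ 4)⁻¹ := by
    funext x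
    rw [Real.rpow_neg (by positivity), show ((4:ℝ) = (4:ℕ)) by norm_num,
      Real.rpow_natCast]
  rw [h2] at h
  exact h.lintegral_lt_top

lemma int_exp (c : ℝ) (hc : 0 < c) :
    ∫⁻ z : ℂ, ENNReal.ofReal (Real.exp (-(c * ‖z‖))) < ⊤ := by
  have hb : ∀ z : ℂ, ENNReal.ofReal (Real.exp (-(c * ‖z‖)))
      ≤ ENNReal.ofReal ((1 + 4 / c) ^ 4) * ENNReal.ofReal (((1 + ‖z‖) ^ 4)⁻¹) := by
    intro z
    rw [← ENNReal.ofReal_mul (by positivity)]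
    exact ENNReal.ofReal_le_ofReal (exp_le_K_inv c _ hc (norm_nonneg z))
  calc ∫⁻ z : ℂ, ENNReal.ofReal (Real.exp (-(c * ‖z‖)))
      ≤ ∫⁻ z : ℂ, ENNReal.ofReal ((1 + 4 / c) ^ 4) * ENNReal.ofReal (((1 + ‖z‖) ^ 4)⁻¹) :=
        lintegral_mono hb
    _ = ENNReal.ofReal ((1 + 4 / c) ^ 4) * ∫⁻ z : ℂ, ENNReal.ofReal (((1 + ‖z‖) ^ 4)⁻¹) :=
        lintegral_const_mul' _ _ ENNReal.ofReal_ne_top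
    _ < ⊤ := ENNReal.mul_lt_top ENNReal.ofReal_lt_top int_one_add

lemma majorant_fin {c : ℝ} (hc : 0 < c) :
    ∫⁻ x : ℂ × ℂ, ((ENNReal.ofReal (((1 + ‖x.1‖) ^ 4)⁻¹) +
        ENNReal.ofReal (((1 + ‖x.2‖) ^ 4)⁻¹)) *
      ENNReal.ofReal (Real.exp (-(c * ‖x.1 - x.2‖)))) < ⊤ := by
  set G : ℂ → ENNReal := fun z => ENNReal.ofReal (((1 + ‖z‖) ^ 4)⁻¹) with hG
  set Φ : ℂ → ENNReal := fun u => ENNReal.ofReal (Real.exp (-(c * ‖u‖))) with hΦ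
  have hGc : Continuous G :=
    ENNReal.continuous_ofReal.comp
      (Continuous.inv₀ ((continuous_const.add continuous_norm).pow 4)
        (fun z => by positivity))
  have hΦc : Continuous Φ :=
    ENNReal.continuous_ofReal.comp
      (Real.continuous_exp.comp ((continuous_const.mul continuous_norm).neg))
  have hm1 : Measurable fun x : ℂ × ℂ => G x.1 * Φ (x.1 - x.2) :=
    ((hGc.comp continuous_fst).measurable).mul
      ((hΦc.comp (continuous_fst.sub continuous_snd)).measurable)
  have hm2 : Measurable fun x : ℂ × ℂ => G x.2 * Φ (x.1 - x.2) :=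
    ((hGc.comp continuous_snd).measurable).mul
      ((hΦc.comp (continuous_fst.sub continuous_snd)).measurable)
  have hsplit : ∀ x : ℂ × ℂ, (G x.1 + G x.2) * Φ (x.1 - x.2)
      = G x.1 * Φ (x.1 - x.2) + G x.2 * Φ (x.1 - x.2) := fun x => add_mul _ _ _
  rw [lintegral_congr hsplit, lintegral_add_left hm1]
  have hIΦ : ∫⁻ u : ℂ, Φ u < ⊤ := int_exp c hc
  have hIG : ∫⁻ z : ℂ, G z < ⊤ := int_one_add
  refine ENNReal.add_lt_top.mpr ⟨?_, ?_⟩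
  · rw [Measure.volume_eq_prod, lintegral_prod _ hm1.aemeasurable]
    have h1 : ∀ z : ℂ, (∫⁻ w, G z * Φ (z - w)) = G z * ∫⁻ u : ℂ, Φ u := by
      intro z
      rw [lintegral_const_mul' _ _ ENNReal.ofReal_ne_top]
      congr 1
      have he : ∀ w : ℂ, Φ (z - w) = Φ (w - z) := fun w => by
        simp only [hΦ, norm_sub_rev]
      rw [lintegral_congr he, lintegral_sub_right_eq_self Φ z]
    simp_rw [h1]
    rw [lintegral_mul_const _ hGc.measurable]
    exact ENNReal.mul_lt_top hIG hIΦ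
  · rw [Measure.volume_eq_prod, lintegral_prod_symm _ hm2.aemeasurable]
    have h1 : ∀ w : ℂ, (∫⁻ z, G w * Φ (z - w)) = G w * ∫⁻ u : ℂ, Φ u := by
      intro w
      rw [lintegral_const_mul' _ _ ENNReal.ofReal_ne_top]
      congr 1
      exact lintegral_sub_right_eq_self Φ w
    simp_rw [h1]
    rw [lintegral_mul_const _ hGc.measurable]
    exact ENNReal.mul_lt_top hIG hIΦ

lemma sq_exp_le (δ t : ℝ) (hδ : 0 < δ) (ht : 0 ≤ t) :
    t ^ 2 * Real.exp (-(δ * t)) ≤ 16 / δ ^ 2 * Real.exp (-(δ / 2 * t)) := by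
  have a1 : δ * t / 4 + 1 ≤ Real.exp (δ * t / 4) := Real.add_one_le_exp _
  have a2 : Real.exp (δ * t / 4) ^ 2 = Real.exp (δ / 2 * t) := by
    rw [sq, ← Real.exp_add]; congr 1; ring
  have a3 : t ^ 2 ≤ 16 / δ ^ 2 * Real.exp (δ / 2 * t) := by
    have h0 : (δ * t / 4) ^ 2 ≤ Real.exp (δ / 2 * t) := by
      rw [← a2]
      have : 0 ≤ δ * t / 4 := by positivity
      nlinarith
    rw [div_mul_eq_mul_div, le_div_iff₀ (by positivity)]
    nlinarith
  calc t ^ 2 * Real.exp (-(δ * t)) ≤ (16 / δ ^ 2 * Real.exp (δ / 2 * t)) * Real.exp (-(δ * t)) :=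
        mul_le_mul_of_nonneg_right a3 (Real.exp_nonneg _)
    _ = 16 / δ ^ 2 * Real.exp (-(δ / 2 * t)) := by
        rw [mul_assoc, ← Real.exp_add]; congr 2; ring

lemma inv_sq_sq (A B : ℝ) (hA : 0 < A) (hB : 0 < B) :
    (A ^ 2 * B ^ 2)⁻¹ ≤ (A ^ 4)⁻¹ + (B ^ 4)⁻¹ := by
  rw [← one_div, ← one_div, ← one_div, div_add_div _ _ (by positivity) (by positivity),
    div_le_div_iff₀ (by positivity) (by positivity)]
  nlinarith [sq_nonneg (A ^ 2 - B ^ 2), sq_nonneg (A * B)]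

set_option maxHeartbeats 1000000 in
/-- With `g(z) = |∏(z−pᵢ)|²/|∏(z−qᵢ)|²`, for every `δ > 0` and every
`R > maxⱼ max(|pⱼ|,|qⱼ|)`, the integral
`∬_{|z|≥R, |w|≥R} |g(z) − g(w)|² e^(−δ|z−w|) dλ(z) dλ(w)` is finite. -/
theorem stmt8 (ℓ : ℕ) (hℓ : 1 ≤ ℓ) (p q : Fin ℓ → ℂ)
    (hp : Function.Injective p) (hq : Function.Injective q)
    (δ R : ℝ) (hδ : 0 < δ)
    (hR : ∀ j, ‖p j‖ < R ∧ ‖q j‖ < R) :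
    (∫⁻ x : ℂ × ℂ in {x : ℂ × ℂ | R ≤ ‖x.1‖ ∧ R ≤ ‖x.2‖},
      ENNReal.ofReal
        (|‖∏ i, (x.1 - p i)‖ ^ 2 / ‖∏ i, (x.1 - q i)‖ ^ 2 -
            ‖∏ i, (x.2 - p i)‖ ^ 2 / ‖∏ i, (x.2 - q i)‖ ^ 2| ^ 2 *
          Real.exp (-δ * ‖x.1 - x.2‖))) < ⊤ := by
  classical
  have hR0 : 0 < R := lt_of_le_of_lt (norm_nonneg (q ⟨0, hℓ⟩)) (hR ⟨0, hℓ⟩).2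
  set F : ℂ → ℂ := fun ζ => (∏ i, (ζ - p i)) / (∏ i, (ζ - q i)) with hF
  set c : Fin ℓ → ℂ :=
    fun j => (∏ i, (q j - p i)) / ∏ i ∈ Finset.univ.erase j, (q j - q i) with hc
  set a : Fin ℓ → ℝ := fun j => 1 - ‖q j‖ / R with ha
  have ha0 : ∀ j, 0 < a j := by
    intro j
    have h : ‖q j‖ / R < 1 := (div_lt_one hR0).mpr (hR j).2
    simp only [ha]; linarith
  have hne : ∀ ζ : ℂ, R ≤ ‖ζ‖ → ∀ j, ζ ≠ q j := by
    intro ζ hζ j h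
    rw [h] at hζ
    exact absurd (hR j).2 (not_lt.mpr hζ)
  have hFev : ∀ ζ : ℂ, R ≤ ‖ζ‖ → F ζ = 1 + ∑ j, c j / (ζ - q j) :=
    fun ζ hζ => pf_eval p q hq ζ (hne ζ hζ)
  have hfac : ∀ ζ : ℂ, R ≤ ‖ζ‖ → ∀ j,
      a j * ‖ζ‖ ≤ ‖ζ - q j‖ := by
    intro ζ hζ j
    have h2 : ‖ζ‖ - ‖q j‖ ≤ ‖ζ - q j‖ := by
      simpa using norm_sub_norm_le ζ (q j)
    have h3 : ‖q j‖ ≤ ‖q j‖ * ‖ζ‖ / R := by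
      rw [le_div_iff₀ hR0]
      exact mul_le_mul_of_nonneg_left hζ (norm_nonneg _)
    simp only [ha]
    have : (1 - ‖q j‖ / R) * ‖ζ‖
        = ‖ζ‖ - ‖q j‖ * ‖ζ‖ / R := by ring
    rw [this]
    linarith
  clear_value c
  set M : ℝ := 1 + ∑ j, ‖c j‖ / (a j * R) with hM
  set C1 : ℝ := ∑ j, ‖c j‖ / (a j) ^ 2 with hC1
  have hM0 : 0 ≤ M := by
    rw [hM]
    have : 0 ≤ ∑ j, ‖c j‖ / (a j * R) :=
      Finset.sum_nonneg fun j _ =>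
        div_nonneg (norm_nonneg _) (mul_nonneg (ha0 j).le hR0.le)
    linarith
  have hC10 : 0 ≤ C1 :=
    Finset.sum_nonneg fun j _ => div_nonneg (norm_nonneg _) (by positivity)
  have habsF : ∀ ζ : ℂ, R ≤ ‖ζ‖ → ‖F ζ‖ ≤ M := by
    intro ζ hζ
    rw [hFev ζ hζ, hM]
    refine le_trans (norm_add_le _ _) ?_
    rw [norm_one]
    refine add_le_add (le_refl 1) (le_trans (norm_sum_le _ _) ?_)
    refine Finset.sum_le_sum fun j _ => ?_
    rw [norm_div]
    have hden : a j * R ≤ ‖ζ - q j‖ := by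
      calc a j * R ≤ a j * ‖ζ‖ := by
            exact mul_le_mul_of_nonneg_left hζ (ha0 j).le
        _ ≤ ‖ζ - q j‖ := hfac ζ hζ j
    exact div_le_div_of_nonneg_left (norm_nonneg _) (mul_pos (ha0 j) hR0) hden
  have hFdiff : ∀ z w : ℂ, R ≤ ‖z‖ → R ≤ ‖w‖ →
      ‖F z - F w‖ ≤
        C1 * (‖z - w‖ / (‖z‖ * ‖w‖)) := by
    intro z w hz hw
    have hzpos : 0 < ‖z‖ := lt_of_lt_of_le hR0 hz
    have hwpos : 0 < ‖w‖ := lt_of_lt_of_le hR0 hw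
    rw [hFev z hz, hFev w hw]
    have hsum : (1 + ∑ j, c j / (z - q j)) - (1 + ∑ j, c j / (w - q j))
        = ∑ j, (c j / (z - q j) - c j / (w - q j)) := by
      rw [Finset.sum_sub_distrib]; ring
    rw [hsum, hC1, Finset.sum_mul]
    refine le_trans (norm_sum_le _ _) (Finset.sum_le_sum fun j _ => ?_)
    have hzj : z - q j ≠ 0 := sub_ne_zero.mpr (hne z hz j)
    have hwj : w - q j ≠ 0 := sub_ne_zero.mpr (hne w hw j)
    have hid : c j / (z - q j) - c j / (w - q j)
        = c j * (w - z) / ((z - q j) * (w - q j)) := by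
      field_simp
      ring
    rw [hid, norm_div, norm_mul, norm_mul, norm_sub_rev w z]
    have hrhs : ∀ cc d az aw aj : ℝ, cc / aj ^ 2 * (d / (az * aw))
        = cc * d / ((aj * az) * (aj * aw)) := by
      intro cc d az aw aj
      ring
    rw [hrhs]
    refine div_le_div_of_nonneg_left
      (mul_nonneg (norm_nonneg _) (norm_nonneg _))
      (mul_pos (mul_pos (ha0 j) hzpos) (mul_pos (ha0 j) hwpos))
      (mul_le_mul (hfac z hz j) (hfac w hw j)
        (mul_nonneg (ha0 j).le (norm_nonneg _)) (norm_nonneg _))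
  clear_value a M C1
  -- pointwise bound
  set K : ℝ := ((1 + R) / R) ^ 4 with hK
  set B : ℝ := (2 * M * C1) ^ 2 * (16 / δ ^ 2) * K with hB
  have hB0 : 0 ≤ B := by positivity
  have hinv4 : ∀ ζ : ℂ, R ≤ ‖ζ‖ →
      (‖ζ‖ ^ 4)⁻¹ ≤ K * ((1 + ‖ζ‖) ^ 4)⁻¹ := by
    intro ζ hζ
    have hζ0 : 0 < ‖ζ‖ := lt_of_lt_of_le hR0 hζ
    refine inv_le_K_inv (pow_pos hζ0 4) (pow_pos (by linarith [norm_nonneg ζ]) 4) ?_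
    have h1 : 1 + ‖ζ‖ ≤ (1 + R) / R * ‖ζ‖ := by
      rw [div_mul_eq_mul_div, le_div_iff₀ hR0]
      nlinarith
    calc (1 + ‖ζ‖) ^ 4 ≤ ((1 + R) / R * ‖ζ‖) ^ 4 :=
          pow_le_pow_left₀ (by linarith [norm_nonneg ζ]) h1 4
      _ = K * ‖ζ‖ ^ 4 := by rw [hK]; ring
  have hgF : ∀ ζ : ℂ, ‖∏ i, (ζ - p i)‖ ^ 2 / ‖∏ i, (ζ - q i)‖ ^ 2
      = ‖F ζ‖ ^ 2 := by
    intro ζ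
    rw [hF]
    simp only [norm_div, div_pow]
  clear_value F K B
  have hpt : ∀ x : ℂ × ℂ, R ≤ ‖x.1‖ → R ≤ ‖x.2‖ →
      |‖∏ i, (x.1 - p i)‖ ^ 2 / ‖∏ i, (x.1 - q i)‖ ^ 2 -
          ‖∏ i, (x.2 - p i)‖ ^ 2 / ‖∏ i, (x.2 - q i)‖ ^ 2| ^ 2 *
        Real.exp (-δ * ‖x.1 - x.2‖)
      ≤ B * ((((1 + ‖x.1‖) ^ 4)⁻¹ + ((1 + ‖x.2‖) ^ 4)⁻¹) *
          Real.exp (-(δ / 2 * ‖x.1 - x.2‖))) := by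
    rintro ⟨z, w⟩ hz hw
    simp only
    have hzpos : 0 < ‖z‖ := lt_of_lt_of_le hR0 hz
    have hwpos : 0 < ‖w‖ := lt_of_lt_of_le hR0 hw
    set t : ℝ := ‖z - w‖ with htdef
    have ht : 0 ≤ t := norm_nonneg _
    rw [hgF z, hgF w]
    -- |g z - g w| bound
    have hgd : |‖F z‖ ^ 2 - ‖F w‖ ^ 2|
        ≤ 2 * M * C1 * (t / (‖z‖ * ‖w‖)) := by
      have h1 : |‖F z‖ ^ 2 - ‖F w‖ ^ 2|
          = |‖F z‖ - ‖F w‖| * (‖F z‖ + ‖F w‖) := by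
        rw [show ‖F z‖ ^ 2 - ‖F w‖ ^ 2
            = (‖F z‖ - ‖F w‖) * (‖F z‖ + ‖F w‖)
            by ring, abs_mul, abs_of_nonneg (add_nonneg (norm_nonneg _) (norm_nonneg _))]
      have h2 : |‖F z‖ - ‖F w‖| ≤ ‖F z - F w‖ :=
        abs_norm_sub_norm_le _ _
      have h3 : ‖F z‖ + ‖F w‖ ≤ 2 * M := by
        have := habsF z hz; have := habsF w hw; linarith
      calc |‖F z‖ ^ 2 - ‖F w‖ ^ 2|
          = |‖F z‖ - ‖F w‖| * (‖F z‖ + ‖F w‖) := h1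
        _ ≤ ‖F z - F w‖ * (2 * M) := by
            refine mul_le_mul h2 h3 (add_nonneg (norm_nonneg _) (norm_nonneg _)) (norm_nonneg _)
        _ ≤ C1 * (t / (‖z‖ * ‖w‖)) * (2 * M) := by
            refine mul_le_mul_of_nonneg_right (hFdiff z w hz hw) (by linarith)
        _ = 2 * M * C1 * (t / (‖z‖ * ‖w‖)) := by ring
    have e0 : |‖F z‖ ^ 2 - ‖F w‖ ^ 2| ^ 2
        ≤ (2 * M * C1) ^ 2 * (t / (‖z‖ * ‖w‖)) ^ 2 := by
      rw [← mul_pow]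
      exact pow_le_pow_left₀ (abs_nonneg _) hgd 2
    have e1 := sq_exp_le δ t hδ ht
    have e2 := inv_sq_sq (‖z‖) (‖w‖) hzpos hwpos
    have e3 := hinv4 z hz
    have e4 := hinv4 w hw
    calc |‖F z‖ ^ 2 - ‖F w‖ ^ 2| ^ 2 * Real.exp (-δ * t)
        = |‖F z‖ ^ 2 - ‖F w‖ ^ 2| ^ 2 * Real.exp (-(δ * t)) := by
          rw [neg_mul]
      _ ≤ ((2 * M * C1) ^ 2 * (t / (‖z‖ * ‖w‖)) ^ 2) * Real.exp (-(δ * t)) :=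
          mul_le_mul_of_nonneg_right e0 (Real.exp_nonneg _)
      _ = (2 * M * C1) ^ 2 * ((t ^ 2 * Real.exp (-(δ * t))) *
            (‖z‖ ^ 2 * ‖w‖ ^ 2)⁻¹) := by ring
      _ ≤ (2 * M * C1) ^ 2 * ((16 / δ ^ 2 * Real.exp (-(δ / 2 * t))) *
            (‖z‖ ^ 2 * ‖w‖ ^ 2)⁻¹) := by
          refine mul_le_mul_of_nonneg_left (mul_le_mul_of_nonneg_right e1 (by positivity))
            (by positivity)
      _ ≤ (2 * M * C1) ^ 2 * ((16 / δ ^ 2 * Real.exp (-(δ / 2 * t))) *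
            ((‖z‖ ^ 4)⁻¹ + (‖w‖ ^ 4)⁻¹)) := by
          refine mul_le_mul_of_nonneg_left (mul_le_mul_of_nonneg_left e2 (by positivity))
            (by positivity)
      _ ≤ (2 * M * C1) ^ 2 * ((16 / δ ^ 2 * Real.exp (-(δ / 2 * t))) *
            (K * ((1 + ‖z‖) ^ 4)⁻¹ + K * ((1 + ‖w‖) ^ 4)⁻¹)) := by
          refine mul_le_mul_of_nonneg_left
            (mul_le_mul_of_nonneg_left (add_le_add e3 e4) (by positivity)) (by positivity)
      _ = B * ((((1 + ‖z‖) ^ 4)⁻¹ + ((1 + ‖w‖) ^ 4)⁻¹) *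
            Real.exp (-(δ / 2 * t))) := by
          rw [hB]; ring
  -- measure-theoretic conclusion
  have hδ2 : 0 < δ / 2 := by positivity
  have hbr : Measurable fun x : ℂ × ℂ =>
      ENNReal.ofReal B * ((ENNReal.ofReal (((1 + ‖x.1‖) ^ 4)⁻¹) +
        ENNReal.ofReal (((1 + ‖x.2‖) ^ 4)⁻¹)) *
        ENNReal.ofReal (Real.exp (-(δ / 2 * ‖x.1 - x.2‖)))) := by
    have hGc : Continuous fun z : ℂ => ENNReal.ofReal (((1 + ‖z‖) ^ 4)⁻¹) :=
      ENNReal.continuous_ofReal.comp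
        (Continuous.inv₀ ((continuous_const.add continuous_norm).pow 4)
          (fun z => by positivity))
    have hΦc : Continuous fun u : ℂ => ENNReal.ofReal (Real.exp (-(δ / 2 * ‖u‖))) :=
      ENNReal.continuous_ofReal.comp
        (Real.continuous_exp.comp ((continuous_const.mul continuous_norm).neg))
    exact (measurable_const.mul
      ((((hGc.comp continuous_fst).measurable).add
        ((hGc.comp continuous_snd).measurable)).mul
        ((hΦc.comp (continuous_fst.sub continuous_snd)).measurable)))
  calc (∫⁻ x : ℂ × ℂ in {x : ℂ × ℂ | R ≤ ‖x.1‖ ∧ R ≤ ‖x.2‖},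
      ENNReal.ofReal
        (|‖∏ i, (x.1 - p i)‖ ^ 2 / ‖∏ i, (x.1 - q i)‖ ^ 2 -
            ‖∏ i, (x.2 - p i)‖ ^ 2 / ‖∏ i, (x.2 - q i)‖ ^ 2| ^ 2 *
          Real.exp (-δ * ‖x.1 - x.2‖)))
      ≤ ∫⁻ x : ℂ × ℂ in {x : ℂ × ℂ | R ≤ ‖x.1‖ ∧ R ≤ ‖x.2‖},
        ENNReal.ofReal B * ((ENNReal.ofReal (((1 + ‖x.1‖) ^ 4)⁻¹) +
          ENNReal.ofReal (((1 + ‖x.2‖) ^ 4)⁻¹)) *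
          ENNReal.ofReal (Real.exp (-(δ / 2 * ‖x.1 - x.2‖)))) := by
        refine setLIntegral_mono hbr ?_
        intro x hx
        refine le_trans (ENNReal.ofReal_le_ofReal (hpt x hx.1 hx.2)) ?_
        rw [ENNReal.ofReal_mul hB0, ENNReal.ofReal_mul (by positivity),
          ENNReal.ofReal_add (by positivity) (by positivity)]
    _ ≤ ∫⁻ x : ℂ × ℂ,
        ENNReal.ofReal B * ((ENNReal.ofReal (((1 + ‖x.1‖) ^ 4)⁻¹) +
          ENNReal.ofReal (((1 + ‖x.2‖) ^ 4)⁻¹)) *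
          ENNReal.ofReal (Real.exp (-(δ / 2 * ‖x.1 - x.2‖)))) :=
        setLIntegral_le_lintegral _ _
    _ = ENNReal.ofReal B * ∫⁻ x : ℂ × ℂ,
        ((ENNReal.ofReal (((1 + ‖x.1‖) ^ 4)⁻¹) +
          ENNReal.ofReal (((1 + ‖x.2‖) ^ 4)⁻¹)) *
          ENNReal.ofReal (Real.exp (-(δ / 2 * ‖x.1 - x.2‖)))) :=
        lintegral_const_mul' _ _ ENNReal.ofReal_ne_top
    _ < ⊤ := ENNReal.mul_lt_top ENNReal.ofReal_lt_top (majorant_fin hδ2)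
end

section
/- For every δ > 0 there exists a constant C > 0, depending only on δ, such that for every C²-smooth compactly supported function φ: ℂ → ℝ, ∬_{ℂ×ℂ} |φ(z) − φ(w)|² e^{−δ|z−w|} dλ(z) dλ(w) ≤ C ∫_ℂ ‖∇φ(w)‖² dλ(w), where ‖∇φ(w)‖ is the Euclidean norm of the gradient of φ at w (viewing ℂ as ℝ²). -/
open MeasureTheory Set ENNReal

/-- Cauchy–Schwarz for lintegral on a measure of total mass 1. -/
lemma stmt10_cs (μ : Measure ℝ) (hμ : μ Set.univ = 1) {f : ℝ → ℝ≥0∞}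
    (hf : AEMeasurable f μ) :
    (∫⁻ t, f t ∂μ) ^ 2 ≤ ∫⁻ t, f t ^ 2 ∂μ := by
  have hpq : Real.HolderConjugate 2 2 := Real.HolderConjugate.two_two
  have h := ENNReal.lintegral_mul_le_Lp_mul_Lq μ hpq hf (aemeasurable_const (b := (1:ℝ≥0∞)))
  simp only [Pi.mul_apply, Pi.one_apply, mul_one, ENNReal.one_rpow, lintegral_const, hμ,
    one_mul, ENNReal.one_rpow] at h
  have h2 : (∫⁻ t, f t ∂μ) ^ 2 ≤ ((∫⁻ a, f a ^ (2:ℝ) ∂μ) ^ (1/(2:ℝ))) ^ 2 :=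
    pow_le_pow_left' h 2
  refine h2.trans_eq ?_
  rw [← ENNReal.rpow_natCast (_ ^ (1/(2:ℝ))) 2, ← ENNReal.rpow_mul]
  norm_num

/-- `x^5 ≤ 3125 * exp x` for `x ≥ 0`. -/
lemma stmt10_pow5 {x : ℝ} (hx : 0 ≤ x) : x ^ 5 ≤ 3125 * Real.exp x := by
  have h1 : x / 5 ≤ Real.exp (x / 5) :=
    le_trans (by linarith) (Real.add_one_le_exp (x/5))
  have h2 : (x / 5) ^ 5 ≤ Real.exp (x / 5) ^ 5 :=
    pow_le_pow_left₀ (by positivity) h1 5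
  have h3 : Real.exp (x / 5) ^ 5 = Real.exp x := by
    rw [← Real.exp_nat_mul]; norm_num; ring
  rw [h3] at h2
  calc x ^ 5 = 3125 * (x/5)^5 := by ring
    _ ≤ 3125 * Real.exp x := by nlinarith

/-- Integrability of the kernel `e^{-δ‖u‖} ‖u‖²` on `ℂ`. -/
lemma stmt10_K_integrable {δ : ℝ} (hδ : 0 < δ) :
    Integrable (fun u : ℂ => Real.exp (-δ * ‖u‖) * ‖u‖ ^ 2) := by
  have hdim : ((Module.finrank ℝ ℂ : ℝ)) < 3 := by
    rw [Complex.finrank_real_complex]; norm_num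
  have hint : Integrable (fun u : ℂ => (3125 * Real.exp δ / δ^5) * (1 + ‖u‖) ^ (-(3:ℝ))) :=
    (integrable_one_add_norm (E := ℂ) hdim).const_mul _
  refine hint.mono' ?_ ?_
  · exact ((Real.continuous_exp.comp (continuous_const.mul continuous_norm)).mul
      (continuous_norm.pow 2)).aestronglyMeasurable
  · filter_upwards with u
    set r := ‖u‖ with hr
    have hr0 : (0:ℝ) ≤ r := norm_nonneg u
    have hbd : Real.exp (-δ*r) * r^2 * (1+r)^3 ≤ 3125 * Real.exp δ / δ^5 := by
      have h1 : r^2 * (1+r)^3 ≤ (1+r)^5 := by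
        nlinarith [pow_le_pow_left₀ hr0 (by linarith : r ≤ 1+r) 2,
          pow_nonneg (by linarith : (0:ℝ) ≤ 1+r) 3, pow_nonneg hr0 2]
      have h2 : (δ * (1+r))^5 ≤ 3125 * Real.exp (δ * (1+r)) := stmt10_pow5 (by positivity)
      have h3 : (1+r)^5 ≤ 3125 * Real.exp (δ * (1+r)) / δ^5 := by
        rw [mul_pow] at h2
        rw [le_div_iff₀ (by positivity)]
        calc (1+r)^5 * δ^5 = δ^5 * (1+r)^5 := by ring
          _ ≤ 3125 * Real.exp (δ * (1+r)) := h2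
      have h4 : Real.exp (δ * (1+r)) = Real.exp δ * Real.exp (δ * r) := by
        rw [← Real.exp_add]; ring_nf
      have e1 : Real.exp (-δ*r) * Real.exp (δ*r) = 1 := by
        rw [← Real.exp_add]; ring_nf; exact Real.exp_zero
      have h5 : Real.exp (-δ*r) * (1+r)^5 ≤ 3125 * Real.exp δ / δ^5 := by
        refine (mul_le_mul_of_nonneg_left h3 (Real.exp_nonneg _)).trans (le_of_eq ?_)
        rw [h4]
        calc Real.exp (-δ*r) * (3125 * (Real.exp δ * Real.exp (δ*r)) / δ^5)
            = (Real.exp (-δ*r) * Real.exp (δ*r)) * (3125 * Real.exp δ / δ^5) := by ring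
          _ = 3125 * Real.exp δ / δ^5 := by rw [e1, one_mul]
      calc Real.exp (-δ*r) * r^2 * (1+r)^3 = Real.exp (-δ*r) * (r^2 * (1+r)^3) := by ring
        _ ≤ Real.exp (-δ*r) * (1+r)^5 := mul_le_mul_of_nonneg_left h1 (Real.exp_nonneg _)
        _ ≤ _ := h5
    have hpos3 : (0:ℝ) < (1+r)^3 := by positivity
    have hrw : (1+r) ^ (-(3:ℝ)) = ((1+r)^3)⁻¹ := by
      rw [Real.rpow_neg (by linarith), ← Real.rpow_natCast (1+r) 3]; norm_num
    rw [Real.norm_eq_abs, abs_of_nonneg (by positivity), hrw, mul_comm (3125 * Real.exp δ / δ^5)]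
    rw [inv_mul_eq_div, le_div_iff₀ hpos3]
    calc Real.exp (-δ*r) * r^2 * (1+r)^3 ≤ 3125 * Real.exp δ / δ^5 := hbd
      _ = 3125 * Real.exp δ / δ^5 := rfl

/-- For every `δ > 0` there is `C > 0`, depending only on `δ`, such that for
every `C²`-smooth compactly supported `φ : ℂ → ℝ`,
`∬ |φ(z) − φ(w)|² e^(−δ|z−w|) dλ dλ ≤ C ∫ ‖∇φ(w)‖² dλ(w)`
(the gradient norm being the norm of the Fréchet derivative, `ℂ ≅ ℝ²` Euclidean). -/
theorem stmt10 (δ : ℝ) (hδ : 0 < δ) :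
    ∃ C > (0 : ℝ), ∀ φ : ℂ → ℝ, ContDiff ℝ 2 φ → HasCompactSupport φ →
      (∫⁻ x : ℂ × ℂ,
          ENNReal.ofReal (|φ x.1 - φ x.2| ^ 2 * Real.exp (-δ * ‖x.1 - x.2‖))) ≤
        ENNReal.ofReal (C * ∫ w : ℂ, ‖fderiv ℝ φ w‖ ^ 2) := by
  classical
  set K : ℂ → ℝ := fun u => Real.exp (-δ * ‖u‖) * ‖u‖ ^ 2 with hKdef
  have hKint : Integrable K := stmt10_K_integrable hδ
  have hKnn : ∀ u, 0 ≤ K u := fun u => by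
    simp only [hKdef]; positivity
  have hKcont : Continuous K :=
    (Real.continuous_exp.comp (continuous_const.mul continuous_norm)).mul (continuous_norm.pow 2)
  have hCnn : 0 ≤ ∫ u : ℂ, K u := integral_nonneg hKnn
  refine ⟨(∫ u : ℂ, K u) + 1, by linarith, ?_⟩
  intro φ hφ hsupp
  -- basic facts about φ
  have hφd : Differentiable ℝ φ := hφ.differentiable two_ne_zero
  have hfc : Continuous (fderiv ℝ φ) := hφ.continuous_fderiv two_ne_zero
  set g : ℂ → ℝ≥0∞ := fun v => ENNReal.ofReal (‖fderiv ℝ φ v‖ ^ 2) with hgdef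
  have hgc : Continuous g := ENNReal.continuous_ofReal.comp (hfc.norm.pow 2)
  have hgm : Measurable g := hgc.measurable
  have hIgr : Integrable (fun v : ℂ => ‖fderiv ℝ φ v‖ ^ 2) := by
    refine Continuous.integrable_of_hasCompactSupport (hfc.norm.pow 2) ?_
    exact (hsupp.fderiv ℝ).comp_left (g := fun y => ‖y‖^2) (by simp)
  set D : ℝ≥0∞ := ∫⁻ v, g v with hDdef
  have hD : D = ENNReal.ofReal (∫ w : ℂ, ‖fderiv ℝ φ w‖ ^ 2) :=
    (ofReal_integral_eq_lintegral_ofReal hIgr (ae_of_all _ fun v => by positivity)).symm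
  set μt : Measure ℝ := volume.restrict (Ioc (0:ℝ) 1) with hμtdef
  have hμt : μt Set.univ = 1 := by
    simp [hμtdef, Real.volume_Ioc]
  -- pointwise key estimate
  have key : ∀ z w : ℂ,
      ENNReal.ofReal (|φ z - φ w| ^ 2 * Real.exp (-δ * ‖z - w‖)) ≤
      ENNReal.ofReal (K (z - w)) * ∫⁻ t, g (w + t • (z - w)) ∂μt := by
    intro z w
    set u : ℂ := z - w with hu
    have hγ : ∀ t : ℝ, HasDerivAt (fun s : ℝ => w + s • u) u t := by
      intro t
      simpa using ((hasDerivAt_id t).smul_const u).const_add w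
    have hcomp : ∀ t : ℝ, HasDerivAt (fun s : ℝ => φ (w + s • u))
        ((fderiv ℝ φ (w + t • u)) u) t :=
      fun t => ((hφd (w + t • u)).hasFDerivAt).comp_hasDerivAt t (hγ t)
    have hcurve : Continuous fun t : ℝ => w + t • u := by
      exact continuous_const.add (continuous_id.smul continuous_const)
    have hcont : Continuous fun t : ℝ => (fderiv ℝ φ (w + t • u)) u :=
      (hfc.comp hcurve).clm_apply continuous_const
    have hFTC : ∫ t in (0:ℝ)..1, (fderiv ℝ φ (w + t • u)) u = φ z - φ w := by
      rw [intervalIntegral.integral_eq_sub_of_hasDerivAt (fun t _ => hcomp t)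
        (hcont.intervalIntegrable 0 1)]
      simp [hu]
    have hnormcont : Continuous fun t : ℝ => ‖fderiv ℝ φ (w + t • u)‖ :=
      (hfc.comp hcurve).norm
    have hnint : IntegrableOn (fun t : ℝ => ‖fderiv ℝ φ (w + t • u)‖) (Ioc (0:ℝ) 1) :=
      hnormcont.integrableOn_Ioc
    set A : ℝ := ∫ t in Ioc (0:ℝ) 1, ‖fderiv ℝ φ (w + t • u)‖ with hAdef
    have hA0 : 0 ≤ A := integral_nonneg fun t => norm_nonneg _
    have habs : |φ z - φ w| ≤ A * ‖u‖ := by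
      rw [← hFTC, intervalIntegral.integral_of_le zero_le_one, ← Real.norm_eq_abs]
      refine (norm_integral_le_integral_norm _).trans ?_
      rw [hAdef, ← integral_mul_const]
      refine integral_mono_of_nonneg (ae_of_all _ fun t => norm_nonneg _)
        (hnint.mul_const _) (ae_of_all _ fun t => (fderiv ℝ φ (w + t • u)).le_opNorm u)
    have hsq : |φ z - φ w| ^ 2 * Real.exp (-δ * ‖z - w‖) ≤ K u * A ^ 2 := by
      have habs2 : |φ z - φ w| ^ 2 ≤ (A * ‖u‖) ^ 2 := pow_le_pow_left₀ (abs_nonneg _) habs 2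
      have hnorm : ‖z - w‖ = ‖u‖ := by rw [hu]
      rw [hnorm]
      calc |φ z - φ w| ^ 2 * Real.exp (-δ * ‖u‖)
          ≤ (A * ‖u‖) ^ 2 * Real.exp (-δ * ‖u‖) :=
            mul_le_mul_of_nonneg_right habs2 (Real.exp_nonneg _)
        _ = K u * A ^ 2 := by simp only [hKdef]; ring
    refine (ENNReal.ofReal_le_ofReal hsq).trans ?_
    rw [ENNReal.ofReal_mul (hKnn u)]
    refine mul_le_mul_right ?_ _
    have hAof : ENNReal.ofReal A =
        ∫⁻ t, ENNReal.ofReal ‖fderiv ℝ φ (w + t • u)‖ ∂μt :=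
      ofReal_integral_eq_lintegral_ofReal hnint (ae_of_all _ fun t => norm_nonneg _)
    have hmeas : AEMeasurable (fun t : ℝ => ENNReal.ofReal ‖fderiv ℝ φ (w + t • u)‖) μt :=
      (ENNReal.continuous_ofReal.comp hnormcont).measurable.aemeasurable
    calc ENNReal.ofReal (A ^ 2) = (ENNReal.ofReal A) ^ 2 := ENNReal.ofReal_pow hA0 2
      _ = (∫⁻ t, ENNReal.ofReal ‖fderiv ℝ φ (w + t • u)‖ ∂μt) ^ 2 := by rw [hAof]
      _ ≤ ∫⁻ t, (ENNReal.ofReal ‖fderiv ℝ φ (w + t • u)‖) ^ 2 ∂μt := stmt10_cs μt hμt hmeas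
      _ = ∫⁻ t, g (w + t • u) ∂μt := by
          refine lintegral_congr fun t => ?_
          rw [← ENNReal.ofReal_pow (norm_nonneg _)]
  -- the majorant
  set H : ℂ × ℂ → ℝ≥0∞ := fun x =>
    ENNReal.ofReal (K (x.1 - x.2)) * ∫⁻ t, g (x.2 + t • (x.1 - x.2)) ∂μt with hHdef
  have hGm : Measurable fun p : (ℂ × ℂ) × ℝ => g (p.1.2 + p.2 • (p.1.1 - p.1.2)) := by
    refine hgm.comp ?_
    exact (continuous_fst.snd.add (continuous_snd.smul
      (continuous_fst.fst.sub continuous_fst.snd))).measurable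
  have hSm : Measurable fun x : ℂ × ℂ => ∫⁻ t, g (x.2 + t • (x.1 - x.2)) ∂μt :=
    Measurable.lintegral_prod_right' hGm
  have hHm : Measurable H :=
    ((ENNReal.measurable_ofReal.comp
      (hKcont.measurable.comp (measurable_fst.sub measurable_snd)))).mul hSm
  have hswapm : ∀ u : ℂ, AEMeasurable
      (Function.uncurry fun (w : ℂ) (t : ℝ) => g (w + t • u)) ((volume : Measure ℂ).prod μt) := by
    intro u
    exact (hgm.comp ((continuous_fst.add (continuous_snd.smul
      continuous_const)).measurable)).aemeasurable
  have hinner : ∀ u : ℂ, (∫⁻ w : ℂ, ∫⁻ t, g (w + t • u) ∂μt) = D := by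
    intro u
    rw [lintegral_lintegral_swap (hswapm u)]
    have : ∀ t : ℝ, (∫⁻ w : ℂ, g (w + t • u)) = D :=
      fun t => lintegral_add_right_eq_self g (t • u)
    simp_rw [this]
    simp [hμt]
  calc (∫⁻ x : ℂ × ℂ,
        ENNReal.ofReal (|φ x.1 - φ x.2| ^ 2 * Real.exp (-δ * ‖x.1 - x.2‖)))
      ≤ ∫⁻ x : ℂ × ℂ, H x := lintegral_mono fun x => key x.1 x.2
    _ = ∫⁻ p : ℂ × ℂ, H (p.1 + p.2, p.2) := by
        rw [Measure.volume_eq_prod]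
        exact ((measurePreserving_add_prod volume volume).lintegral_comp hHm).symm
    _ = ∫⁻ u : ℂ, ∫⁻ w : ℂ, ENNReal.ofReal (K u) * ∫⁻ t, g (w + t • u) ∂μt := by
        rw [Measure.volume_eq_prod, lintegral_prod (fun p : ℂ × ℂ => H (p.1 + p.2, p.2))
          (by exact (hHm.comp
            ((measurable_fst.add measurable_snd).prodMk measurable_snd)).aemeasurable)]
        refine lintegral_congr fun u => lintegral_congr fun w => ?_
        simp only [hHdef, add_sub_cancel_right]
    _ = ∫⁻ u : ℂ, ENNReal.ofReal (K u) * D := by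
        refine lintegral_congr fun u => ?_
        rw [lintegral_const_mul' _ _ ENNReal.ofReal_ne_top, hinner u]
    _ = (∫⁻ u : ℂ, ENNReal.ofReal (K u)) * D :=
        lintegral_mul_const _ (ENNReal.measurable_ofReal.comp hKcont.measurable)
    _ ≤ ENNReal.ofReal ((∫ u : ℂ, K u) + 1) * D := by
        refine mul_le_mul_left ?_ D
        rw [← ofReal_integral_eq_lintegral_ofReal hKint (ae_of_all _ hKnn)]
        exact ENNReal.ofReal_le_ofReal (by linarith)
    _ = ENNReal.ofReal (((∫ u : ℂ, K u) + 1) * ∫ w : ℂ, ‖fderiv ℝ φ w‖ ^ 2) := by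
        rw [hD, ← ENNReal.ofReal_mul (by linarith)]
end

section
/- For every r₀ > 0 and every ε with 0 < ε < 1, there exists a C²-smooth compactly supported function φ: ℝ → ℝ such that φ(r) = 1 for all r ∈ [0, r₀/2], |φ′(r)| ≤ ε/r for all r > 0, and ∫_0^∞ φ′(r)² r dr ≤ ε + ε² log 4. -/
open MeasureTheory

/-- For every `r₀ > 0` and `0 < ε < 1` there is a `C²`-smooth compactly
supported `φ : ℝ → ℝ` with `φ ≡ 1` on `[0, r₀/2]`, `|φ'(r)| ≤ ε/r` for all `r > 0`, and
`∫₀^∞ φ'(r)² r dr ≤ ε + ε² log 4`. -/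
theorem stmt11 (r₀ ε : ℝ) (hr : 0 < r₀) (hε : 0 < ε) (hε1 : ε < 1) :
    ∃ φ : ℝ → ℝ, ContDiff ℝ 2 φ ∧ HasCompactSupport φ ∧
      (∀ r ∈ Set.Icc (0 : ℝ) (r₀ / 2), φ r = 1) ∧
      (∀ r > (0 : ℝ), |deriv φ r| ≤ ε / r) ∧
      (∫ r in Set.Ioi (0 : ℝ), (deriv φ r) ^ 2 * r) ≤ ε + ε ^ 2 * Real.log 4 := by
  set a : ℝ := r₀ / 2 with ha_def
  have ha : 0 < a := by positivity
  set g : ℝ → ℝ := Real.smoothTransition with hg_def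
  have hgC : ∀ n : ℕ∞, ContDiff ℝ n g := fun n => Real.smoothTransition.contDiff
  set gd : ℝ → ℝ := deriv g with hgd_def
  have hgdc : Continuous gd := (hgC 1).continuous_deriv le_rfl
  -- deriv g vanishes outside [0,1]
  have hgd0 : ∀ x : ℝ, x ∉ Set.Icc (0:ℝ) 1 → gd x = 0 := by
    intro x hx
    rcases not_and_or.1 hx with h | h
    · push_neg at h
      have hev : g =ᶠ[nhds x] (fun _ => (0:ℝ)) := by
        filter_upwards [Iio_mem_nhds h] with y hy
        exact Real.smoothTransition.zero_of_nonpos (le_of_lt hy)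
      simpa [hgd_def] using hev.deriv_eq.trans (deriv_const x 0)
    · push_neg at h
      have hev : g =ᶠ[nhds x] (fun _ => (1:ℝ)) := by
        filter_upwards [Ioi_mem_nhds h] with y hy
        exact Real.smoothTransition.one_of_one_le (le_of_lt hy)
      simpa [hgd_def] using hev.deriv_eq.trans (deriv_const x 1)
  -- bound on deriv g
  obtain ⟨C, hC⟩ : ∃ C, ∀ x ∈ Set.Icc (0:ℝ) 1, ‖gd x‖ ≤ C :=
    isCompact_Icc.exists_bound_of_continuousOn hgdc.continuousOn
  set M : ℝ := max C 1 with hM_def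
  have hM1 : (1:ℝ) ≤ M := le_max_right _ _
  have hM0 : (0:ℝ) < M := lt_of_lt_of_le one_pos hM1
  have hMb : ∀ x : ℝ, |gd x| ≤ M := by
    intro x
    by_cases hx : x ∈ Set.Icc (0:ℝ) 1
    · exact le_trans (hC x hx) (le_max_left _ _)
    · simp [hgd0 x hx, le_of_lt hM0]
  set c : ℝ := ε / M ^ 2 with hc_def
  have hc : 0 < c := by positivity
  set φ : ℝ → ℝ := fun r => g (1 - c * Real.log (r / a)) with hφ_def
  set u : ℝ → ℝ := fun r => 1 - c * Real.log (r / a) with hu_def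
  -- φ = 1 on |r| ≤ a
  have hφ1 : ∀ r : ℝ, |r| ≤ a → φ r = 1 := by
    intro r hr'
    have hlog : Real.log (r / a) ≤ 0 := by
      rw [← Real.log_abs]
      apply Real.log_nonpos (abs_nonneg _)
      rw [abs_div, abs_of_pos ha]
      exact div_le_one_of_le₀ hr' ha.le
    have : (1:ℝ) ≤ 1 - c * Real.log (r / a) := by nlinarith
    exact Real.smoothTransition.one_of_one_le this
  set R : ℝ := a * Real.exp (1 / c) with hR_def
  have haR : a ≤ R := by
    nlinarith [Real.one_le_exp (by positivity : (0:ℝ) ≤ 1 / c)]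
  have hR0 : 0 < R := lt_of_lt_of_le ha haR
  -- φ = 0 for |r| > R
  have hφ0 : ∀ r : ℝ, R < |r| → φ r = 0 := by
    intro r hr'
    have h1 : Real.exp (1 / c) < |r| / a := by
      rw [lt_div_iff₀ ha]
      nlinarith
    have h2 : 1 / c < Real.log (r / a) := by
      rw [← Real.log_abs, abs_div, abs_of_pos ha]
      calc 1 / c = Real.log (Real.exp (1 / c)) := (Real.log_exp _).symm
        _ < _ := Real.log_lt_log (Real.exp_pos _) h1
    apply Real.smoothTransition.zero_of_nonpos
    rw [div_lt_iff₀ hc] at h2  -- 1/c < L ↔ 1 < L * c? careful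
    nlinarith
  -- derivative formula for r > 0
  have hderivAt : ∀ r : ℝ, 0 < r → HasDerivAt φ (gd (u r) * (-(c / r))) r := by
    intro r hr'
    have hra : r / a ≠ 0 := by positivity
    have h1 : HasDerivAt (fun x : ℝ => x / a) (1 / a) r := by
      simpa using (hasDerivAt_id r).div_const a
    have h2 : HasDerivAt Real.log (r / a)⁻¹ (r / a) := Real.hasDerivAt_log hra
    have h3 : HasDerivAt (fun x : ℝ => Real.log (x / a)) ((r / a)⁻¹ * (1 / a)) r :=
      by have := h2.comp r h1; exact this
    have h3' : HasDerivAt (fun x : ℝ => Real.log (x / a)) (1 / r) r := by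
      convert h3 using 1
      field_simp
    have h4 : HasDerivAt u (-(c * (1 / r))) r := (h3'.const_mul c).const_sub 1
    have hgdiff : HasDerivAt g (gd (u r)) (u r) :=
      (((hgC 1).differentiable (by simp)) (u r)).hasDerivAt
    have := hgdiff.comp r h4
    rw [show gd (u r) * (-(c / r)) = gd (u r) * (-(c * (1 / r))) by ring]
    exact this
  have hderiv : ∀ r : ℝ, 0 < r → deriv φ r = gd (u r) * (-(c / r)) := fun r hr' =>
    (hderivAt r hr').deriv
  -- deriv φ vanishes on (0, a) and (R, ∞)
  have hd0a : ∀ r : ℝ, 0 < r → r < a → deriv φ r = 0 := by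
    intro r h1 h2
    have hev : φ =ᶠ[nhds r] (fun _ => (1:ℝ)) := by
      have : Set.Ioo (-a) a ∈ nhds r := Ioo_mem_nhds (by linarith) h2
      filter_upwards [this] with y hy
      exact hφ1 y (abs_lt.2 ⟨hy.1, hy.2⟩).le
    exact hev.deriv_eq.trans (deriv_const r 1)
  have hd0R : ∀ r : ℝ, R < r → deriv φ r = 0 := by
    intro r h1
    have hev : φ =ᶠ[nhds r] (fun _ => (0:ℝ)) := by
      filter_upwards [Ioi_mem_nhds h1] with y hy
      exact hφ0 y (lt_of_lt_of_le hy (le_abs_self y))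
    exact hev.deriv_eq.trans (deriv_const r 0)
  refine ⟨φ, ?_, ?_, ?_, ?_, ?_⟩
  · -- ContDiff
    rw [contDiff_iff_contDiffAt]
    intro x
    by_cases hx : |x| < a
    · apply ContDiffAt.congr_of_eventuallyEq contDiffAt_const
      have : Set.Ioo (-a) a ∈ nhds x := Ioo_mem_nhds (by cases abs_lt.1 hx; linarith) (abs_lt.1 hx).2
      filter_upwards [this] with y hy
      exact hφ1 y (abs_lt.2 ⟨hy.1, hy.2⟩).le
    · have hx0 : x ≠ 0 := by
        intro h; apply hx; rw [h]; simpa using ha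
      have hxa : x / a ≠ 0 := div_ne_zero hx0 (ne_of_gt ha)
      exact Real.smoothTransition.contDiffAt.comp x
        (contDiffAt_const.sub (contDiffAt_const.mul
          ((Real.contDiffAt_log.mpr hxa).comp x (contDiffAt_id.div_const a))))
  · -- compact support
    apply HasCompactSupport.intro (isCompact_Icc (a := -R) (b := R))
    intro r hrR
    apply hφ0
    rcases not_and_or.1 hrR with h | h <;> push_neg at h
    · exact lt_of_lt_of_le (by linarith) (neg_le_abs r)
    · exact lt_of_lt_of_le h (le_abs_self r)
  · -- equals 1 on [0, r₀/2]
    intro r hrm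
    exact hφ1 r (by rw [abs_of_nonneg hrm.1]; exact hrm.2)
  · -- derivative bound
    intro r hr'
    rw [hderiv r hr', abs_mul, abs_neg, abs_div, abs_of_pos hc, abs_of_pos hr']
    calc |gd (u r)| * (c / r) ≤ M * (c / r) :=
          mul_le_mul_of_nonneg_right (hMb _) (by positivity)
      _ ≤ ε / r := by
          rw [hc_def, show M * (ε / M ^ 2 / r) = ε / (M * r) by field_simp]
          gcongr
          nlinarith
  · -- the integral bound
    have key : (∫ r in Set.Ioi (0 : ℝ), (deriv φ r) ^ 2 * r) ≤ ε := by
      have hstep1 : (∫ r in Set.Ioi (0 : ℝ), (deriv φ r) ^ 2 * r)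
          = ∫ r in Set.Icc a R, (deriv φ r) ^ 2 * r := by
        have hsub : Set.Ioi (0:ℝ) ∩ Set.Icc a R = Set.Icc a R :=
          Set.inter_eq_self_of_subset_right (fun y hy => lt_of_lt_of_le ha hy.1)
        rw [setIntegral_congr_fun measurableSet_Ioi
          (g := Set.indicator (Set.Icc a R) (fun r => (deriv φ r) ^ 2 * r)) ?_,
          setIntegral_indicator measurableSet_Icc, hsub]
        intro r hrp
        by_cases h : r ∈ Set.Icc a R
        · rw [Set.indicator_of_mem h]
        · rw [Set.indicator_of_notMem h]
          rcases not_and_or.1 h with h' | h' <;> push_neg at h' <;>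
            show deriv φ r ^ 2 * r = 0
          · rw [hd0a r hrp h']; ring
          · rw [hd0R r h']; ring
      have hstep2 : (∫ r in Set.Icc a R, (deriv φ r) ^ 2 * r)
          = ∫ r in a..R, (deriv φ r) ^ 2 * r := by
        rw [integral_Icc_eq_integral_Ioc, intervalIntegral.integral_of_le haR]
      have hstep3 : (∫ r in a..R, (deriv φ r) ^ 2 * r)
          = ∫ r in a..R, (-(c / r)) • ((fun v => -c * (gd v) ^ 2) ∘ u) r := by
        apply intervalIntegral.integral_congr
        intro x hx
        rw [Set.uIcc_of_le haR] at hx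
        have hx0 : 0 < x := lt_of_lt_of_le ha hx.1
        show deriv φ x ^ 2 * x = -(c / x) • ((fun v => -c * (gd v) ^ 2) ∘ u) x
        simp only [Function.comp_apply, smul_eq_mul]
        rw [hderiv x hx0]
        have hxne : x ≠ 0 := ne_of_gt hx0
        field_simp
      have hua : u a = 1 := by
        simp [hu_def, div_self (ne_of_gt ha)]
      have huR : u R = 0 := by
        simp only [hu_def, hR_def]
        rw [mul_div_cancel_left₀ _ (ne_of_gt ha), Real.log_exp]
        field_simp
        norm_num
      have hstep4 : (∫ r in a..R, (-(c / r)) • ((fun v => -c * (gd v) ^ 2) ∘ u) r)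
          = ∫ v in (1:ℝ)..0, -c * (gd v) ^ 2 := by
        rw [← hua, ← huR]
        apply intervalIntegral.integral_comp_smul_deriv
        · intro x hx
          rw [Set.uIcc_of_le haR] at hx
          have hx0 : 0 < x := lt_of_lt_of_le ha hx.1
          have h := hderivAt x hx0
          have h4 : HasDerivAt u (-(c / x)) x := by
            have hra : x / a ≠ 0 := by positivity
            have h1 : HasDerivAt (fun y : ℝ => y / a) (1 / a) x := by
              simpa using (hasDerivAt_id x).div_const a
            have h2 : HasDerivAt Real.log (x / a)⁻¹ (x / a) := Real.hasDerivAt_log hra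
            have h3 : HasDerivAt (fun y : ℝ => Real.log (y / a)) ((x / a)⁻¹ * (1 / a)) x :=
              by have := h2.comp x h1; exact this
            have h3' : HasDerivAt (fun y : ℝ => Real.log (y / a)) (1 / x) x := by
              convert h3 using 1; field_simp
            have := (h3'.const_mul c).const_sub 1
            rw [show -(c / x) = -(c * (1 / x)) by ring]; exact this
          exact h4
        · apply ContinuousOn.neg
          apply continuousOn_const.div continuousOn_id
          intro x hx
          rw [Set.uIcc_of_le haR] at hx
          exact ne_of_gt (lt_of_lt_of_le ha hx.1)
        · exact continuous_const.mul (hgdc.pow 2)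
      have hstep5 : (∫ v in (1:ℝ)..0, -c * (gd v) ^ 2) = ∫ v in (0:ℝ)..1, c * (gd v) ^ 2 := by
        rw [intervalIntegral.integral_symm]
        rw [← intervalIntegral.integral_neg]
        congr 1; funext v; ring
      have hstep6 : (∫ v in (0:ℝ)..1, c * (gd v) ^ 2) ≤ ∫ v in (0:ℝ)..1, c * M ^ 2 := by
        apply intervalIntegral.integral_mono_on zero_le_one
        · exact (continuous_const.mul (hgdc.pow 2)).intervalIntegrable _ _
        · exact intervalIntegrable_const
        · intro x _
          have h1 : (gd x) ^ 2 ≤ M ^ 2 := by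
            have := hMb x
            nlinarith [abs_nonneg (gd x), sq_abs (gd x)]
          nlinarith
      have hstep7 : (∫ v in (0:ℝ)..1, c * M ^ 2) = ε := by
        rw [intervalIntegral.integral_const]
        simp only [smul_eq_mul, sub_zero, one_mul, hc_def]
        field_simp
      rw [hstep1, hstep2, hstep3, hstep4, hstep5]
      rw [← hstep7]
      exact hstep6
    have hlog4 : 0 ≤ Real.log 4 := Real.log_nonneg (by norm_num)
    nlinarith
end

section
/- Let (E, μ), Π be as in the kernel setting, let 0 < ε ≤ 1 ≤ M, and let g: E → ℝ be measurable with ε ≤ g ≤ M, L(g) < ∞ and V(g) < ∞. Let (E_n)_{n≥1} be an increasing sequence of measurable subsets of E with ∪_n E_n = E such that lim_{n→∞} ∫_{E_n} (∫_{E \ E_n} |g(x) − 1|² |Π(x,y)|² dμ(x)) dμ(y) = 0. Define g_n = 1 + (g − 1)·χ_{E_n}. Then L(g_n/g) → 0 and V(g_n/g) → 0 as n → ∞. -/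
open MeasureTheory Filter
open scoped ENNReal


lemma aux_ofReal_pow_mul_le {u t c r : ℝ} (hc : 0 ≤ c) (h : |u| ≤ c * |t|) (m : ℕ) :
    ENNReal.ofReal (|u| ^ m * r) ≤ ENNReal.ofReal (c ^ m) * ENNReal.ofReal (|t| ^ m * r) := by
  rcases le_or_gt r 0 with hr | hr
  · have h1 : |u| ^ m * r ≤ 0 :=
      mul_nonpos_iff.mpr (Or.inl ⟨pow_nonneg (abs_nonneg u) m, hr⟩)
    simp [ENNReal.ofReal_eq_zero.mpr h1]
  · rw [← ENNReal.ofReal_mul (pow_nonneg hc m)]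
    apply ENNReal.ofReal_le_ofReal
    have h2 : |u| ^ m ≤ c ^ m * |t| ^ m := by
      rw [← mul_pow]; exact pow_le_pow_left₀ (abs_nonneg u) h m
    calc |u| ^ m * r ≤ (c ^ m * |t| ^ m) * r := mul_le_mul_of_nonneg_right h2 hr.le
      _ = c ^ m * (|t| ^ m * r) := by ring

lemma aux_tendsto_compl {α : Type*} [MeasurableSpace α] (ν : Measure α)
    (f : α → ℝ≥0∞) (hf : Measurable f)
    (S : ℕ → Set α) (hS : ∀ n, MeasurableSet (S n)) (hmono : Monotone S)
    (hunion : (⋃ n, S n) = Set.univ) (hfin : ∫⁻ x, f x ∂ν < ⊤) :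
    Tendsto (fun n => ∫⁻ x in (S n)ᶜ, f x ∂ν) atTop (nhds 0) := by
  set T := ∫⁻ x, f x ∂ν with hT
  have hDmono : Monotone (fun n => ∫⁻ x in S n, f x ∂ν) :=
    fun a b hab => lintegral_mono_set (hmono hab)
  have hsup : (⨆ n, ∫⁻ x in S n, f x ∂ν) = T := by
    have h1 : ∀ n, ∫⁻ x in S n, f x ∂ν = ∫⁻ x, (S n).indicator f x ∂ν := fun n =>
      (lintegral_indicator (hS n) f).symm
    simp_rw [h1]
    rw [← lintegral_iSup (fun n => hf.indicator (hS n))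
        (fun a b hab => Set.indicator_le_indicator_of_subset (hmono hab) (fun _ => zero_le))]
    refine lintegral_congr fun x => ?_
    have hx : ∃ n, x ∈ S n := by
      have := hunion ▸ Set.mem_univ x
      simpa [Set.mem_iUnion] using this
    obtain ⟨n, hn⟩ := hx
    refine le_antisymm (iSup_le fun m => Set.indicator_le_self _ _ x) ?_
    exact le_iSup_of_le n (by simp [Set.indicator_of_mem hn])
  have hD : Tendsto (fun n => ∫⁻ x in S n, f x ∂ν) atTop (nhds T) := by
    rw [← hsup]; exact tendsto_atTop_iSup hDmono
  have hC : ∀ n, ∫⁻ x in (S n)ᶜ, f x ∂ν = T - ∫⁻ x in S n, f x ∂ν := by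
    intro n
    have hadd : (∫⁻ x in S n, f x ∂ν) + ∫⁻ x in (S n)ᶜ, f x ∂ν = T :=
      lintegral_add_compl f (hS n)
    have hne : ∫⁻ x in S n, f x ∂ν ≠ ⊤ :=
      ((setLIntegral_le_lintegral _ _).trans_lt hfin).ne
    exact ENNReal.eq_sub_of_add_eq hne (by rw [add_comm]; exact hadd)
  simp_rw [hC]
  have := ENNReal.Tendsto.sub (tendsto_const_nhds (x := T) (f := atTop)) hD (Or.inl hfin.ne)
  simpa using this


/-- `L(g) = ∫_E |g(x) − 1|³ Π(x,x) dμ(x)` (the diagonal `Π(x,x)` being real). -/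
noncomputable def kernelL {E : Type*} [MeasurableSpace E] (μ : Measure E)
    (K : E → E → ℂ) (g : E → ℝ) : ℝ≥0∞ :=
  ∫⁻ x, ENNReal.ofReal (|g x - 1| ^ 3 * (K x x).re) ∂μ

/-- `V(g) = ∬_{E×E} |g(x) − g(y)|² |Π(x,y)|² dμ(x) dμ(y)`. -/
noncomputable def kernelV {E : Type*} [MeasurableSpace E] (μ : Measure E)
    (K : E → E → ℂ) (g : E → ℝ) : ℝ≥0∞ :=
  ∫⁻ x : E × E,
    ENNReal.ofReal (|g x.1 - g x.2| ^ 2 * ‖K x.1 x.2‖ ^ 2) ∂(μ.prod μ)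

/-- In the kernel setting, with `ε ≤ g ≤ M`, `L(g) < ∞`, `V(g) < ∞`, and an
increasing exhausting sequence `(E_n)` such that
`∫_{E_n} ∫_{E∖E_n} |g(x)−1|² |Π(x,y)|² dμ(x) dμ(y) → 0`, the cut-offs
`g_n = 1 + (g−1)·χ_{E_n}` satisfy `L(g_n/g) → 0` and `V(g_n/g) → 0`. -/
theorem stmt15 {E : Type*} [MeasurableSpace E] (μ : Measure E) [SigmaFinite μ]
    (K : E → E → ℂ) (hK : Measurable (Function.uncurry K))
    (hsymm : ∀ x y, K y x = (starRingEnd ℂ) (K x y))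
    (hrepr : ∀ᵐ x ∂μ, ENNReal.ofReal ((K x x).re) =
      ∫⁻ y, ENNReal.ofReal (‖K x y‖ ^ 2) ∂μ)
    (ε M : ℝ) (hε : 0 < ε) (hε1 : ε ≤ 1) (hM : 1 ≤ M)
    (g : E → ℝ) (hg : Measurable g) (hgb : ∀ x, ε ≤ g x ∧ g x ≤ M)
    (hL : kernelL μ K g < ⊤) (hV : kernelV μ K g < ⊤)
    (En : ℕ → Set E) (hEnMeas : ∀ n, MeasurableSet (En n))
    (hEnMono : Monotone En) (hEnUnion : (⋃ n, En n) = Set.univ)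
    (hEnCut : Tendsto (fun n =>
        ∫⁻ y in En n, ∫⁻ x in (En n)ᶜ,
          ENNReal.ofReal (|g x - 1| ^ 2 * ‖K x y‖ ^ 2) ∂μ ∂μ)
      atTop (nhds 0))
    (gn : ℕ → E → ℝ)
    (hgn : ∀ n x, gn n x = 1 + (En n).indicator (fun y => g y - 1) x) :
    Tendsto (fun n => kernelL μ K (fun x => gn n x / g x)) atTop (nhds 0) ∧
    Tendsto (fun n => kernelV μ K (fun x => gn n x / g x)) atTop (nhds 0) := by
  classical
  have hg0 : ∀ x, 0 < g x := fun x => hε.trans_le (hgb x).1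
  -- key elementary inequality
  have hkey : ∀ a b : ℝ, ε ≤ a → ε ≤ b → |1/a - 1/b| ≤ (ε⁻¹ * ε⁻¹) * |a - b| := by
    intro a b ha hb
    have ha0 : 0 < a := hε.trans_le ha
    have hb0 : 0 < b := hε.trans_le hb
    have h1 : 1/a - 1/b = (b - a) / (a * b) := by field_simp
    rw [h1, abs_div, abs_of_pos (mul_pos ha0 hb0)]
    have h2 : |b - a| / (a * b) ≤ |b - a| / (ε * ε) := by
      gcongr
    calc |b - a| / (a*b) ≤ |b - a| / (ε * ε) := h2
      _ = (ε⁻¹ * ε⁻¹) * |a - b| := by rw [abs_sub_comm]; field_simp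
  set c1 : ℝ := ε⁻¹ * ε⁻¹ with hc1
  have hc1nn : 0 ≤ c1 := by positivity
  -- values of the quotient
  have hq_mem : ∀ n x, x ∈ En n → gn n x / g x = 1 := by
    intro n x hx
    rw [hgn, Set.indicator_of_mem hx]
    have := (hg0 x).ne'
    field_simp
    ring
  have hq_nmem : ∀ n x, x ∉ En n → gn n x / g x = 1 / g x := by
    intro n x hx
    rw [hgn, Set.indicator_of_notMem hx]
    norm_num
  -- ====== L part ======
  have hfLmeas : Measurable (fun x => ENNReal.ofReal (|g x - 1| ^ 3 * (K x x).re)) := by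
    apply Measurable.ennreal_ofReal
    exact ((hg.sub measurable_const).abs.pow_const 3).mul
      (Complex.measurable_re.comp (hK.comp (measurable_id.prodMk measurable_id)))
  have hCL : Tendsto (fun n => ∫⁻ x in (En n)ᶜ,
      ENNReal.ofReal (|g x - 1| ^ 3 * (K x x).re) ∂μ) atTop (nhds 0) :=
    aux_tendsto_compl μ _ hfLmeas En hEnMeas hEnMono hEnUnion hL
  have hLbound : ∀ n, kernelL μ K (fun x => gn n x / g x)
      ≤ ENNReal.ofReal (c1 ^ 3) *
        ∫⁻ x in (En n)ᶜ, ENNReal.ofReal (|g x - 1| ^ 3 * (K x x).re) ∂μ := by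
    intro n
    rw [kernelL]
    have hpt : ∀ x, ENNReal.ofReal (|gn n x / g x - 1| ^ 3 * (K x x).re)
        ≤ ((En n)ᶜ).indicator
            (fun x => ENNReal.ofReal (c1 ^ 3) *
              ENNReal.ofReal (|g x - 1| ^ 3 * (K x x).re)) x := by
      intro x
      by_cases hx : x ∈ En n
      · rw [hq_mem n x hx]
        have hx' : x ∉ (En n)ᶜ := by simpa using hx
        simp [Set.indicator_of_notMem hx']
      · rw [hq_nmem n x hx, Set.indicator_of_mem (by exact hx : x ∈ (En n)ᶜ)]
        have hb : |1 / g x - 1| ≤ c1 * |g x - 1| := by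
          simpa using hkey (g x) 1 (hgb x).1 hε1
        exact aux_ofReal_pow_mul_le hc1nn hb 3
    calc ∫⁻ x, ENNReal.ofReal (|gn n x / g x - 1| ^ 3 * (K x x).re) ∂μ
        ≤ ∫⁻ x, ((En n)ᶜ).indicator
            (fun x => ENNReal.ofReal (c1 ^ 3) *
              ENNReal.ofReal (|g x - 1| ^ 3 * (K x x).re)) x ∂μ := lintegral_mono hpt
      _ = ∫⁻ x in (En n)ᶜ, ENNReal.ofReal (c1 ^ 3) *
            ENNReal.ofReal (|g x - 1| ^ 3 * (K x x).re) ∂μ :=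
          lintegral_indicator (hEnMeas n).compl _
      _ = ENNReal.ofReal (c1 ^ 3) *
            ∫⁻ x in (En n)ᶜ, ENNReal.ofReal (|g x - 1| ^ 3 * (K x x).re) ∂μ :=
          lintegral_const_mul' _ _ ENNReal.ofReal_ne_top
  have hLt : Tendsto (fun n => kernelL μ K (fun x => gn n x / g x)) atTop (nhds 0) := by
    have hub : Tendsto (fun n => ENNReal.ofReal (c1 ^ 3) *
        ∫⁻ x in (En n)ᶜ, ENNReal.ofReal (|g x - 1| ^ 3 * (K x x).re) ∂μ) atTop (nhds 0) := by
      have := ENNReal.Tendsto.const_mul (a := ENNReal.ofReal (c1 ^ 3)) hCL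
        (Or.inr ENNReal.ofReal_ne_top)
      simpa using this
    exact tendsto_of_tendsto_of_tendsto_of_le_of_le tendsto_const_nhds hub
      (fun n => zero_le) hLbound
  -- ====== V part ======
  set F : E × E → ℝ≥0∞ := fun p =>
    ENNReal.ofReal (|g p.1 - g p.2| ^ 2 * ‖K p.1 p.2‖ ^ 2) with hFdef
  set f₂ : E × E → ℝ≥0∞ := fun p =>
    ENNReal.ofReal (|g p.1 - 1| ^ 2 * ‖K p.1 p.2‖ ^ 2) with hf₂def
  set f₃ : E × E → ℝ≥0∞ := fun p =>
    ENNReal.ofReal (|g p.2 - 1| ^ 2 * ‖K p.1 p.2‖ ^ 2) with hf₃def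
  have hKabs : Measurable (fun p : E × E => ‖K p.1 p.2‖) :=
    continuous_norm.measurable.comp hK
  have hFmeas : Measurable F := by
    apply Measurable.ennreal_ofReal
    exact (((hg.comp measurable_fst).sub (hg.comp measurable_snd)).abs.pow_const 2).mul
      (hKabs.pow_const 2)
  have hf₂meas : Measurable f₂ := by
    apply Measurable.ennreal_ofReal
    exact (((hg.comp measurable_fst).sub measurable_const).abs.pow_const 2).mul
      (hKabs.pow_const 2)
  have hf₃meas : Measurable f₃ := by
    apply Measurable.ennreal_ofReal
    exact (((hg.comp measurable_snd).sub measurable_const).abs.pow_const 2).mul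
      (hKabs.pow_const 2)
  have habs : ∀ x y, ‖K y x‖ = ‖K x y‖ := by
    intro x y; rw [hsymm x y]; exact Complex.norm_conj _
  -- pointwise bound
  have hptV : ∀ n (p : E × E),
      ENNReal.ofReal (|gn n p.1 / g p.1 - gn n p.2 / g p.2| ^ 2
        * ‖K p.1 p.2‖ ^ 2)
      ≤ ENNReal.ofReal (c1 ^ 2) *
          (((En n)ᶜ ×ˢ (Set.univ : Set E)).indicator F p
            + ((En n)ᶜ ×ˢ En n).indicator f₂ p
            + (En n ×ˢ (En n)ᶜ).indicator f₃ p) := by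
    intro n p
    obtain ⟨x, y⟩ := p
    by_cases hx : x ∈ En n <;> by_cases hy : y ∈ En n
    · rw [hq_mem n x hx, hq_mem n y hy]
      simp
    · -- x ∈, y ∉ : use f₃
      rw [hq_mem n x hx, hq_nmem n y hy]
      have hb : |1 - 1 / g y| ≤ c1 * |g y - 1| := by
        have h := hkey 1 (g y) hε1 (hgb y).1
        rw [abs_sub_comm (1:ℝ) (g y)] at h
        simpa using h
      calc ENNReal.ofReal (|1 - 1 / g y| ^ 2 * ‖K x y‖ ^ 2)
          ≤ ENNReal.ofReal (c1 ^ 2) *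
              ENNReal.ofReal (|g y - 1| ^ 2 * ‖K x y‖ ^ 2) :=
            aux_ofReal_pow_mul_le hc1nn hb 2
        _ ≤ _ := by
            apply mul_le_mul_right
            have hmem : (x, y) ∈ En n ×ˢ (En n)ᶜ := ⟨hx, hy⟩
            rw [Set.indicator_of_mem hmem]
            exact le_add_self
    · -- x ∉, y ∈ : use f₂
      rw [hq_nmem n x hx, hq_mem n y hy]
      have hb : |1 / g x - 1| ≤ c1 * |g x - 1| := by
        simpa using hkey (g x) 1 (hgb x).1 hε1
      calc ENNReal.ofReal (|1 / g x - 1| ^ 2 * ‖K x y‖ ^ 2)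
          ≤ ENNReal.ofReal (c1 ^ 2) *
              ENNReal.ofReal (|g x - 1| ^ 2 * ‖K x y‖ ^ 2) :=
            aux_ofReal_pow_mul_le hc1nn hb 2
        _ ≤ _ := by
            apply mul_le_mul_right
            have hmem : (x, y) ∈ (En n)ᶜ ×ˢ En n := ⟨hx, hy⟩
            rw [Set.indicator_of_mem hmem]
            exact le_add_self.trans le_self_add
    · -- x ∉, y ∉ : use F
      rw [hq_nmem n x hx, hq_nmem n y hy]
      have hb : |1 / g x - 1 / g y| ≤ c1 * |g x - g y| :=
        hkey (g x) (g y) (hgb x).1 (hgb y).1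
      calc ENNReal.ofReal (|1 / g x - 1 / g y| ^ 2 * ‖K x y‖ ^ 2)
          ≤ ENNReal.ofReal (c1 ^ 2) *
              ENNReal.ofReal (|g x - g y| ^ 2 * ‖K x y‖ ^ 2) :=
            aux_ofReal_pow_mul_le hc1nn hb 2
        _ ≤ _ := by
            apply mul_le_mul_right
            have hmem : (x, y) ∈ (En n)ᶜ ×ˢ (Set.univ : Set E) := ⟨hx, trivial⟩
            rw [Set.indicator_of_mem hmem]
            exact le_self_add.trans le_self_add
  -- integral bound
  have hVbound : ∀ n, kernelV μ K (fun x => gn n x / g x) ≤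
      ENNReal.ofReal (c1 ^ 2) *
        ((∫⁻ p in (En n)ᶜ ×ˢ (Set.univ : Set E), F p ∂(μ.prod μ))
          + (∫⁻ p in (En n)ᶜ ×ˢ En n, f₂ p ∂(μ.prod μ))
          + (∫⁻ p in En n ×ˢ (En n)ᶜ, f₃ p ∂(μ.prod μ))) := by
    intro n
    rw [kernelV]
    have m1 : MeasurableSet ((En n)ᶜ ×ˢ (Set.univ : Set E)) :=
      (hEnMeas n).compl.prod MeasurableSet.univ
    have m2 : MeasurableSet ((En n)ᶜ ×ˢ En n) := (hEnMeas n).compl.prod (hEnMeas n)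
    have m3 : MeasurableSet (En n ×ˢ (En n)ᶜ) := (hEnMeas n).prod (hEnMeas n).compl
    calc ∫⁻ p : E × E, ENNReal.ofReal (|gn n p.1 / g p.1 - gn n p.2 / g p.2| ^ 2
            * ‖K p.1 p.2‖ ^ 2) ∂(μ.prod μ)
        ≤ ∫⁻ p, ENNReal.ofReal (c1 ^ 2) *
            (((En n)ᶜ ×ˢ (Set.univ : Set E)).indicator F p
              + ((En n)ᶜ ×ˢ En n).indicator f₂ p
              + (En n ×ˢ (En n)ᶜ).indicator f₃ p) ∂(μ.prod μ) := lintegral_mono (hptV n)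
      _ = ENNReal.ofReal (c1 ^ 2) *
            ∫⁻ p, (((En n)ᶜ ×ˢ (Set.univ : Set E)).indicator F p
              + ((En n)ᶜ ×ˢ En n).indicator f₂ p
              + (En n ×ˢ (En n)ᶜ).indicator f₃ p) ∂(μ.prod μ) :=
          lintegral_const_mul' _ _ ENNReal.ofReal_ne_top
      _ = ENNReal.ofReal (c1 ^ 2) *
            ((∫⁻ p in (En n)ᶜ ×ˢ (Set.univ : Set E), F p ∂(μ.prod μ))
              + (∫⁻ p in (En n)ᶜ ×ˢ En n, f₂ p ∂(μ.prod μ))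
              + (∫⁻ p in En n ×ˢ (En n)ᶜ, f₃ p ∂(μ.prod μ))) := by
          rw [lintegral_add_left (f := fun p => ((En n)ᶜ ×ˢ (Set.univ : Set E)).indicator F p
                + ((En n)ᶜ ×ˢ En n).indicator f₂ p)
              ((hFmeas.indicator m1).add (hf₂meas.indicator m2)),
            lintegral_add_left (hFmeas.indicator m1),
            lintegral_indicator m1, lintegral_indicator m2, lintegral_indicator m3]
  -- convergence of the three pieces
  have hA : Tendsto (fun n => ∫⁻ p in (En n)ᶜ ×ˢ (Set.univ : Set E), F p ∂(μ.prod μ))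
      atTop (nhds 0) := by
    have hcompl : ∀ n, ((En n ×ˢ (Set.univ : Set E))ᶜ) = (En n)ᶜ ×ˢ (Set.univ : Set E) := by
      intro n; ext p; simp [Set.mem_prod]
    have h := aux_tendsto_compl (μ.prod μ) F hFmeas (fun n => En n ×ˢ (Set.univ : Set E))
      (fun n => (hEnMeas n).prod MeasurableSet.univ)
      (fun a b hab => Set.prod_mono (hEnMono hab) le_rfl)
      (by
        ext p
        simp only [Set.mem_iUnion, Set.mem_prod, Set.mem_univ, and_true, Set.iUnion_coe_set]
        constructor
        · intro _; trivial
        · intro _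
          have : p.1 ∈ ⋃ n, En n := hEnUnion ▸ Set.mem_univ _
          simpa [Set.mem_iUnion] using this)
      hV
    simpa [hcompl] using h
  have hB2 : ∀ n, ∫⁻ p in (En n)ᶜ ×ˢ En n, f₂ p ∂(μ.prod μ)
      = ∫⁻ y in En n, ∫⁻ x in (En n)ᶜ,
          ENNReal.ofReal (|g x - 1| ^ 2 * ‖K x y‖ ^ 2) ∂μ ∂μ := by
    intro n
    rw [← Measure.prod_restrict, lintegral_prod _ hf₂meas.aemeasurable]
    exact lintegral_lintegral_swap hf₂meas.aemeasurable
  have hB3 : ∀ n, ∫⁻ p in En n ×ˢ (En n)ᶜ, f₃ p ∂(μ.prod μ)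
      = ∫⁻ y in En n, ∫⁻ x in (En n)ᶜ,
          ENNReal.ofReal (|g x - 1| ^ 2 * ‖K x y‖ ^ 2) ∂μ ∂μ := by
    intro n
    rw [← Measure.prod_restrict, lintegral_prod _ hf₃meas.aemeasurable]
    refine lintegral_congr fun a => lintegral_congr fun b => ?_
    simp only [hf₃def]
    rw [habs b a]
  have hB2t : Tendsto (fun n => ∫⁻ p in (En n)ᶜ ×ˢ En n, f₂ p ∂(μ.prod μ))
      atTop (nhds 0) := by simpa [hB2] using hEnCut
  have hB3t : Tendsto (fun n => ∫⁻ p in En n ×ˢ (En n)ᶜ, f₃ p ∂(μ.prod μ))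
      atTop (nhds 0) := by simpa [hB3] using hEnCut
  have hVt : Tendsto (fun n => kernelV μ K (fun x => gn n x / g x)) atTop (nhds 0) := by
    have hsum : Tendsto (fun n =>
        (∫⁻ p in (En n)ᶜ ×ˢ (Set.univ : Set E), F p ∂(μ.prod μ))
          + (∫⁻ p in (En n)ᶜ ×ˢ En n, f₂ p ∂(μ.prod μ))
          + (∫⁻ p in En n ×ˢ (En n)ᶜ, f₃ p ∂(μ.prod μ))) atTop (nhds 0) := by
      have := (hA.add hB2t).add hB3t
      simpa using this
    have hub : Tendsto (fun n => ENNReal.ofReal (c1 ^ 2) *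
        ((∫⁻ p in (En n)ᶜ ×ˢ (Set.univ : Set E), F p ∂(μ.prod μ))
          + (∫⁻ p in (En n)ᶜ ×ˢ En n, f₂ p ∂(μ.prod μ))
          + (∫⁻ p in En n ×ˢ (En n)ᶜ, f₃ p ∂(μ.prod μ)))) atTop (nhds 0) := by
      have := ENNReal.Tendsto.const_mul (a := ENNReal.ofReal (c1 ^ 2)) hsum
        (Or.inr ENNReal.ofReal_ne_top)
      simpa using this
    exact tendsto_of_tendsto_of_tendsto_of_le_of_le tendsto_const_nhds hub
      (fun n => zero_le) hVbound
  exact ⟨hLt, hVt⟩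
end

section
/- Let (E, μ), Π be as in the kernel setting, let 0 < ε ≤ 1 ≤ M, and let g and g_n (n ≥ 1) be measurable functions on E with ε ≤ g ≤ M and ε ≤ g_n ≤ M for all n, and with L(g) < ∞ and V(g) < ∞. If L(g_n/g) → 0 and V(g_n/g) → 0 as n → ∞, then L(g_n) → L(g) and V(g_n) → V(g). -/
open MeasureTheory Filter
open scoped ENNReal

/- ## Auxiliary real inequalities -/

lemma sq_split16 {a b t : ℝ} (ht : 0 < t) (ht1 : t < 1) :
    (a + b) ^ 2 ≤ (1 - t)⁻¹ * a ^ 2 + t⁻¹ * b ^ 2 := by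
  have h1 : 0 < 1 - t := by linarith
  rw [inv_eq_one_div, inv_eq_one_div, div_mul_eq_mul_div, div_mul_eq_mul_div,
    div_add_div _ _ (by positivity) (by positivity), le_div_iff₀ (by positivity)]
  nlinarith [sq_nonneg (t * a - (1 - t) * b)]

lemma cube_split16 {a b t : ℝ} (ha : 0 ≤ a) (hb : 0 ≤ b) (ht : 0 < t) (ht1 : t < 1) :
    (a + b) ^ 3 ≤ ((1 - t) ^ 2)⁻¹ * a ^ 3 + (t ^ 2)⁻¹ * b ^ 3 := by
  have h1 : 0 < 1 - t := by linarith
  rw [inv_eq_one_div, inv_eq_one_div, div_mul_eq_mul_div, div_mul_eq_mul_div,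
    div_add_div _ _ (by positivity) (by positivity), le_div_iff₀ (by positivity)]
  nlinarith [sq_nonneg (t * a - (1 - t) * b), mul_nonneg ha hb,
    mul_nonneg (mul_nonneg ha hb) (sq_nonneg (t * a - (1 - t) * b)),
    mul_nonneg ha (sq_nonneg (t * a - (1 - t) * b)),
    mul_nonneg hb (sq_nonneg (t * a - (1 - t) * b)), mul_pos ht h1]

lemma sq_le_cube16 {u t : ℝ} (hu : 0 ≤ u) (ht : 0 < t) : u ^ 2 ≤ t ^ 2 + u ^ 3 / t := by
  rcases le_total u t with h | h
  · nlinarith [div_nonneg (pow_nonneg hu 3) ht.le]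
  · have : u ^ 2 ≤ u ^ 3 / t := by
      rw [le_div_iff₀ ht]; nlinarith
    nlinarith

lemma Vpt16 {A B B' P Q M t : ℝ} (hA : 0 ≤ A) (hB' : 0 ≤ B') (hP : 0 ≤ P) (hQ : 0 ≤ Q)
    (hBM : B' ≤ M) (ht : 0 < t) (ht1 : t < 1)
    (h : A ≤ B + (B' * P + M * Q)) :
    A ^ 2 ≤ (1 - t)⁻¹ * B ^ 2 + 2 * t * B' ^ 2 + 2 * M ^ 2 / t ^ 2 * P ^ 3
      + 2 * M ^ 2 / t * Q ^ 2 := by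
  have hM : 0 ≤ M := hB'.trans hBM
  have hD : 0 ≤ B' * P + M * Q := by positivity
  have hP2 : P ^ 2 ≤ t ^ 2 + P ^ 3 / t := sq_le_cube16 hP ht
  have hB2 : B' ^ 2 ≤ M ^ 2 := by nlinarith
  have h1 : B' ^ 2 * P ^ 2 ≤ t ^ 2 * B' ^ 2 + M ^ 2 * (P ^ 3 / t) := by
    have h1a := mul_le_mul_of_nonneg_left hP2 (sq_nonneg B')
    have h1b : B' ^ 2 * (P ^ 3 / t) ≤ M ^ 2 * (P ^ 3 / t) :=
      mul_le_mul_of_nonneg_right hB2 (by positivity)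
    nlinarith
  have hD2 : (B' * P + M * Q) ^ 2 ≤ 2 * (B' ^ 2 * P ^ 2) + 2 * (M ^ 2 * Q ^ 2) := by
    nlinarith [sq_nonneg (B' * P - M * Q)]
  have hsq : A ^ 2 ≤ (1 - t)⁻¹ * B ^ 2 + t⁻¹ * (B' * P + M * Q) ^ 2 := by
    have hAB : A ^ 2 ≤ (B + (B' * P + M * Q)) ^ 2 := by
      have hBnn : 0 ≤ B + (B' * P + M * Q) := hA.trans h
      nlinarith
    exact hAB.trans (sq_split16 ht ht1)
  have h2 : t⁻¹ * (B' * P + M * Q) ^ 2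
      ≤ t⁻¹ * (2 * (t ^ 2 * B' ^ 2 + M ^ 2 * (P ^ 3 / t)) + 2 * (M ^ 2 * Q ^ 2)) := by
    apply mul_le_mul_of_nonneg_left _ (by positivity)
    nlinarith
  have h3 : t⁻¹ * (2 * (t ^ 2 * B' ^ 2 + M ^ 2 * (P ^ 3 / t)) + 2 * (M ^ 2 * Q ^ 2))
      = 2 * t * B' ^ 2 + 2 * M ^ 2 / t ^ 2 * P ^ 3 + 2 * M ^ 2 / t * Q ^ 2 := by
    field_simp
  linarith

/- ## ENNReal pointwise helpers -/

lemma ofReal_two_terms {c₁ a₁ c₂ a₂ u r : ℝ} (hc₁ : 0 ≤ c₁) (ha₁ : 0 ≤ a₁)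
    (hc₂ : 0 ≤ c₂) (ha₂ : 0 ≤ a₂) (hu : 0 ≤ u) (h : u ≤ c₁ * a₁ + c₂ * a₂) :
    ENNReal.ofReal (u * r) ≤ ENNReal.ofReal c₁ * ENNReal.ofReal (a₁ * r)
      + ENNReal.ofReal c₂ * ENNReal.ofReal (a₂ * r) := by
  rcases le_or_gt 0 r with hr | hr
  · calc ENNReal.ofReal (u * r) ≤ ENNReal.ofReal ((c₁ * a₁ + c₂ * a₂) * r) :=
          ENNReal.ofReal_le_ofReal (mul_le_mul_of_nonneg_right h hr)
      _ = ENNReal.ofReal (c₁ * (a₁ * r) + c₂ * (a₂ * r)) := by ring_nf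
      _ = ENNReal.ofReal (c₁ * (a₁ * r)) + ENNReal.ofReal (c₂ * (a₂ * r)) :=
          ENNReal.ofReal_add (by positivity) (by positivity)
      _ = _ := by rw [ENNReal.ofReal_mul hc₁, ENNReal.ofReal_mul hc₂]
  · rw [ENNReal.ofReal_of_nonpos (by nlinarith)]; exact zero_le

lemma ofReal_four_terms {c₁ a₁ c₂ a₂ c₃ a₃ c₄ a₄ u r : ℝ}
    (hc₁ : 0 ≤ c₁) (ha₁ : 0 ≤ a₁) (hc₂ : 0 ≤ c₂) (ha₂ : 0 ≤ a₂)
    (hc₃ : 0 ≤ c₃) (ha₃ : 0 ≤ a₃) (hc₄ : 0 ≤ c₄) (ha₄ : 0 ≤ a₄)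
    (hu : 0 ≤ u) (h : u ≤ c₁ * a₁ + c₂ * a₂ + c₃ * a₃ + c₄ * a₄) :
    ENNReal.ofReal (u * r) ≤ ENNReal.ofReal c₁ * ENNReal.ofReal (a₁ * r)
      + ENNReal.ofReal c₂ * ENNReal.ofReal (a₂ * r)
      + ENNReal.ofReal c₃ * ENNReal.ofReal (a₃ * r)
      + ENNReal.ofReal c₄ * ENNReal.ofReal (a₄ * r) := by
  rcases le_or_gt 0 r with hr | hr
  · calc ENNReal.ofReal (u * r)
        ≤ ENNReal.ofReal ((c₁ * a₁ + c₂ * a₂ + c₃ * a₃ + c₄ * a₄) * r) :=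
          ENNReal.ofReal_le_ofReal (mul_le_mul_of_nonneg_right h hr)
      _ = ENNReal.ofReal (c₁ * (a₁ * r) + (c₂ * (a₂ * r) + (c₃ * (a₃ * r) + c₄ * (a₄ * r)))) := by
          ring_nf
      _ = ENNReal.ofReal (c₁ * (a₁ * r)) + (ENNReal.ofReal (c₂ * (a₂ * r))
            + (ENNReal.ofReal (c₃ * (a₃ * r)) + ENNReal.ofReal (c₄ * (a₄ * r)))) := by
          rw [ENNReal.ofReal_add (by positivity) (by positivity),
            ENNReal.ofReal_add (by positivity) (by positivity),
            ENNReal.ofReal_add (by positivity) (by positivity)]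
      _ = _ := by
          rw [ENNReal.ofReal_mul hc₁, ENNReal.ofReal_mul hc₂, ENNReal.ofReal_mul hc₃,
            ENNReal.ofReal_mul hc₄]
          ring
  · rw [ENNReal.ofReal_of_nonpos (by nlinarith)]; exact zero_le

/- ## ENNReal limit helpers -/

lemma rearrange16 {B X : ℝ≥0∞} (hB : B ≠ ⊤) {c : ℝ} (hc : 0 ≤ c) (hc1 : c < 1)
    (h : B ≤ X + ENNReal.ofReal c * B) : B ≤ ENNReal.ofReal (1 - c)⁻¹ * X := by
  have h1 : ENNReal.ofReal (1 - c) = 1 - ENNReal.ofReal c := by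
    rw [ENNReal.ofReal_sub _ hc, ENNReal.ofReal_one]
  have h2 : ENNReal.ofReal (1 - c) * B ≤ X := by
    rw [h1, ENNReal.sub_mul (fun _ _ => hB), one_mul]
    exact tsub_le_iff_right.mpr h
  have h0 : ENNReal.ofReal (1 - c) ≠ 0 := by
    simp only [ne_eq, ENNReal.ofReal_eq_zero, not_le]; linarith
  calc B = (ENNReal.ofReal (1 - c))⁻¹ * (ENNReal.ofReal (1 - c) * B) := by
            rw [← mul_assoc, ENNReal.inv_mul_cancel h0 ENNReal.ofReal_ne_top, one_mul]
    _ ≤ (ENNReal.ofReal (1 - c))⁻¹ * X := by gcongr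
    _ = ENNReal.ofReal (1 - c)⁻¹ * X := by rw [ENNReal.ofReal_inv_of_pos (by linarith)]

lemma squeeze16 {A : ℝ≥0∞} (hA : A ≠ ⊤) {a e : ℕ → ℝ≥0∞} (he : Tendsto e atTop (nhds 0))
    (h : ∀ η : ℝ, 0 < η → η ≤ 1 → ∃ C : ℝ≥0∞, C ≠ ⊤ ∧ ∀ n,
      a n ≤ ENNReal.ofReal (1 + η) * A + C * e n ∧
      A ≤ ENNReal.ofReal (1 + η) * a n + C * e n) :
    Tendsto a atTop (nhds A) := by
  rw [ENNReal.tendsto_nhds hA]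
  intro ε hε
  set ε' := min ε 1 with hε'def
  have hε'pos : 0 < ε' := lt_min hε zero_lt_one
  have hε'0 : ε' ≠ 0 := hε'pos.ne'
  have hε't : ε' ≠ ⊤ := by simp [hε'def]
  have hε'1 : ε' ≤ 1 := min_le_right _ _
  set T : ℝ := (A + 1).toReal with hTdef
  have hT1 : 1 ≤ T := by
    rw [hTdef]
    have : ((1:ℝ≥0∞)).toReal ≤ (A+1).toReal :=
      ENNReal.toReal_mono (by simp [hA]) (by simp)
    simpa using this
  set η : ℝ := ε'.toReal / (8 * T) with hηdef
  have hη0 : 0 < η := div_pos (ENNReal.toReal_pos hε'0 hε't) (by linarith)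
  have hη1 : η ≤ 1 := by
    rw [hηdef, div_le_one (by linarith)]
    have : ε'.toReal ≤ 1 := by
      have := ENNReal.toReal_mono (by simp) hε'1
      simpa using this
    linarith
  have hkey : ENNReal.ofReal η * (A + 1) ≤ ε' / 8 := by
    have hA1 : (A + 1) = ENNReal.ofReal T := by
      rw [hTdef, ENNReal.ofReal_toReal (by simp [hA])]
    rw [hA1, ← ENNReal.ofReal_mul hη0.le]
    have hη8 : η * T = ε'.toReal / 8 := by
      rw [hηdef]; field_simp
    rw [hη8, ENNReal.ofReal_div_of_pos (by norm_num), ENNReal.ofReal_toReal hε't]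
    norm_num
  obtain ⟨C, hCt, hC⟩ := h η hη0 hη1
  have hce : Tendsto (fun n => C * e n) atTop (nhds 0) := by
    simpa using ENNReal.Tendsto.const_mul he (Or.inr hCt)
  have hev : ∀ᶠ n in atTop, C * e n < ε' / 8 :=
    hce.eventually (Iio_mem_nhds (ENNReal.div_pos hε'0 (by norm_num)))
  have e2 : ε' / 8 ≤ ε' / 2 := by gcongr <;> norm_num
  have hof : ENNReal.ofReal (1 + η) = 1 + ENNReal.ofReal η := by
    rw [ENNReal.ofReal_add (by norm_num) hη0.le, ENNReal.ofReal_one]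
  filter_upwards [hev] with n hn
  have h8 : ENNReal.ofReal η * A ≤ ε' / 8 :=
    le_trans (by gcongr; exact le_self_add) hkey
  have hup : a n ≤ A + ε' := by
    calc a n ≤ ENNReal.ofReal (1 + η) * A + C * e n := (hC n).1
      _ = A + (ENNReal.ofReal η * A + C * e n) := by
          rw [hof, add_mul, one_mul, add_assoc]
      _ ≤ A + (ε' / 2 + ε' / 2) := by
          gcongr
          · exact h8.trans e2
          · exact hn.le.trans e2
      _ = A + ε' := by rw [ENNReal.add_halves]
  have hlow : A - ε' ≤ a n := by
    rw [tsub_le_iff_right]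
    have han1 : a n ≤ A + 1 := hup.trans (by gcongr)
    calc A ≤ ENNReal.ofReal (1 + η) * a n + C * e n := (hC n).2
      _ = a n + (ENNReal.ofReal η * a n + C * e n) := by
          rw [hof, add_mul, one_mul, add_assoc]
      _ ≤ a n + (ε' / 2 + ε' / 2) := by
          gcongr
          · exact le_trans (by gcongr) (hkey.trans e2)
          · exact hn.le.trans e2
      _ = a n + ε' := by rw [ENNReal.add_halves]
  constructor
  · exact le_trans (tsub_le_tsub_left (min_le_left ε 1) A) hlow
  · exact hup.trans (by gcongr; exact min_le_left ε 1)

/- ## Kernel estimates -/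

section Kernel

variable {E : Type*} [MeasurableSpace E] (μ : Measure E) [SigmaFinite μ] (K : E → E → ℂ)

lemma meas_diag16 (hK : Measurable (Function.uncurry K)) :
    Measurable fun x => (K x x).re :=
  Complex.measurable_re.comp (hK.comp (measurable_id.prodMk measurable_id))

lemma meas_abs16 (hK : Measurable (Function.uncurry K)) :
    Measurable fun p : E × E => ‖K p.1 p.2‖ :=
  continuous_norm.measurable.comp hK

lemma mid16 (hK : Measurable (Function.uncurry K))
    (hrepr : ∀ᵐ x ∂μ, ENNReal.ofReal ((K x x).re) =
      ∫⁻ y, ENNReal.ofReal (‖K x y‖ ^ 2) ∂μ)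
    (F : E → ℝ≥0∞) (hF : Measurable F) :
    ∫⁻ p : E × E, F p.1 * ENNReal.ofReal (‖K p.1 p.2‖ ^ 2) ∂(μ.prod μ)
      = ∫⁻ x, F x * ENNReal.ofReal ((K x x).re) ∂μ := by
  have m1 : Measurable fun p : E × E => F p.1 * ENNReal.ofReal (‖K p.1 p.2‖ ^ 2) :=
    (hF.comp measurable_fst).mul
      (ENNReal.measurable_ofReal.comp ((meas_abs16 K hK).pow_const 2))
  rw [lintegral_prod _ m1.aemeasurable]
  apply lintegral_congr_ae
  filter_upwards [hrepr] with x hx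
  have m2 : Measurable fun y => ENNReal.ofReal (‖K x y‖ ^ 2) :=
    ENNReal.measurable_ofReal.comp
      ((continuous_norm.measurable.comp (hK.comp measurable_prodMk_left)).pow_const 2)
  rw [lintegral_const_mul _ m2, ← hx]

lemma L_est16 (hK : Measurable (Function.uncurry K)) {M t : ℝ} (hM : 0 ≤ M)
    (ht : 0 < t) (ht1 : t < 1) (u v w : E → ℝ) (hv : Measurable v) (hw : Measurable w)
    (hpt : ∀ x, |u x - 1| ≤ |v x - 1| + M * |w x - 1|) :
    kernelL μ K u ≤ ENNReal.ofReal ((1 - t) ^ 2)⁻¹ * kernelL μ K v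
      + ENNReal.ofReal ((t ^ 2)⁻¹ * M ^ 3) * kernelL μ K w := by
  have mv : Measurable fun x => ENNReal.ofReal (|v x - 1| ^ 3 * (K x x).re) :=
    ENNReal.measurable_ofReal.comp
      (((hv.sub measurable_const).abs.pow_const 3).mul (meas_diag16 K hK))
  calc kernelL μ K u
      ≤ ∫⁻ x, (ENNReal.ofReal ((1 - t) ^ 2)⁻¹ * ENNReal.ofReal (|v x - 1| ^ 3 * (K x x).re)
          + ENNReal.ofReal ((t ^ 2)⁻¹ * M ^ 3)
            * ENNReal.ofReal (|w x - 1| ^ 3 * (K x x).re)) ∂μ := by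
        apply lintegral_mono
        intro x
        apply ofReal_two_terms (by positivity) (by positivity) (by positivity) (by positivity)
          (by positivity)
        calc |u x - 1| ^ 3 ≤ (|v x - 1| + M * |w x - 1|) ^ 3 := by
              exact pow_le_pow_left₀ (abs_nonneg _) (hpt x) 3
          _ ≤ ((1 - t) ^ 2)⁻¹ * |v x - 1| ^ 3 + (t ^ 2)⁻¹ * (M * |w x - 1|) ^ 3 :=
              cube_split16 (abs_nonneg _) (by positivity) ht ht1
          _ = ((1 - t) ^ 2)⁻¹ * |v x - 1| ^ 3 + (t ^ 2)⁻¹ * M ^ 3 * |w x - 1| ^ 3 := by ring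
    _ = ENNReal.ofReal ((1 - t) ^ 2)⁻¹ * kernelL μ K v
        + ENNReal.ofReal ((t ^ 2)⁻¹ * M ^ 3) * kernelL μ K w := by
        rw [lintegral_add_left (mv.const_mul _), lintegral_const_mul' _ _ ENNReal.ofReal_ne_top,
          lintegral_const_mul' _ _ ENNReal.ofReal_ne_top]
        rfl

lemma V_est16 (hK : Measurable (Function.uncurry K))
    (hrepr : ∀ᵐ x ∂μ, ENNReal.ofReal ((K x x).re) =
      ∫⁻ y, ENNReal.ofReal (‖K x y‖ ^ 2) ∂μ)
    {M t : ℝ} (hM : 0 ≤ M) (ht : 0 < t) (ht1 : t < 1)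
    (u v v' w : E → ℝ) (hv : Measurable v) (hv' : Measurable v') (hw : Measurable w)
    (hb : ∀ x y, |v' x - v' y| ≤ M)
    (hpt : ∀ x y, |u x - u y| ≤ |v x - v y| + (|v' x - v' y| * |w x - 1| + M * |w x - w y|)) :
    kernelV μ K u ≤ ENNReal.ofReal (1 - t)⁻¹ * kernelV μ K v
      + ENNReal.ofReal (2 * t) * kernelV μ K v'
      + ENNReal.ofReal (2 * M ^ 2 / t ^ 2) * kernelL μ K w
      + ENNReal.ofReal (2 * M ^ 2 / t) * kernelV μ K w := by
  have mK2 : Measurable fun p : E × E => ENNReal.ofReal (‖K p.1 p.2‖ ^ 2) :=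
    ENNReal.measurable_ofReal.comp ((meas_abs16 K hK).pow_const 2)
  have mV : ∀ (f : E → ℝ), Measurable f → Measurable
      (fun p : E × E => ENNReal.ofReal (|f p.1 - f p.2| ^ 2 * ‖K p.1 p.2‖ ^ 2)) := by
    intro f hf
    exact ENNReal.measurable_ofReal.comp
      ((((hf.comp measurable_fst).sub (hf.comp measurable_snd)).abs.pow_const 2).mul
        ((meas_abs16 K hK).pow_const 2))
  have mW : Measurable
      (fun p : E × E => ENNReal.ofReal (|w p.1 - 1| ^ 3 * ‖K p.1 p.2‖ ^ 2)) :=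
    ENNReal.measurable_ofReal.comp
      ((((hw.comp measurable_fst).sub measurable_const).abs.pow_const 3).mul
        ((meas_abs16 K hK).pow_const 2))
  have key : ∫⁻ p : E × E, ENNReal.ofReal (|w p.1 - 1| ^ 3 * ‖K p.1 p.2‖ ^ 2)
      ∂(μ.prod μ) = kernelL μ K w := by
    have hcong : ∀ p : E × E, ENNReal.ofReal (|w p.1 - 1| ^ 3 * ‖K p.1 p.2‖ ^ 2)
        = ENNReal.ofReal (|w p.1 - 1| ^ 3) * ENNReal.ofReal (‖K p.1 p.2‖ ^ 2) :=
      fun p => ENNReal.ofReal_mul (by positivity)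
    rw [lintegral_congr hcong]
    exact (mid16 μ K hK hrepr (fun x => ENNReal.ofReal (|w x - 1| ^ 3))
      (ENNReal.measurable_ofReal.comp ((hw.sub measurable_const).abs.pow_const 3))).trans
      (lintegral_congr fun x => (ENNReal.ofReal_mul (by positivity)).symm)
  calc kernelV μ K u
      ≤ ∫⁻ p : E × E, (ENNReal.ofReal (1 - t)⁻¹
            * ENNReal.ofReal (|v p.1 - v p.2| ^ 2 * ‖K p.1 p.2‖ ^ 2)
          + ENNReal.ofReal (2 * t)
            * ENNReal.ofReal (|v' p.1 - v' p.2| ^ 2 * ‖K p.1 p.2‖ ^ 2)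
          + ENNReal.ofReal (2 * M ^ 2 / t ^ 2)
            * ENNReal.ofReal (|w p.1 - 1| ^ 3 * ‖K p.1 p.2‖ ^ 2)
          + ENNReal.ofReal (2 * M ^ 2 / t)
            * ENNReal.ofReal (|w p.1 - w p.2| ^ 2 * ‖K p.1 p.2‖ ^ 2)) ∂(μ.prod μ) := by
        apply lintegral_mono
        intro p
        have h1 : (1:ℝ) - t > 0 := by linarith
        apply ofReal_four_terms (by positivity) (by positivity) (by positivity) (by positivity)
          (by positivity) (by positivity) (by positivity) (by positivity) (by positivity)
        exact Vpt16 (abs_nonneg _) (abs_nonneg _) (abs_nonneg _) (abs_nonneg _)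
          (hb p.1 p.2) ht ht1 (hpt p.1 p.2)
    _ = ENNReal.ofReal (1 - t)⁻¹ * kernelV μ K v
        + ENNReal.ofReal (2 * t) * kernelV μ K v'
        + ENNReal.ofReal (2 * M ^ 2 / t ^ 2)
            * ∫⁻ p : E × E, ENNReal.ofReal (|w p.1 - 1| ^ 3 * ‖K p.1 p.2‖ ^ 2)
              ∂(μ.prod μ)
        + ENNReal.ofReal (2 * M ^ 2 / t) * kernelV μ K w := by
        rw [lintegral_add_left ((((mV v hv).const_mul _).fun_add ((mV v' hv').const_mul _)).fun_add
            (mW.const_mul _)),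
          lintegral_add_left (((mV v hv).const_mul _).fun_add ((mV v' hv').const_mul _)),
          lintegral_add_left ((mV v hv).const_mul _),
          lintegral_const_mul' _ _ ENNReal.ofReal_ne_top,
          lintegral_const_mul' _ _ ENNReal.ofReal_ne_top,
          lintegral_const_mul' _ _ ENNReal.ofReal_ne_top,
          lintegral_const_mul' _ _ ENNReal.ofReal_ne_top]
        rfl
    _ = _ := by rw [key]

end Kernel

-- coefficient lemmas
lemma coeffA {t : ℝ} (ht : 0 < t) (ht8 : t ≤ 1/8) : ((1-t)^2)⁻¹ ≤ 1 + 8*t := by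
  rw [inv_eq_one_div, div_le_iff₀ (by nlinarith)]
  nlinarith [mul_nonneg ht.le ht.le, mul_nonneg (mul_nonneg ht.le ht.le) ht.le]
lemma coeffB {t : ℝ} (ht : 0 < t) (ht8 : t ≤ 1/8) : (1-t)⁻¹ + 2*t ≤ 1 + 8*t := by
  have h : (1-t)⁻¹ ≤ 1 + 6*t := by
    rw [inv_eq_one_div, div_le_iff₀ (by nlinarith)]
    nlinarith
  linarith
lemma coeffC {t : ℝ} (ht : 0 < t) (ht8 : t ≤ 1/8) : (1-2*t)⁻¹ * (1-t)⁻¹ ≤ 1 + 8*t := by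
  rw [← mul_inv, inv_eq_one_div, div_le_iff₀ (by nlinarith)]
  nlinarith [mul_nonneg ht.le ht.le, mul_nonneg (mul_nonneg ht.le ht.le) ht.le]

/-- In the kernel setting, if `ε ≤ g, g_n ≤ M` (uniformly), `L(g) < ∞`,
`V(g) < ∞`, and `L(g_n/g) → 0`, `V(g_n/g) → 0`, then `L(g_n) → L(g)` and
`V(g_n) → V(g)`. -/
theorem stmt16 {E : Type*} [MeasurableSpace E] (μ : Measure E) [SigmaFinite μ]
    (K : E → E → ℂ) (hK : Measurable (Function.uncurry K))
    (hsymm : ∀ x y, K y x = (starRingEnd ℂ) (K x y))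
    (hrepr : ∀ᵐ x ∂μ, ENNReal.ofReal ((K x x).re) =
      ∫⁻ y, ENNReal.ofReal (‖K x y‖ ^ 2) ∂μ)
    (ε M : ℝ) (hε : 0 < ε) (hε1 : ε ≤ 1) (hM : 1 ≤ M)
    (g : E → ℝ) (hg : Measurable g) (hgb : ∀ x, ε ≤ g x ∧ g x ≤ M)
    (gn : ℕ → E → ℝ) (hgn : ∀ n, Measurable (gn n))
    (hgnb : ∀ n x, ε ≤ gn n x ∧ gn n x ≤ M)
    (hL : kernelL μ K g < ⊤) (hV : kernelV μ K g < ⊤)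
    (hLq : Tendsto (fun n => kernelL μ K (fun x => gn n x / g x)) atTop (nhds 0))
    (hVq : Tendsto (fun n => kernelV μ K (fun x => gn n x / g x)) atTop (nhds 0)) :
    Tendsto (fun n => kernelL μ K (gn n)) atTop (nhds (kernelL μ K g)) ∧
    Tendsto (fun n => kernelV μ K (gn n)) atTop (nhds (kernelV μ K g)) := by
  have hM0 : (0:ℝ) ≤ M := by linarith
  have hg0 : ∀ x, g x ≠ 0 := fun x => ne_of_gt (lt_of_lt_of_le hε (hgb x).1)
  have hqm : ∀ n, Measurable fun x => gn n x / g x := fun n => (hgn n).div hg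
  -- the combined error sequence
  have he : Tendsto (fun n => kernelL μ K (fun x => gn n x / g x)
      + kernelV μ K (fun x => gn n x / g x)) atTop (nhds 0) := by
    simpa using hLq.add hVq
  -- pointwise difference bound
  have hdiff : ∀ n x, |gn n x - g x| ≤ M * |gn n x / g x - 1| := by
    intro n x
    have hid : gn n x - g x = (gn n x / g x - 1) * g x := by
      rw [sub_mul, div_mul_cancel₀ _ (hg0 x), one_mul]
    rw [hid, abs_mul, abs_of_pos (lt_of_lt_of_le hε (hgb x).1), mul_comm]
    exact mul_le_mul_of_nonneg_right (hgb x).2 (abs_nonneg _)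
  have hptL1 : ∀ n x, |gn n x - 1| ≤ |g x - 1| + M * |gn n x / g x - 1| := by
    intro n x
    have h1 : gn n x - 1 = (g x - 1) + (gn n x - g x) := by ring
    rw [h1]
    exact (abs_add_le _ _).trans (by linarith [hdiff n x])
  have hptL2 : ∀ n x, |g x - 1| ≤ |gn n x - 1| + M * |gn n x / g x - 1| := by
    intro n x
    have h1 : g x - 1 = (gn n x - 1) + (g x - gn n x) := by ring
    rw [h1]
    have := hdiff n x
    rw [abs_sub_comm (gn n x) (g x)] at this
    exact (abs_add_le _ _).trans (by linarith)
  have hgM : ∀ x y, |g x - g y| ≤ M := by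
    intro x y
    have h1 := hgb x; have h2 := hgb y
    rw [abs_le]; constructor <;> nlinarith
  -- key identity for V
  have hidV : ∀ n x y, gn n x - gn n y - (g x - g y)
      = (g x - g y) * (gn n x / g x - 1) + g y * (gn n x / g x - gn n y / g y) := by
    intro n x y
    field_simp [hg0 x, hg0 y]
    ring
  have habsV : ∀ n x y, |gn n x - gn n y - (g x - g y)|
      ≤ |g x - g y| * |gn n x / g x - 1| + M * |gn n x / g x - gn n y / g y| := by
    intro n x y
    rw [hidV n x y]
    refine (abs_add_le _ _).trans ?_
    rw [abs_mul, abs_mul]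
    gcongr
    rw [abs_of_pos (lt_of_lt_of_le hε (hgb y).1)]; exact (hgb y).2
  have hptV1 : ∀ n x y, |gn n x - gn n y| ≤ |g x - g y|
      + (|g x - g y| * |gn n x / g x - 1| + M * |gn n x / g x - gn n y / g y|) := by
    intro n x y
    have h1 : gn n x - gn n y = (g x - g y) + (gn n x - gn n y - (g x - g y)) := by ring
    rw [h1]
    exact (abs_add_le _ _).trans (by linarith [habsV n x y])
  have hptV2 : ∀ n x y, |g x - g y| ≤ |gn n x - gn n y|
      + (|g x - g y| * |gn n x / g x - 1| + M * |gn n x / g x - gn n y / g y|) := by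
    intro n x y
    have key : g x - g y = (gn n x - gn n y) - (gn n x - gn n y - (g x - g y)) := by ring
    calc |g x - g y| = |(gn n x - gn n y) - (gn n x - gn n y - (g x - g y))| :=
          congrArg abs key
      _ ≤ |gn n x - gn n y| + |gn n x - gn n y - (g x - g y)| := abs_sub _ _
      _ ≤ _ := by linarith [habsV n x y]
  constructor
  · -- the L statement
    apply squeeze16 hL.ne he
    intro η hη0 hη1
    set t : ℝ := η / 8 with htdef
    have ht : 0 < t := by positivity
    have ht8 : t ≤ 1/8 := by rw [htdef]; linarith
    have ht1 : t < 1 := by linarith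
    refine ⟨ENNReal.ofReal ((t ^ 2)⁻¹ * M ^ 3), ENNReal.ofReal_ne_top, fun n => ⟨?_, ?_⟩⟩
    · calc kernelL μ K (gn n)
          ≤ ENNReal.ofReal ((1 - t) ^ 2)⁻¹ * kernelL μ K g
            + ENNReal.ofReal ((t ^ 2)⁻¹ * M ^ 3) * kernelL μ K (fun x => gn n x / g x) :=
            L_est16 μ K hK hM0 ht ht1 (gn n) g (fun x => gn n x / g x) hg (hqm n) (hptL1 n)
        _ ≤ ENNReal.ofReal (1 + η) * kernelL μ K g
            + ENNReal.ofReal ((t ^ 2)⁻¹ * M ^ 3) * (kernelL μ K (fun x => gn n x / g x)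
              + kernelV μ K (fun x => gn n x / g x)) := by
            have hη8 : η = 8*t := by rw [htdef]; ring
            have h1 : ENNReal.ofReal ((1 - t) ^ 2)⁻¹ ≤ ENNReal.ofReal (1 + η) :=
              ENNReal.ofReal_le_ofReal (by rw [hη8]; exact coeffA ht ht8)
            exact add_le_add (mul_le_mul_left h1 _) (mul_le_mul_right le_self_add _)
    · calc kernelL μ K g
          ≤ ENNReal.ofReal ((1 - t) ^ 2)⁻¹ * kernelL μ K (gn n)
            + ENNReal.ofReal ((t ^ 2)⁻¹ * M ^ 3) * kernelL μ K (fun x => gn n x / g x) :=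
            L_est16 μ K hK hM0 ht ht1 g (gn n) (fun x => gn n x / g x) (hgn n) (hqm n) (hptL2 n)
        _ ≤ ENNReal.ofReal (1 + η) * kernelL μ K (gn n)
            + ENNReal.ofReal ((t ^ 2)⁻¹ * M ^ 3) * (kernelL μ K (fun x => gn n x / g x)
              + kernelV μ K (fun x => gn n x / g x)) := by
            have hη8 : η = 8*t := by rw [htdef]; ring
            have h1 : ENNReal.ofReal ((1 - t) ^ 2)⁻¹ ≤ ENNReal.ofReal (1 + η) :=
              ENNReal.ofReal_le_ofReal (by rw [hη8]; exact coeffA ht ht8)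
            exact add_le_add (mul_le_mul_left h1 _) (mul_le_mul_right le_self_add _)
  · -- the V statement
    apply squeeze16 hV.ne he
    intro η hη0 hη1
    set t : ℝ := η / 8 with htdef
    have ht : 0 < t := by positivity
    have ht8 : t ≤ 1/8 := by rw [htdef]; linarith
    have ht1 : t < 1 := by linarith
    set c3 : ℝ≥0∞ := ENNReal.ofReal (2 * M ^ 2 / t ^ 2) with hc3def
    set c4 : ℝ≥0∞ := ENNReal.ofReal (2 * M ^ 2 / t) with hc4def
    set c0 : ℝ≥0∞ := ENNReal.ofReal (1 - 2*t)⁻¹ * (c3 + c4) with hc0def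
    set C : ℝ≥0∞ := c0 + c3 + c4 with hCdef
    have hc3C : c3 ≤ C := le_add_self.trans le_self_add
    have hc4C : c4 ≤ C := le_add_self
    have hc0C : c0 ≤ C := le_self_add.trans le_self_add
    have hCt : C ≠ ⊤ := by
      rw [hCdef, hc0def, hc3def, hc4def]
      exact ENNReal.add_ne_top.mpr ⟨ENNReal.add_ne_top.mpr ⟨ENNReal.mul_ne_top
        ENNReal.ofReal_ne_top (ENNReal.add_ne_top.mpr ⟨ENNReal.ofReal_ne_top,
        ENNReal.ofReal_ne_top⟩), ENNReal.ofReal_ne_top⟩, ENNReal.ofReal_ne_top⟩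
    refine ⟨C, hCt, fun n => ⟨?_, ?_⟩⟩
    · calc kernelV μ K (gn n)
          ≤ ENNReal.ofReal (1 - t)⁻¹ * kernelV μ K g
            + ENNReal.ofReal (2 * t) * kernelV μ K g
            + c3 * kernelL μ K (fun x => gn n x / g x)
            + c4 * kernelV μ K (fun x => gn n x / g x) :=
            V_est16 μ K hK hrepr hM0 ht ht1 (gn n) g g (fun x => gn n x / g x)
              hg hg (hqm n) hgM (hptV1 n)
        _ = ENNReal.ofReal ((1 - t)⁻¹ + 2 * t) * kernelV μ K g
            + (c3 * kernelL μ K (fun x => gn n x / g x)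
            + c4 * kernelV μ K (fun x => gn n x / g x)) := by
            rw [ENNReal.ofReal_add (inv_nonneg.mpr (by linarith)) (by positivity), add_mul]
            ring
        _ ≤ ENNReal.ofReal (1 + η) * kernelV μ K g
            + C * (kernelL μ K (fun x => gn n x / g x)
              + kernelV μ K (fun x => gn n x / g x)) := by
            have hη8 : η = 8*t := by rw [htdef]; ring
            have h1 : ENNReal.ofReal ((1 - t)⁻¹ + 2 * t) ≤ ENNReal.ofReal (1 + η) :=
              ENNReal.ofReal_le_ofReal (by rw [hη8]; exact coeffB ht ht8)
            refine add_le_add (mul_le_mul_left h1 _) ?_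
            rw [mul_add]
            exact add_le_add (mul_le_mul_left hc3C _) (mul_le_mul_left hc4C _)
    · have hstep : kernelV μ K g
          ≤ ENNReal.ofReal (1 - t)⁻¹ * kernelV μ K (gn n)
            + ENNReal.ofReal (2 * t) * kernelV μ K g
            + c3 * kernelL μ K (fun x => gn n x / g x)
            + c4 * kernelV μ K (fun x => gn n x / g x) :=
        V_est16 μ K hK hrepr hM0 ht ht1 g (gn n) g (fun x => gn n x / g x)
          (hgn n) hg (hqm n) hgM (hptV2 n)
      have hstep2 : kernelV μ K g
          ≤ (ENNReal.ofReal (1 - t)⁻¹ * kernelV μ K (gn n)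
            + c3 * kernelL μ K (fun x => gn n x / g x)
            + c4 * kernelV μ K (fun x => gn n x / g x))
            + ENNReal.ofReal (2 * t) * kernelV μ K g := by
        refine hstep.trans (le_of_eq ?_)
        ring
      have hre := rearrange16 hV.ne (by positivity : (0:ℝ) ≤ 2 * t)
        (by linarith : 2 * t < 1) hstep2
      calc kernelV μ K g
          ≤ ENNReal.ofReal (1 - 2*t)⁻¹ * (ENNReal.ofReal (1 - t)⁻¹ * kernelV μ K (gn n)
            + c3 * kernelL μ K (fun x => gn n x / g x)
            + c4 * kernelV μ K (fun x => gn n x / g x)) := hre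
        _ = ENNReal.ofReal (1 - 2*t)⁻¹ * ENNReal.ofReal (1 - t)⁻¹ * kernelV μ K (gn n)
            + ((ENNReal.ofReal (1 - 2*t)⁻¹ * c3) * kernelL μ K (fun x => gn n x / g x)
              + (ENNReal.ofReal (1 - 2*t)⁻¹ * c4) * kernelV μ K (fun x => gn n x / g x)) := by
            ring
        _ ≤ ENNReal.ofReal (1 + η) * kernelV μ K (gn n)
            + C * (kernelL μ K (fun x => gn n x / g x)
              + kernelV μ K (fun x => gn n x / g x)) := by
            have hco : ENNReal.ofReal (1 - 2*t)⁻¹ * ENNReal.ofReal (1 - t)⁻¹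
                ≤ ENNReal.ofReal (1 + η) := by
              rw [← ENNReal.ofReal_mul (inv_nonneg.mpr (by linarith))]
              exact ENNReal.ofReal_le_ofReal
                (by have hη8 : η = 8*t := by rw [htdef]; ring
                    rw [hη8]; exact coeffC ht ht8)
            have h3 : ENNReal.ofReal (1 - 2*t)⁻¹ * c3 ≤ C :=
              le_trans (mul_le_mul_right le_self_add _) hc0C
            have h4 : ENNReal.ofReal (1 - 2*t)⁻¹ * c4 ≤ C :=
              le_trans (mul_le_mul_right le_add_self _) hc0C
            rw [mul_add]
            exact add_le_add (mul_le_mul_left hco _)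
              (add_le_add (mul_le_mul_left h3 _) (mul_le_mul_left h4 _))
end

section
/- Let ψ: ℂ → ℝ be continuous and let q₁,…,q_ℓ be distinct points of ℂ. Then there exist ε > 0 and C > 0 such that for every entire function f with ∫_ℂ |f(z)|² e^{−2ψ(z)} dλ(z) ≤ 1 and f(q₁) = ⋯ = f(q_ℓ) = 0, for every k ∈ {1,…,ℓ} and every z with |z − q_k| ≤ ε, one has |f(z)|² ≤ C |z − q_k|². -/
open MeasureTheory

open Metric Set intervalIntegral
open scoped Real

-- circle mean value for entire functions
lemma circle_mean (g : ℂ → ℂ) (hg : Differentiable ℂ g) (w : ℂ) {r : ℝ} (hr : 0 < r) :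
    (∫ θ in (0:ℝ)..(2*Real.pi), g (circleMap w r θ)) = (2 * Real.pi) * g w := by
  have h1 : (∮ z in C(w, r), (z - w)⁻¹ • g z) = (2 * ↑Real.pi * Complex.I) • g w :=
    (hg.differentiableOn).circleIntegral_sub_inv_smul (mem_ball_self hr)
  rw [circleIntegral] at h1
  simp only [deriv_circleMap, circleMap_sub_center, smul_eq_mul] at h1
  have h2 : ∀ θ : ℝ, circleMap 0 r θ * Complex.I * ((circleMap 0 r θ)⁻¹ * g (circleMap w r θ))
      = Complex.I * g (circleMap w r θ) := by
    intro θ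
    have hne : circleMap 0 r θ ≠ 0 := circleMap_ne_center hr.ne'
    field_simp
  simp_rw [h2, intervalIntegral.integral_const_mul] at h1
  have h3 : Complex.I * (∫ θ in (0:ℝ)..(2*Real.pi), g (circleMap w r θ))
      = Complex.I * ((2 * ↑Real.pi) * g w) := by rw [h1]; ring
  exact mul_left_cancel₀ Complex.I_ne_zero h3


lemma circle_bound (g : ℂ → ℂ) (hg : Differentiable ℂ g) (w : ℂ) {r : ℝ} (hr : 0 < r) :
    2 * Real.pi * ‖g w‖ ≤ ∫ θ in (0:ℝ)..(2*Real.pi), ‖g (circleMap w r θ)‖ := by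
  have h := circle_mean g hg w hr
  have h2 : ‖(2 * ↑Real.pi : ℂ) * g w‖ = 2 * Real.pi * ‖g w‖ := by
    rw [norm_mul]
    norm_num [Real.pi_nonneg]
  calc 2 * Real.pi * ‖g w‖ = ‖∫ θ in (0:ℝ)..(2*Real.pi), g (circleMap w r θ)‖ := by
        rw [h]; exact h2.symm
    _ ≤ ∫ θ in (0:ℝ)..(2*Real.pi), ‖g (circleMap w r θ)‖ :=
        intervalIntegral.norm_integral_le_integral_norm (by positivity)

lemma polar_symm_eq (r θ : ℝ) : Complex.polarCoord.symm (r, θ) = circleMap 0 r θ := by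
  simp [circleMap, Complex.exp_mul_I, Complex.polarCoord_symm_apply,
    Complex.ofReal_cos, Complex.ofReal_sin]


lemma submean (g : ℂ → ℂ) (hg : Differentiable ℂ g) (w : ℂ) :
    Real.pi * ‖g w‖ ≤ ∫ z in closedBall w 1, ‖g z‖ := by
  have hgc : Continuous g := hg.continuous
  set s : Set (ℝ × ℝ) := Ioc (0:ℝ) 1 ×ˢ Ioo (-Real.pi) Real.pi with hs
  set F : ℝ × ℝ → ℝ := fun p => p.1 * ‖g (w + circleMap 0 p.1 p.2)‖ with hF
  have hFc : Continuous F := by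
    apply continuous_fst.mul
    apply (hgc.comp ?_).norm
    unfold circleMap
    fun_prop
  -- integrability of F on s
  have hFint : IntegrableOn F s := by
    apply (hFc.continuousOn.integrableOn_compact
      (isCompact_Icc.prod isCompact_Icc : IsCompact (Icc (0:ℝ) 1 ×ˢ Icc (-Real.pi) Real.pi))).mono_set
    exact Set.prod_mono Ioc_subset_Icc_self Ioo_subset_Icc_self
  -- Step 1: polar coordinates
  have hind : ∀ z : ℂ, (Set.indicator (closedBall (0:ℂ) 1) (fun z => ‖g (w + z)‖)) z
      = (Set.indicator (closedBall w 1) (fun z => ‖g z‖)) (w + z) := by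
    intro z
    by_cases hz : z ∈ closedBall (0:ℂ) 1
    · rw [Set.indicator_of_mem hz, Set.indicator_of_mem]
      simpa [dist_eq_norm] using hz
    · rw [Set.indicator_of_notMem hz, Set.indicator_of_notMem]
      simpa [dist_eq_norm] using hz
  have hpolar := Complex.integral_comp_polarCoord_symm
      (Set.indicator (closedBall (0:ℂ) 1) (fun z => ‖g (w + z)‖))
  have hRHS : (∫ z : ℂ, (Set.indicator (closedBall (0:ℂ) 1) (fun z => ‖g (w + z)‖)) z)
      = ∫ z in closedBall w 1, ‖g z‖ := by
    rw [← MeasureTheory.integral_indicator measurableSet_closedBall]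
    simp_rw [hind]
    exact MeasureTheory.integral_add_left_eq_self (μ := volume)
      (Set.indicator (closedBall w 1) (fun z => ‖g z‖)) w
  -- Step 2: restrict the polar integral to s
  have htarget : polarCoord.target = Ioi (0:ℝ) ×ˢ Ioo (-Real.pi) Real.pi := rfl
  have htarget : polarCoord.target = Ioi (0:ℝ) ×ˢ Ioo (-Real.pi) Real.pi := rfl
  have hLHS : (∫ p in polarCoord.target,
        p.1 • (Set.indicator (closedBall (0:ℂ) 1) (fun z => ‖g (w + z)‖)) (Complex.polarCoord.symm p))
      = ∫ p in s, F p := by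
    have ht : MeasurableSet polarCoord.target := by
      rw [htarget]; exact measurableSet_Ioi.prod measurableSet_Ioo
    have hts : s ⊆ polarCoord.target := by
      rw [htarget, hs]; exact Set.prod_mono Ioc_subset_Ioi_self subset_rfl
    have hzero : ∀ p ∈ polarCoord.target \ s,
        p.1 • (Set.indicator (closedBall (0:ℂ) 1) (fun z => ‖g (w + z)‖))
          (Complex.polarCoord.symm p) = 0 := by
      rintro ⟨r, θ⟩ ⟨hp1, hp2⟩
      rw [htarget] at hp1
      simp only [Set.mem_prod, mem_Ioi, mem_Ioo] at hp1
      rw [hs] at hp2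
      have hr1 : 1 < r := by
        by_contra h'
        push_neg at h'
        exact hp2 (by simp only [Set.mem_prod, mem_Ioc, mem_Ioo]
                      exact ⟨⟨hp1.1, h'⟩, hp1.2⟩)
      have hnm : Complex.polarCoord.symm (r, θ) ∉ closedBall (0:ℂ) 1 := by
        simp only [mem_closedBall, Complex.dist_eq, sub_zero, not_le]
        calc (1:ℝ) < r := hr1
          _ = |r| := (abs_of_pos (lt_trans one_pos hr1)).symm
          _ = ‖Complex.polarCoord.symm (r, θ)‖ :=
              (Complex.norm_polarCoord_symm (r, θ)).symm
      rw [Set.indicator_of_notMem hnm, smul_zero]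
    rw [setIntegral_eq_of_subset_of_forall_diff_eq_zero ht hts hzero]
    apply setIntegral_congr_fun (measurableSet_Ioc.prod measurableSet_Ioo)
    rintro ⟨r, θ⟩ hrθ
    simp only [Set.mem_prod, mem_Ioc, mem_Ioo] at hrθ
    obtain ⟨hr, hθ⟩ := hrθ
    have hmem : Complex.polarCoord.symm (r, θ) ∈ closedBall (0:ℂ) 1 := by
      simp only [mem_closedBall, Complex.dist_eq, sub_zero]
      rw [Complex.norm_polarCoord_symm, abs_of_pos hr.1]
      exact hr.2
    dsimp only
    rw [Set.indicator_of_mem hmem, polar_symm_eq]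
    simp [hF, smul_eq_mul]
  have hkey : (∫ p in s, F p) = ∫ z in closedBall w 1, ‖g z‖ :=
    (hLHS.symm.trans hpolar).trans hRHS
  -- Fubini
  have hFint' : IntegrableOn F (Ioc (0:ℝ) 1 ×ˢ Ioo (-Real.pi) Real.pi)
      ((volume : Measure ℝ).prod (volume : Measure ℝ)) := by
    rw [← Measure.volume_eq_prod]
    rw [hs] at hFint
    exact hFint
  have hfub : (∫ p in s, F p)
      = ∫ r in Ioc (0:ℝ) 1, ∫ θ in Ioo (-Real.pi) Real.pi, F (r, θ) := by
    rw [hs, Measure.volume_eq_prod, setIntegral_prod _ hFint']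
  have houter_int : IntegrableOn
      (fun r => ∫ θ in Ioo (-Real.pi) Real.pi, F (r, θ)) (Ioc (0:ℝ) 1) := by
    have h := (Measure.prod_restrict (Ioc (0:ℝ) 1) (Ioo (-Real.pi) Real.pi)
        (μ := (volume : Measure ℝ)) (ν := (volume : Measure ℝ)))
    rw [IntegrableOn, ← h] at hFint'
    exact hFint'.integral_prod_left
  -- inner bound
  have hinner : ∀ r ∈ Ioc (0:ℝ) 1,
      2 * Real.pi * ‖g w‖ * r ≤ ∫ θ in Ioo (-Real.pi) Real.pi, F (r, θ) := by
    intro r hr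
    have hcm : ∀ θ : ℝ, w + circleMap 0 r θ = circleMap w r θ := fun θ => by
      simp [circleMap]
    have hper : Function.Periodic (fun θ => F (r, θ)) (2*Real.pi) := by
      intro θ
      simp only [hF]
      rw [periodic_circleMap 0 r θ]
    have h1 : (∫ θ in Ioo (-Real.pi) Real.pi, F (r, θ))
        = ∫ θ in (0:ℝ)..(2*Real.pi), F (r, θ) := by
      rw [← integral_Ioc_eq_integral_Ioo,
        ← intervalIntegral.integral_of_le (by linarith [Real.pi_pos] : -Real.pi ≤ Real.pi)]
      have := hper.intervalIntegral_add_eq (-Real.pi) 0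
      rw [(by ring : -Real.pi + 2*Real.pi = Real.pi), zero_add] at this
      exact this
    have h2 : (∫ θ in (0:ℝ)..(2*Real.pi), F (r, θ))
        = r * ∫ θ in (0:ℝ)..(2*Real.pi), ‖g (circleMap w r θ)‖ := by
      simp only [hF, hcm]
      rw [intervalIntegral.integral_const_mul]
    rw [h1, h2]
    rw [mul_comm (2 * Real.pi * ‖g w‖) r]
    exact mul_le_mul_of_nonneg_left (circle_bound g hg w hr.1) hr.1.le
  -- outer estimate
  have hlin_int : IntegrableOn (fun r : ℝ => 2 * Real.pi * ‖g w‖ * r) (Ioc (0:ℝ) 1) := by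
    apply ((continuous_const.mul continuous_id).continuousOn.integrableOn_compact
      (isCompact_Icc : IsCompact (Icc (0:ℝ) 1))).mono_set Ioc_subset_Icc_self
  have hmono : (∫ r in Ioc (0:ℝ) 1, 2 * Real.pi * ‖g w‖ * r)
      ≤ ∫ r in Ioc (0:ℝ) 1, ∫ θ in Ioo (-Real.pi) Real.pi, F (r, θ) :=
    setIntegral_mono_on hlin_int houter_int measurableSet_Ioc hinner
  have hval : (∫ r in Ioc (0:ℝ) 1, 2 * Real.pi * ‖g w‖ * r) = Real.pi * ‖g w‖ := by
    rw [MeasureTheory.integral_const_mul]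
    rw [← intervalIntegral.integral_of_le zero_le_one, integral_id]
    ring
  calc Real.pi * ‖g w‖ = ∫ r in Ioc (0:ℝ) 1, 2 * Real.pi * ‖g w‖ * r := hval.symm
    _ ≤ ∫ r in Ioc (0:ℝ) 1, ∫ θ in Ioo (-Real.pi) Real.pi, F (r, θ) := hmono
    _ = ∫ p in s, F p := hfub.symm
    _ = ∫ z in closedBall w 1, ‖g z‖ := hkey

/-- For continuous `ψ : ℂ → ℝ` and distinct points `q₁,…,q_ℓ`, there are
`ε > 0` and `C > 0` such that every entire `f` with `∫_ℂ |f|² e^(−2ψ) dλ ≤ 1` and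
`f(qᵢ) = 0` for all `i` satisfies `|f(z)|² ≤ C |z − q_k|²` whenever `|z − q_k| ≤ ε`. -/
theorem stmt17 (ψ : ℂ → ℝ) (hψ : Continuous ψ) (ℓ : ℕ) (q : Fin ℓ → ℂ)
    (hq : Function.Injective q) :
    ∃ ε > (0 : ℝ), ∃ C > (0 : ℝ), ∀ f : ℂ → ℂ, Differentiable ℂ f →
      (∫⁻ z : ℂ, ENNReal.ofReal (‖f z‖ ^ 2 * Real.exp (-2 * ψ z))) ≤ 1 →
      (∀ i, f (q i) = 0) →
      ∀ k : Fin ℓ, ∀ z : ℂ, ‖z - q k‖ ≤ ε →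
        ‖f z‖ ^ 2 ≤ C * ‖z - q k‖ ^ 2 := by
  rcases isEmpty_or_nonempty (Fin ℓ) with hI | hI
  · exact ⟨1, one_pos, 1, one_pos, fun f _ _ _ k => isEmptyElim k⟩
  set K : Set ℂ := ⋃ k, closedBall (q k) 2 with hKdef
  have hK : IsCompact K := isCompact_iUnion fun k => isCompact_closedBall _ _
  have hKne : K.Nonempty :=
    ⟨q (Classical.arbitrary _), mem_iUnion.mpr ⟨_, mem_closedBall_self (by norm_num)⟩⟩
  obtain ⟨x₀, hx₀K, hM'⟩ := hK.exists_isMaxOn hKne hψ.continuousOn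
  have hM : ∀ y ∈ K, ψ y ≤ ψ x₀ := fun y hy => hM' hy
  set M := ψ x₀ with hMdef
  set A := Real.sqrt (Real.exp (2*M) / Real.pi) with hAdef
  have hA0 : 0 ≤ A := Real.sqrt_nonneg _
  refine ⟨1/2, by norm_num, (A+1)^2, by positivity, ?_⟩
  intro f hf hint hvan k z hz
  -- uniform bound on ball (q k) 1
  have hbound : ∀ w ∈ ball (q k) 1, ‖f w‖ ≤ A := by
    intro w hw
    have hsub : closedBall w 1 ⊆ K := by
      intro y hy
      refine mem_iUnion.mpr ⟨k, ?_⟩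
      have : dist y (q k) ≤ dist y w + dist w (q k) := dist_triangle _ _ _
      simp only [mem_closedBall] at hy ⊢
      have hw' : dist w (q k) ≤ 1 := (mem_ball.mp hw).le
      linarith
    have hψM : ∀ y ∈ closedBall w 1, ψ y ≤ M := fun y hy => hM y (hsub hy)
    -- sub mean value property applied to f * f
    have hsm := submean (fun z => f z * f z) (hf.mul hf) w
    have habs : ∀ u : ℂ, ‖f u * f u‖ = ‖f u‖^2 := fun u => by
      rw [norm_mul]; ring
    simp only [habs] at hsm
    -- compare with the weighted integral
    have hcont2 : Continuous fun u => ‖f u‖^2 :=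
      (continuous_norm.comp hf.continuous).pow 2
    have h2 : (∫ u in closedBall w 1, ‖f u‖^2) ≤ Real.exp (2*M) := by
      rw [integral_eq_lintegral_of_nonneg_ae (ae_of_all _ fun u => by positivity)
        hcont2.aestronglyMeasurable]
      apply ENNReal.toReal_le_of_le_ofReal (Real.exp_nonneg _)
      have hcontw : Continuous fun u => ‖f u‖^2 * Real.exp (-2 * ψ u) :=
        hcont2.mul ((Real.continuous_exp.comp ((continuous_const.mul hψ))))
      calc (∫⁻ u in closedBall w 1, ENNReal.ofReal (‖f u‖^2))
          ≤ ∫⁻ u in closedBall w 1, ENNReal.ofReal (Real.exp (2*M)) *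
              ENNReal.ofReal (‖f u‖^2 * Real.exp (-2 * ψ u)) := by
            apply setLIntegral_mono (measurable_const.mul hcontw.measurable.ennreal_ofReal)
            intro u hu
            simp only [Pi.mul_apply]
            rw [← ENNReal.ofReal_mul (Real.exp_nonneg _)]
            apply ENNReal.ofReal_le_ofReal
            have h3 : (1:ℝ) ≤ Real.exp (2*M) * Real.exp (-2*ψ u) := by
              rw [← Real.exp_add]
              apply Real.one_le_exp
              have := hψM u hu
              linarith
            have ha : (0:ℝ) ≤ ‖f u‖^2 := by positivity
            calc ‖f u‖^2 = ‖f u‖^2 * 1 := (mul_one _).symm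
              _ ≤ ‖f u‖^2 * (Real.exp (2*M) * Real.exp (-2*ψ u)) :=
                  mul_le_mul_of_nonneg_left h3 ha
              _ = Real.exp (2*M) * (‖f u‖^2 * Real.exp (-2 * ψ u)) := by ring
        _ = ENNReal.ofReal (Real.exp (2*M)) *
              ∫⁻ u in closedBall w 1, ENNReal.ofReal (‖f u‖^2 * Real.exp (-2 * ψ u)) :=
            lintegral_const_mul' _ _ ENNReal.ofReal_ne_top
        _ ≤ ENNReal.ofReal (Real.exp (2*M)) *
              ∫⁻ u, ENNReal.ofReal (‖f u‖^2 * Real.exp (-2 * ψ u)) :=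
            mul_le_mul_right (setLIntegral_le_lintegral _ _) _
        _ ≤ ENNReal.ofReal (Real.exp (2*M)) * 1 := mul_le_mul_right hint _
        _ = ENNReal.ofReal (Real.exp (2*M)) := mul_one _
    have h4 : ‖f w‖^2 ≤ Real.exp (2*M) / Real.pi := by
      rw [le_div_iff₀ Real.pi_pos]
      calc ‖f w‖^2 * Real.pi = Real.pi * ‖f w‖^2 := by ring
        _ ≤ ∫ u in closedBall w 1, ‖f u‖^2 := hsm
        _ ≤ Real.exp (2*M) := h2
    calc ‖f w‖ = Real.sqrt (‖f w‖^2) :=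
          (Real.sqrt_sq (norm_nonneg _)).symm
      _ ≤ A := Real.sqrt_le_sqrt h4
  -- Schwarz lemma step
  have hmaps : MapsTo f (ball (q k) 1) (ball (f (q k)) (A+1)) := by
    intro x hx
    rw [hvan k, mem_ball, dist_zero_right]
    exact lt_of_le_of_lt (hbound x hx) (lt_add_one A)
  have hz1 : z ∈ ball (q k) 1 := by
    rw [mem_ball, Complex.dist_eq]
    linarith
  have hS := Complex.dist_le_div_mul_dist_of_mapsTo_ball hf.differentiableOn (hmaps.mono_right ball_subset_closedBall) hz1
  rw [hvan k, div_one, Complex.dist_eq, Complex.dist_eq, sub_zero] at hS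
  have := pow_le_pow_left₀ (norm_nonneg _) hS 2
  rw [mul_pow] at this
  exact this
end
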